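/- arXiv:2306.09058 — 5 statements merged into one kernel-verified Lean document; each statement's English description precedes it below -/
import Mathlib

section
/- In every graph G, for vertex sets A and B, either there are k pairwise vertex-disjoint A–B paths, or there exists a set X of at most k−1 vertices such that G − X contains no A–B path. -/
set_option linter.unusedSectionVars false

structure ABPath {V : Type} (G : SimpleGraph V) (A B : Set V) where
  a : V
  b : V
  walk : G.Walk a b
  isPath : walk.IsPath
  ha : a ∈ A
  hb : b ∈ B
  internal : ∀ v ∈ walk.support, v ≠ a → v ≠ b → v ∉ A ∧ v ∉ B

open SimpleGraph

variable {V : Type} [Fintype V] [DecidableEq V]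

/-- `X` meets every walk from `A` to `B`. -/
def ABSep (G : SimpleGraph V) (A B : Set V) (X : Finset V) : Prop :=
  ∀ ⦃a b : V⦄ (w : G.Walk a b), a ∈ A → b ∈ B → ∃ v ∈ w.support, v ∈ X

lemma endpoint_takeUntil {G : SimpleGraph V} {a b v : V} (w : G.Walk a b) (hw : w.IsPath)
    (hv : v ∈ w.support) (hb : b ∈ (w.takeUntil v hv).support) : v = b := by
  have hspec := w.take_spec hv
  have hnd : w.support.Nodup := hw.support_nodup
  rw [← hspec, Walk.support_append, List.nodup_append] at hnd
  have hb2 : b ∈ (w.dropUntil v hv).support := Walk.end_mem_support _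
  rw [Walk.support_eq_cons] at hb2
  rcases List.mem_cons.1 hb2 with h | h
  · exact h.symm
  · exact (hnd.2.2 _ hb _ h rfl).elim

lemma start_dropUntil {G : SimpleGraph V} {a b v : V} (w : G.Walk a b) (hw : w.IsPath)
    (hv : v ∈ w.support) (ha : a ∈ (w.dropUntil v hv).support) : v = a := by
  have hspec := w.take_spec hv
  have hnd : w.support.Nodup := hw.support_nodup
  rw [← hspec, Walk.support_append, List.nodup_append] at hnd
  have ha2 : a ∈ (w.takeUntil v hv).support := Walk.start_mem_support _
  rw [Walk.support_eq_cons] at ha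
  rcases List.mem_cons.1 ha with h | h
  · exact h.symm
  · exact (hnd.2.2 _ ha2 _ h rfl).elim

lemma length_takeUntil_lt {G : SimpleGraph V} {a b v : V} (w : G.Walk a b)
    (hv : v ∈ w.support) (hne : v ≠ b) : (w.takeUntil v hv).length < w.length := by
  have hspec := w.take_spec hv
  have : (w.takeUntil v hv).length + (w.dropUntil v hv).length = w.length := by
    rw [← Walk.length_append, hspec]
  have hd : (w.dropUntil v hv).length ≠ 0 := by
    intro h0
    exact hne (Walk.eq_of_length_eq_zero h0)
  omega

lemma length_dropUntil_lt {G : SimpleGraph V} {a b v : V} (w : G.Walk a b)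
    (hv : v ∈ w.support) (hne : v ≠ a) : (w.dropUntil v hv).length < w.length := by
  have hspec := w.take_spec hv
  have : (w.takeUntil v hv).length + (w.dropUntil v hv).length = w.length := by
    rw [← Walk.length_append, hspec]
  have hd : (w.takeUntil v hv).length ≠ 0 := by
    intro h0
    exact hne (Walk.eq_of_length_eq_zero h0).symm
  omega

lemma exists_abpath_aux (G : SimpleGraph V) (A B : Set V) :
    ∀ n {a b : V} (w : G.Walk a b), w.length ≤ n → a ∈ A → b ∈ B →
    ∃ p : ABPath G A B, ∀ v ∈ p.walk.support, v ∈ w.support := by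
  intro n
  induction n using Nat.strong_induction_on with
  | _ n ih =>
    intro a b w hlen ha hb
    by_cases hint : ∃ v ∈ w.bypass.support, v ≠ a ∧ v ≠ b ∧ (v ∈ A ∨ v ∈ B)
    · obtain ⟨v, hv, hva, hvb, hAB⟩ := hint
      by_cases hvB : v ∈ B
      · have hlt : (w.bypass.takeUntil v hv).length < n :=
          lt_of_lt_of_le (lt_of_lt_of_le (length_takeUntil_lt _ hv hvb) w.length_bypass_le) hlen
        obtain ⟨p, hp⟩ := ih _ hlt (w.bypass.takeUntil v hv) le_rfl ha hvB
        exact ⟨p, fun u hu => w.support_bypass_subset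
          (Walk.support_takeUntil_subset _ hv (hp u hu))⟩
      · have hvA : v ∈ A := hAB.resolve_right hvB
        have hlt : (w.bypass.dropUntil v hv).length < n :=
          lt_of_lt_of_le (lt_of_lt_of_le (length_dropUntil_lt _ hv hva) w.length_bypass_le) hlen
        obtain ⟨p, hp⟩ := ih _ hlt (w.bypass.dropUntil v hv) le_rfl hvA hb
        exact ⟨p, fun u hu => w.support_bypass_subset
          (Walk.support_dropUntil_subset _ hv (hp u hu))⟩
    · push_neg at hint
      refine ⟨⟨a, b, w.bypass, w.bypass_isPath, ha, hb, ?_⟩,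
        fun u hu => w.support_bypass_subset hu⟩
      intro v hv hva hvb
      exact hint v hv hva hvb

lemma exists_abpath {G : SimpleGraph V} {A B : Set V} {a b : V} (w : G.Walk a b)
    (ha : a ∈ A) (hb : b ∈ B) :
    ∃ p : ABPath G A B, ∀ v ∈ p.walk.support, v ∈ w.support :=
  exists_abpath_aux G A B w.length w le_rfl ha hb

section Merge

variable {G : SimpleGraph V} {x y : V}

/-- The graph obtained by merging `y` into `x`: `y` becomes isolated, `x` inherits
the neighbours of `y`. -/
def mergeG (G : SimpleGraph V) (x y : V) : SimpleGraph V where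
  Adj u v := u ≠ v ∧ u ≠ y ∧ v ≠ y ∧
    (G.Adj u v ∨ (u = x ∧ G.Adj y v) ∨ (v = x ∧ G.Adj u y))
  symm := by
    constructor; rintro u v ⟨h1, h2, h3, h4⟩
    refine ⟨h1.symm, h3, h2, ?_⟩
    rcases h4 with h | ⟨rfl, h⟩ | ⟨rfl, h⟩
    · exact Or.inl h.symm
    · exact Or.inr (Or.inr ⟨rfl, h.symm⟩)
    · exact Or.inr (Or.inl ⟨rfl, h.symm⟩)
  loopless := ⟨fun u h => h.1 rfl⟩

lemma mergeG_not_y_left {u v : V} (h : (mergeG G x y).Adj u v) : u ≠ y := h.2.1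
lemma mergeG_not_y_right {u v : V} (h : (mergeG G x y).Adj u v) : v ≠ y := h.2.2.1

/-- A nontrivial walk in the merged graph never visits `y`. -/
lemma mergeG_y_not_mem_support : ∀ {a b : V} (w : (mergeG G x y).Walk a b),
    a ≠ y → y ∉ w.support := by
  intro a b w
  induction w with
  | nil => intro ha h; simp at h; exact ha h.symm
  | cons h p ih =>
    intro ha hy
    rw [Walk.support_cons] at hy
    rcases List.mem_cons.1 hy with h' | h'
    · exact ha h'.symm
    · exact ih h.2.2.1 h'

/-- A walk in the merged graph avoiding `x` (and starting away from `y`) has all its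
edges in `G`. -/
lemma mergeG_edges_mem : ∀ {a b : V} (w : (mergeG G x y).Walk a b),
    a ≠ y → x ∉ w.support → ∀ e ∈ w.edges, e ∈ G.edgeSet := by
  intro a b w
  induction w with
  | nil => intro _ _ e he; simp at he
  | cons h p ih =>
    intro ha hx e he
    rw [Walk.support_cons] at hx
    simp only [List.mem_cons, not_or] at hx
    rw [Walk.edges_cons] at he
    rcases List.mem_cons.1 he with rfl | he'
    · rcases h.2.2.2 with h' | ⟨rfl, _⟩ | ⟨h', _⟩
      · exact h'
      · exact absurd rfl hx.1
      · exact absurd h' (fun hh => hx.2 (hh ▸ Walk.start_mem_support p))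
    · exact ih h.2.2.1 hx.2 e he'

/-- Projection of a walk of `G` to the merged graph. -/
lemma mergeG_proj (hxy : G.Adj x y) :
    ∀ {a b : V} (w : G.Walk a b),
    ∃ w₂ : (mergeG G x y).Walk (if a = y then x else a) (if b = y then x else b),
      ∀ v ∈ w₂.support, ∃ u ∈ w.support, (if u = y then x else u) = v := by
  have hne : x ≠ y := hxy.ne
  intro a b w
  induction w with
  | nil =>
    refine ⟨Walk.nil, fun v hv => ⟨_, Walk.start_mem_support _, ?_⟩⟩
    exact (List.mem_singleton.1 hv).symm
  | @cons u c d h p ih =>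
    obtain ⟨w₂', hw₂'⟩ := ih
    by_cases hac : (if u = y then x else u) = (if c = y then x else c)
    · refine ⟨w₂'.copy hac.symm rfl, ?_⟩
      intro v hv
      rw [Walk.support_copy] at hv
      obtain ⟨z, hz, hz2⟩ := hw₂' v hv
      exact ⟨z, List.mem_cons_of_mem _ hz, hz2⟩
    · have hadj : (mergeG G x y).Adj (if u = y then x else u) (if c = y then x else c) := by
        refine ⟨hac, ?_, ?_, ?_⟩
        · split
          · exact hne
          · next hh => exact hh
        · split
          · exact hne
          · next hh => exact hh
        · by_cases hay : u = y
          · have hcy : c ≠ y := fun hh => (G.loopless.irrefl y (by rw [hay, hh] at h; exact h)).elim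
            simp only [if_pos hay, if_neg hcy]
            exact Or.inr (Or.inl ⟨trivial, by rw [hay] at h; exact h⟩)
          · by_cases hcy : c = y
            · simp only [if_neg hay, if_pos hcy]
              exact Or.inr (Or.inr ⟨trivial, by rw [hcy] at h; exact h⟩)
            · simp only [if_neg hay, if_neg hcy]
              exact Or.inl h
      refine ⟨Walk.cons hadj w₂', ?_⟩
      intro v hv
      rw [Walk.support_cons] at hv
      rcases List.mem_cons.1 hv with rfl | hv'
      · exact ⟨u, Walk.start_mem_support _, rfl⟩
      · obtain ⟨z, hz, hz2⟩ := hw₂' v hv'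
        exact ⟨z, List.mem_cons_of_mem _ hz, hz2⟩

end Merge

lemma start_not_mem_support_tail {G : SimpleGraph V} {a b : V} (w : G.Walk a b)
    (h : w.IsPath) : a ∉ w.support.tail := by
  have hn := h.support_nodup
  rw [w.support_eq_cons] at hn
  exact (List.nodup_cons.1 hn).1

section Merge2

variable {G : SimpleGraph V} {x y : V}

lemma mergeG_y_notMem_edge {s : Sym2 V} (hs : s ∈ (mergeG G x y).edgeSet) : y ∉ s := by
  induction s using Sym2.ind with
  | _ u v =>
    rw [SimpleGraph.mem_edgeSet] at hs
    rw [Sym2.mem_iff]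
    rintro (rfl | rfl)
    · exact hs.2.1 rfl
    · exact hs.2.2.1 rfl

open Classical in
/-- Auxiliary edge injection for the merge operation. -/
noncomputable def emap (G : SimpleGraph V) (x y : V) (s : Sym2 V) : Sym2 V :=
  if s ∈ G.edgeSet then s else Sym2.map (fun v => if v = x then y else v) s

lemma emap_of_mem {s : Sym2 V} (h : s ∈ G.edgeSet) : emap G x y s = s := by
  simp [emap, h]

lemma emap_of_not_mem {s : Sym2 V} (h : s ∉ G.edgeSet) :
    emap G x y s = Sym2.map (fun v => if v = x then y else v) s := by
  simp [emap, h]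

lemma mergeG_edgeSet_ncard_lt (hxy : G.Adj x y) :
    (mergeG G x y).edgeSet.ncard < G.edgeSet.ncard := by
  have hne : x ≠ y := hxy.ne
  have fact2 : ∀ s ∈ (mergeG G x y).edgeSet, s ∉ G.edgeSet →
      ∃ v, v ≠ x ∧ v ≠ y ∧ G.Adj y v ∧ s = s(x, v) ∧ emap G x y s = s(y, v) := by
    intro s
    induction s using Sym2.ind with
    | _ u v =>
      intro hs hsG
      rw [mem_edgeSet] at hs
      have hfs := emap_of_not_mem (G := G) (x := x) (y := y) hsG
      rw [Sym2.map_pair_eq] at hfs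
      rcases hs.2.2.2 with h' | ⟨hux', h'⟩ | ⟨hvx', h'⟩
      · exact absurd (G.mem_edgeSet.2 h') hsG
      · have hvx : v ≠ x := fun hh => hs.1 (by rw [hux', hh])
        refine ⟨v, hvx, hs.2.2.1, h', by rw [hux'], ?_⟩
        rw [hfs, if_pos hux', if_neg hvx]
      · have hux : u ≠ x := fun hh => hs.1 (by rw [hh, hvx'])
        refine ⟨u, hux, hs.2.1, h'.symm, by rw [hvx']; exact Sym2.eq_swap, ?_⟩
        rw [hfs, if_neg hux, if_pos hvx']
        exact Sym2.eq_swap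
  have hmaps : ∀ s ∈ (mergeG G x y).edgeSet, emap G x y s ∈ G.edgeSet \ {s(x, y)} := by
    intro s hs
    by_cases hsG : s ∈ G.edgeSet
    · rw [emap_of_mem hsG]
      refine ⟨hsG, ?_⟩
      intro hmem
      rw [Set.mem_singleton_iff] at hmem
      exact mergeG_y_notMem_edge hs (hmem ▸ (by rw [Sym2.mem_iff]; right; rfl))
    · obtain ⟨v, hvx, hvy, hadj, hrepr, hfs⟩ := fact2 s hs hsG
      rw [hfs]
      refine ⟨G.mem_edgeSet.2 hadj, ?_⟩
      intro hmem
      rw [Set.mem_singleton_iff, Sym2.eq_iff] at hmem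
      rcases hmem with ⟨h1, _⟩ | ⟨_, h2⟩
      · exact hne h1.symm
      · exact hvx h2
  have hinj : Set.InjOn (emap G x y) (mergeG G x y).edgeSet := by
    intro s1 h1 s2 h2 heq
    by_cases h1G : s1 ∈ G.edgeSet <;> by_cases h2G : s2 ∈ G.edgeSet
    · rwa [emap_of_mem h1G, emap_of_mem h2G] at heq
    · obtain ⟨v2, _, hv2y, _, hs2, hf2⟩ := fact2 s2 h2 h2G
      rw [hf2, emap_of_mem h1G] at heq
      have : y ∈ s1 := by rw [heq, Sym2.mem_iff]; left; rfl
      exact absurd this (mergeG_y_notMem_edge h1)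
    · obtain ⟨v1, _, hv1y, _, hs1, hf1⟩ := fact2 s1 h1 h1G
      rw [hf1, emap_of_mem h2G] at heq
      have : y ∈ s2 := by rw [← heq, Sym2.mem_iff]; left; rfl
      exact absurd this (mergeG_y_notMem_edge h2)
    · obtain ⟨v1, _, hv1y, _, hs1, hf1⟩ := fact2 s1 h1 h1G
      obtain ⟨v2, _, hv2y, _, hs2, hf2⟩ := fact2 s2 h2 h2G
      rw [hf1, hf2, Sym2.eq_iff] at heq
      rcases heq with ⟨_, h12⟩ | ⟨hy2, h1y⟩
      · rw [hs1, hs2, h12]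
      · exact absurd hy2.symm hv2y
  calc (mergeG G x y).edgeSet.ncard
      ≤ (G.edgeSet \ {s(x, y)}).ncard :=
        Set.ncard_le_ncard_of_injOn (emap G x y) hmaps hinj (Set.toFinite _)
    _ < G.edgeSet.ncard :=
        Set.ncard_diff_singleton_lt_of_mem (G.mem_edgeSet.2 hxy) (Set.toFinite _)

lemma liftFromX (hxy : G.Adj x y) {b : V} (D : (mergeG G x y).Walk x b)
    (hD : x ∉ D.support.tail) :
    ∃ (s : V) (R : G.Walk s b), (s = x ∨ s = y) ∧
      ∀ v ∈ R.support, v ∈ D.support ∨ v = y := by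
  cases D with
  | nil => exact ⟨x, Walk.nil, Or.inl rfl, fun v hv => Or.inl hv⟩
  | @cons _ c _ h p =>
    rw [Walk.support_cons, List.tail_cons] at hD
    have hcx : c ≠ x := fun hh => hD (hh ▸ p.start_mem_support)
    have hcy : c ≠ y := h.2.2.1
    have hedges : ∀ e ∈ p.edges, e ∈ G.edgeSet := mergeG_edges_mem p hcy hD
    rcases h.2.2.2 with h' | ⟨_, h'⟩ | ⟨hcx', _⟩
    · refine ⟨x, Walk.cons h' (p.transfer G hedges), Or.inl rfl, ?_⟩
      intro v hv
      rw [Walk.support_cons, Walk.support_transfer] at hv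
      exact Or.inl (by rw [Walk.support_cons]; exact hv)
    · refine ⟨y, Walk.cons h' (p.transfer G hedges), Or.inr rfl, ?_⟩
      intro v hv
      rw [Walk.support_cons, Walk.support_transfer] at hv
      rcases List.mem_cons.1 hv with rfl | hv'
      · exact Or.inr rfl
      · exact Or.inl (by rw [Walk.support_cons]; exact List.mem_cons_of_mem _ hv')
    · exact absurd hcx' hcx

end Merge2

/-- The image of a vertex set under merging `y` into `x`. -/
def mergeSet (A : Set V) (x y : V) : Set V :=
  {v | (v ∈ A ∧ v ≠ y) ∨ (v = x ∧ y ∈ A)}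

lemma mergeSet_not_y {A : Set V} {x y v : V} (h : v ∈ mergeSet A x y) (hxy : x ≠ y) :
    v ≠ y := by
  rcases h with ⟨_, h⟩ | ⟨rfl, _⟩
  · exact h
  · exact hxy

lemma mergeSet_mem {A : Set V} {x y v : V} (h : v ∈ mergeSet A x y) (hv : v ≠ x) :
    v ∈ A := by
  rcases h with ⟨h, _⟩ | ⟨rfl, _⟩
  · exact h
  · exact absurd rfl hv

lemma mergeSet_cases {A : Set V} {x y v : V} (h : v ∈ mergeSet A x y) (hv : v ∉ A) :
    v = x ∧ y ∈ A := by
  rcases h with ⟨h, _⟩ | h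
  · exact absurd h hv
  · exact h

lemma mergeSet_proj {A : Set V} {x y a : V} (ha : a ∈ A) :
    (if a = y then x else a) ∈ mergeSet A x y := by
  by_cases hay : a = y
  · rw [if_pos hay]
    exact Or.inr ⟨rfl, hay ▸ ha⟩
  · rw [if_neg hay]
    exact Or.inl ⟨ha, hay⟩

lemma mergeG_sep {G : SimpleGraph V} {x y : V} (hxy : G.Adj x y) {A B : Set V}
    (Y : Finset V)
    (hY : ABSep (mergeG G x y) (mergeSet A x y) (mergeSet B x y) Y) :
    ABSep G A B (insert y Y) ∧ (x ∉ Y → ABSep G A B Y) := by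
  have main : ∀ ⦃a b : V⦄ (w : G.Walk a b), a ∈ A → b ∈ B →
      ∃ u ∈ w.support, u ∈ Y ∨ (u = y ∧ x ∈ Y) := by
    intro a b w ha hb
    obtain ⟨w₂, hw₂⟩ := mergeG_proj hxy w
    obtain ⟨v, hv, hvY⟩ := hY w₂ (mergeSet_proj ha) (mergeSet_proj hb)
    obtain ⟨u, hu, huv⟩ := hw₂ v hv
    by_cases huy : u = y
    · rw [if_pos huy] at huv
      exact ⟨u, hu, Or.inr ⟨huy, huv ▸ hvY⟩⟩
    · rw [if_neg huy] at huv
      exact ⟨u, hu, Or.inl (huv ▸ hvY)⟩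
  constructor
  · intro a b w ha hb
    obtain ⟨u, hu, h⟩ := main w ha hb
    rcases h with h | ⟨h, _⟩
    · exact ⟨u, hu, Finset.mem_insert_of_mem h⟩
    · exact ⟨u, hu, h ▸ Finset.mem_insert_self _ _⟩
  · intro hx a b w ha hb
    obtain ⟨u, hu, h⟩ := main w ha hb
    rcases h with h | ⟨_, h⟩
    · exact ⟨u, hu, h⟩
    · exact absurd h hx

lemma prefix_to_S {G : SimpleGraph V} {S : Finset V} {x y : V} (hx : x ∈ S) (hy : y ∈ S) :
    ∀ {a b : V} (w : G.Walk a b), (∃ s ∈ w.support, s ∈ S) →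
    ∃ (v : V) (q : (G.deleteEdges {s(x, y)}).Walk a v), v ∈ S ∧
      ∀ u ∈ q.support, u ∈ w.support := by
  intro a b w
  induction w with
  | nil =>
    rintro ⟨s, hs, hsS⟩
    rw [Walk.support_nil, List.mem_singleton] at hs
    exact ⟨_, Walk.nil, hs ▸ hsS, fun u hu => hu⟩
  | @cons u c d h p ih =>
    rintro ⟨s, hs, hsS⟩
    by_cases huS : u ∈ S
    · refine ⟨u, Walk.nil, huS, fun z hz => ?_⟩
      rw [Walk.support_nil, List.mem_singleton] at hz
      rw [hz]
      exact Walk.start_mem_support _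
    · have hs' : s ∈ p.support := by
        rcases List.mem_cons.1 hs with rfl | h'
        · exact absurd hsS huS
        · exact h'
      obtain ⟨v, q, hvS, hsub⟩ := ih ⟨s, hs', hsS⟩
      have hadj : (G.deleteEdges {s(x, y)}).Adj u c := by
        rw [SimpleGraph.deleteEdges_adj]
        refine ⟨h, ?_⟩
        intro hmem
        rw [Set.mem_singleton_iff, Sym2.eq_iff] at hmem
        rcases hmem with ⟨h1, _⟩ | ⟨h1, _⟩
        · exact huS (h1 ▸ hx)
        · exact huS (h1 ▸ hy)
      refine ⟨v, Walk.cons hadj q, hvS, ?_⟩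
      intro z hz
      rw [Walk.support_cons] at hz ⊢
      rcases List.mem_cons.1 hz with rfl | hz'
      · exact List.mem_cons_self
      · exact List.mem_cons_of_mem _ (hsub z hz')

lemma path_support_eq_of_eq {G : SimpleGraph V} {a b : V} (w : G.Walk a b)
    (hp : w.IsPath) (hba : b = a) : w.support = [a] := by
  cases w with
  | nil => rfl
  | cons h p =>
    rw [Walk.cons_isPath_iff] at hp
    exact absurd (hba ▸ p.end_mem_support) hp.2

lemma abfamily {G : SimpleGraph V} {A B : Set V} {k : ℕ}
    (en : Fin k → V × V) (W : ∀ i, G.Walk (en i).1 (en i).2)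
    (hA : ∀ i, (en i).1 ∈ A) (hB : ∀ i, (en i).2 ∈ B)
    (hd : ∀ i j, i ≠ j → ∀ v ∈ (W i).support, v ∉ (W j).support) :
    ∃ P : Fin k → ABPath G A B,
      ∀ i j, i ≠ j → ∀ v ∈ (P i).walk.support, v ∉ (P j).walk.support := by
  choose P hP using fun i => exists_abpath (W i) (hA i) (hB i)
  exact ⟨P, fun i j hij v hv hv2 => hd i j hij v (hP i v hv) (hP j v hv2)⟩

lemma lift_one {G : SimpleGraph V} {x y : V} (hxy : G.Adj x y) {A B : Set V}
    (p : ABPath (mergeG G x y) (mergeSet A x y) (mergeSet B x y)) :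
    ∃ (a b : V) (w : G.Walk a b), a ∈ A ∧ b ∈ B ∧
      (∀ v ∈ w.support, v ∈ p.walk.support ∨ v = y) ∧
      (y ∈ w.support → x ∈ p.walk.support) := by
  have hay : p.a ≠ y := mergeSet_not_y p.ha hxy.ne
  have hby' : p.b ≠ y := mergeSet_not_y p.hb hxy.ne
  have hynot : y ∉ p.walk.support := mergeG_y_not_mem_support p.walk hay
  by_cases hx : x ∈ p.walk.support
  · -- the path passes through `x`
    have hT : (p.walk.takeUntil x hx).IsPath := p.isPath.takeUntil hx
    have hD : (p.walk.dropUntil x hx).IsPath := p.isPath.dropUntil hx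
    have hTtail : x ∉ (p.walk.takeUntil x hx).reverse.support.tail :=
      start_not_mem_support_tail _ hT.reverse
    have hDtail : x ∉ (p.walk.dropUntil x hx).support.tail :=
      start_not_mem_support_tail _ hD
    obtain ⟨s1, R1, hs1, hR1⟩ := liftFromX hxy (p.walk.takeUntil x hx).reverse hTtail
    obtain ⟨s2, R2, hs2, hR2⟩ := liftFromX hxy (p.walk.dropUntil x hx) hDtail
    have hR1' : ∀ v ∈ R1.support, v ∈ p.walk.support ∨ v = y := by
      intro v hv
      rcases hR1 v hv with h' | h'
      · rw [Walk.support_reverse, List.mem_reverse] at h'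
        exact Or.inl (Walk.support_takeUntil_subset _ hx h')
      · exact Or.inr h'
    have hR2' : ∀ v ∈ R2.support, v ∈ p.walk.support ∨ v = y := by
      intro v hv
      rcases hR2 v hv with h' | h'
      · exact Or.inl (Walk.support_dropUntil_subset _ hx h')
      · exact Or.inr h'
    have hC : ∃ C : G.Walk p.a p.b, ∀ v ∈ C.support, v ∈ p.walk.support ∨ v = y := by
      by_cases h12 : s1 = s2
      · refine ⟨R1.reverse.append (R2.copy h12.symm rfl), ?_⟩
        intro v hv
        rw [Walk.support_append] at hv
        rcases List.mem_append.1 hv with h | h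
        · rw [Walk.support_reverse, List.mem_reverse] at h
          exact hR1' v h
        · have h2 := List.mem_of_mem_tail h
          rw [Walk.support_copy] at h2
          exact hR2' v h2
      · have hadj : G.Adj s1 s2 := by
          rcases hs1 with h1 | h1 <;> rcases hs2 with h2 | h2
          · exact absurd (h1.trans h2.symm) h12
          · rw [h1, h2]; exact hxy
          · rw [h1, h2]; exact hxy.symm
          · exact absurd (h1.trans h2.symm) h12
        refine ⟨R1.reverse.append (Walk.cons hadj R2), ?_⟩
        intro v hv
        rw [Walk.support_append] at hv
        rcases List.mem_append.1 hv with h | h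
        · rw [Walk.support_reverse, List.mem_reverse] at h
          exact hR1' v h
        · have h2 := List.mem_of_mem_tail h
          rw [Walk.support_cons] at h2
          rcases List.mem_cons.1 h2 with rfl | h3
          · rcases hs1 with h1 | h1
            · exact Or.inl (h1 ▸ hx)
            · exact Or.inr h1
          · exact hR2' v h3
    obtain ⟨C, hC⟩ := hC
    by_cases haA : p.a ∈ A <;> by_cases hbB : p.b ∈ B
    · exact ⟨p.a, p.b, C, haA, hbB, hC, fun _ => hx⟩
    · obtain ⟨hbx, hyB⟩ := mergeSet_cases p.hb hbB
      refine ⟨p.a, y, C.concat (by rw [hbx]; exact hxy), haA, hyB, ?_, fun _ => hx⟩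
      intro v hv
      rw [Walk.support_concat] at hv
      rcases List.mem_append.1 hv with h | h
      · exact hC v h
      · exact Or.inr (List.mem_singleton.1 h)
    · obtain ⟨hax, hyA⟩ := mergeSet_cases p.ha haA
      refine ⟨y, p.b, Walk.cons (by rw [hax]; exact hxy.symm) C, hyA, hbB, ?_, fun _ => hx⟩
      intro v hv
      rw [Walk.support_cons] at hv
      rcases List.mem_cons.1 hv with rfl | h
      · exact Or.inr rfl
      · exact hC v h
    · obtain ⟨hax, hyA⟩ := mergeSet_cases p.ha haA
      obtain ⟨hbx, hyB⟩ := mergeSet_cases p.hb hbB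
      refine ⟨y, y, (Walk.cons (by rw [hax]; exact hxy.symm) C).concat (by rw [hbx]; exact hxy),
        hyA, hyB, ?_, fun _ => hx⟩
      intro v hv
      rw [Walk.support_concat] at hv
      rcases List.mem_append.1 hv with h | h
      · rw [Walk.support_cons] at h
        rcases List.mem_cons.1 h with rfl | h'
        · exact Or.inr rfl
        · exact hC v h'
      · exact Or.inr (List.mem_singleton.1 h)
  · -- the path avoids `x`: transfer it
    have hedges : ∀ e ∈ p.walk.edges, e ∈ G.edgeSet := mergeG_edges_mem p.walk hay hx
    have hax : p.a ≠ x := by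
      intro hh
      apply hx
      have h0 := p.walk.start_mem_support
      revert h0
      generalize p.walk.support = L
      intro h0
      rwa [hh] at h0
    have hbx : p.b ≠ x := by
      intro hh
      apply hx
      have h0 := p.walk.end_mem_support
      revert h0
      generalize p.walk.support = L
      intro h0
      rwa [hh] at h0
    refine ⟨p.a, p.b, p.walk.transfer G hedges, mergeSet_mem p.ha hax,
      mergeSet_mem p.hb hbx, ?_, ?_⟩
    · intro v hv
      rw [Walk.support_transfer] at hv
      exact Or.inl hv
    · intro hyw
      rw [Walk.support_transfer] at hyw
      exact absurd hyw hynot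

lemma mem_of_eq_mem {α : Type*} {u c : α} {L : List α} (h : u = c) (hu : u ∈ L) : c ∈ L :=
  h ▸ hu

lemma mem_support_of_eq {G : SimpleGraph V} {a b c : V} (w : G.Walk a b) (h : b = c) :
    c ∈ w.support := by
  have h0 := w.end_mem_support
  revert h0
  generalize w.support = L
  intro h0
  rwa [h] at h0

lemma mem_support_of_eq_start {G : SimpleGraph V} {a b c : V} (w : G.Walk a b) (h : a = c) :
    c ∈ w.support := by
  have h0 := w.start_mem_support
  revert h0
  generalize w.support = L
  intro h0
  rwa [h] at h0

lemma menger_core : ∀ (n : ℕ) (G : SimpleGraph V) (A B : Set V) (k : ℕ),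
    G.edgeSet.ncard ≤ n →
    (∀ X : Finset V, ABSep G A B X → k ≤ X.card) →
    ∃ P : Fin k → ABPath G A B,
      ∀ i j, i ≠ j → ∀ v ∈ (P i).walk.support, v ∉ (P j).walk.support := by
  intro n
  induction n using Nat.strong_induction_on with
  | _ n ih =>
  intro G A B k hn hsep
  by_cases hE : G.edgeSet = ∅
  · -- base case: no edges
    have hnil : ∀ {a b : V} (w : G.Walk a b), b = a := by
      intro a b w
      cases w with
      | nil => rfl
      | cons h p =>
        exfalso
        have h2 := G.mem_edgeSet.2 h
        rw [hE] at h2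
        exact Set.notMem_empty _ h2
    have hsepX : ABSep G A B (Set.toFinite (A ∩ B)).toFinset := by
      intro a b w ha hb
      have hba := hnil w
      refine ⟨b, w.end_mem_support, ?_⟩
      rw [Set.Finite.mem_toFinset]
      exact ⟨by rw [hba]; exact ha, hb⟩
    have hk := hsep _ hsepX
    obtain ⟨T, hTsub, hTcard⟩ := Finset.exists_subset_card_eq hk
    let E := T.equivFinOfCardEq hTcard
    have hmem : ∀ i : Fin k, (E.symm i : V) ∈ A ∩ B := by
      intro i
      have := hTsub (E.symm i).2
      rwa [Set.Finite.mem_toFinset] at this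
    refine ⟨fun i => ⟨(E.symm i : V), (E.symm i : V), Walk.nil, Walk.IsPath.nil,
      (hmem i).1, (hmem i).2, ?_⟩, ?_⟩
    · intro v hv hva _
      rw [Walk.support_nil, List.mem_singleton] at hv
      exact absurd hv hva
    · intro i j hij v hv1 hv2
      rw [Walk.support_nil, List.mem_singleton] at hv1 hv2
      exact hij (E.symm.injective (Subtype.ext (hv1.symm.trans hv2)))
  · obtain ⟨e, he⟩ := Set.nonempty_iff_ne_empty.2 hE
    revert he
    induction e using Sym2.ind with
    | _ x y =>
    intro he
    have hxy : G.Adj x y := G.mem_edgeSet.1 he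
    have hne : x ≠ y := hxy.ne
    by_cases hsep₂ : ∀ X : Finset V,
        ABSep (mergeG G x y) (mergeSet A x y) (mergeSet B x y) X → k ≤ X.card
    · -- case (i): recurse on the merged graph and lift
      have hlt : (mergeG G x y).edgeSet.ncard < n :=
        lt_of_lt_of_le (mergeG_edgeSet_ncard_lt hxy) hn
      obtain ⟨P₂, hP₂⟩ := ih _ hlt (mergeG G x y) (mergeSet A x y) (mergeSet B x y) k
        le_rfl hsep₂
      choose a' b' w' hA' hB' hsub' hy' using fun i => lift_one hxy (P₂ i)
      apply abfamily (fun i => (a' i, b' i)) w' hA' hB'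
      intro i j hij v hv1 hv2
      by_cases hvy : v = y
      · subst hvy
        exact hP₂ i j hij x (hy' i hv1) (hy' j hv2)
      · rcases hsub' i v hv1 with h1 | h1
        · rcases hsub' j v hv2 with h2 | h2
          · exact hP₂ i j hij v h1 h2
          · exact hvy h2
        · exact hvy h1
    · -- case (ii): a small separator exists in the merged graph
      push_neg at hsep₂
      obtain ⟨Y, hYsep, hYcard⟩ := hsep₂
      have hxY : x ∈ Y := by
        by_contra hxY
        exact absurd (hsep Y ((mergeG_sep hxy Y hYsep).2 hxY)) (not_le.2 hYcard)
      have hSsep : ABSep G A B (insert y Y) := (mergeG_sep hxy Y hYsep).1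
      set S := insert y Y with hSdef
      have hSk : S.card = k := by
        have h1 : S.card ≤ Y.card + 1 := by rw [hSdef]; exact Finset.card_insert_le y Y
        have h2 := hsep S hSsep
        omega
      have hyS : y ∈ S := Finset.mem_insert_self _ _
      have hxS : x ∈ S := Finset.mem_insert_of_mem hxY
      have hG'lt : (G.deleteEdges {s(x, y)}).edgeSet.ncard < n := by
        rw [edgeSet_deleteEdges]
        exact lt_of_lt_of_le (Set.ncard_diff_singleton_lt_of_mem he (Set.toFinite _)) hn
      have hsepAS : ∀ X : Finset V, ABSep (G.deleteEdges {s(x, y)}) A ↑S X → k ≤ X.card := by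
        intro X hXs
        refine hsep X ?_
        intro a b w ha hb
        obtain ⟨s0, hs0, hs0S⟩ := hSsep w ha hb
        obtain ⟨v, q, hvS, hsub⟩ := prefix_to_S hxS hyS w ⟨s0, hs0, hs0S⟩
        obtain ⟨u, hu, huX⟩ := hXs q ha (Finset.mem_coe.2 hvS)
        exact ⟨u, hsub u hu, huX⟩
      have hsepSB : ∀ X : Finset V, ABSep (G.deleteEdges {s(x, y)}) ↑S B X → k ≤ X.card := by
        intro X hXs
        refine hsep X ?_
        intro a b w ha hb
        obtain ⟨s0, hs0, hs0S⟩ := hSsep w ha hb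
        have hs0' : ∃ s ∈ w.reverse.support, s ∈ S := by
          refine ⟨s0, ?_, hs0S⟩
          rwa [Walk.support_reverse, List.mem_reverse]
        obtain ⟨v, q, hvS, hsub⟩ := prefix_to_S hxS hyS w.reverse hs0'
        obtain ⟨u, hu, huX⟩ := hXs q.reverse (Finset.mem_coe.2 hvS) hb
        refine ⟨u, ?_, huX⟩
        rw [Walk.support_reverse, List.mem_reverse] at hu
        have h3 := hsub u hu
        rwa [Walk.support_reverse, List.mem_reverse] at h3
      obtain ⟨PA, hPA⟩ := ih _ hG'lt (G.deleteEdges {s(x, y)}) A ↑S k le_rfl hsepAS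
      obtain ⟨PB, hPB⟩ := ih _ hG'lt (G.deleteEdges {s(x, y)}) ↑S B k le_rfl hsepSB
      have hfinj : Function.Injective (fun i : Fin k => (PA i).b) := by
        intro i j hij_eq
        by_contra hij
        exact hPA i j hij (PA i).b (PA i).walk.end_mem_support
          (mem_support_of_eq (PA j).walk hij_eq.symm)
      have hfbij : Function.Bijective
          (fun i : Fin k => (⟨(PA i).b, Finset.mem_coe.1 (PA i).hb⟩ : {v // v ∈ S})) := by
        rw [Fintype.bijective_iff_injective_and_card]
        refine ⟨fun i j hij => hfinj (congrArg Subtype.val hij), ?_⟩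
        rw [Fintype.card_fin, Fintype.card_coe, hSk]
      have hginj : Function.Injective (fun j : Fin k => (PB j).a) := by
        intro i j hij_eq
        by_contra hij
        exact hPB i j hij (PB i).a (PB i).walk.start_mem_support
          (mem_support_of_eq_start (PB j).walk hij_eq.symm)
      have hgbij : Function.Bijective
          (fun j : Fin k => (⟨(PB j).a, Finset.mem_coe.1 (PB j).ha⟩ : {v // v ∈ S})) := by
        rw [Fintype.bijective_iff_injective_and_card]
        refine ⟨fun i j hij => hginj (congrArg Subtype.val hij), ?_⟩
        rw [Fintype.card_fin, Fintype.card_coe, hSk]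
      let eg := Equiv.ofBijective _ hgbij
      let σ : Fin k → Fin k := fun i =>
        eg.symm (⟨(PA i).b, Finset.mem_coe.1 (PA i).hb⟩ : {v // v ∈ S})
      have hσ : ∀ i, (PB (σ i)).a = (PA i).b := by
        intro i
        exact congrArg Subtype.val
          (eg.apply_symm_apply (⟨(PA i).b, Finset.mem_coe.1 (PA i).hb⟩ : {v // v ∈ S}))
      have hσinj : Function.Injective σ := by
        intro i j hij
        exact hfbij.1 (eg.symm.injective hij)
      have hAnil : ∀ i, (PA i).a ∈ S →
          ((PA i).b = (PA i).a ∧ (PA i).walk.support = [(PA i).a]) := by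
        intro i haS
        obtain ⟨j, hj⟩ := hfbij.2 ⟨(PA i).a, haS⟩
        have hj' : (PA j).b = (PA i).a := congrArg Subtype.val hj
        have hij : j = i := by
          by_contra hij
          exact hPA j i hij (PA j).b (PA j).walk.end_mem_support
            (mem_support_of_eq_start (PA i).walk hj'.symm)
        rw [hij] at hj'
        exact ⟨hj', path_support_eq_of_eq _ (PA i).isPath hj'⟩
      have hBnil : ∀ m, (PB m).b ∈ S →
          ((PB m).a = (PB m).b ∧ (PB m).walk.support = [(PB m).a]) := by
        intro m hbS
        obtain ⟨j, hj⟩ := hgbij.2 ⟨(PB m).b, hbS⟩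
        have hj' : (PB j).a = (PB m).b := congrArg Subtype.val hj
        have hjm : j = m := by
          by_contra hjm
          exact hPB j m hjm (PB j).a (PB j).walk.start_mem_support
            (mem_support_of_eq (PB m).walk hj'.symm)
        rw [hjm] at hj'
        exact ⟨hj', path_support_eq_of_eq _ (PB m).isPath hj'.symm⟩
      have crossPQ : ∀ (i m : Fin k), (PB m).a ≠ (PA i).b →
          ∀ v, v ∈ (PA i).walk.support → v ∈ (PB m).walk.support → False := by
        intro i m hnem v hv1 hv2
        have hle : G.deleteEdges {s(x, y)} ≤ G := G.deleteEdges_le _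
        obtain ⟨u, hu, huS⟩ :
            ∃ u, (u ∈ ((PA i).walk.takeUntil v hv1).support ∨
                  u ∈ ((PB m).walk.dropUntil v hv2).support) ∧ u ∈ S := by
          obtain ⟨u, hu, huS⟩ := hSsep
            ((((PA i).walk.takeUntil v hv1).append ((PB m).walk.dropUntil v hv2)).transfer G
              (fun e' he' => SimpleGraph.edgeSet_mono hle (Walk.edges_subset_edgeSet _ he')))
            (PA i).ha (PB m).hb
          rw [Walk.support_transfer, Walk.support_append] at hu
          rcases List.mem_append.1 hu with h | h
          · exact ⟨u, Or.inl h, huS⟩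
          · exact ⟨u, Or.inr (List.mem_of_mem_tail h), huS⟩
        have hPmem : ∀ z, z ∈ (PA i).walk.support → z ∈ S →
            z = (PA i).a ∨ z = (PA i).b := by
          intro z hz hzS
          by_contra hc
          push_neg at hc
          exact ((PA i).internal z hz hc.1 hc.2).2 (Finset.mem_coe.2 hzS)
        have hQmem : ∀ z, z ∈ (PB m).walk.support → z ∈ S →
            z = (PB m).a ∨ z = (PB m).b := by
          intro z hz hzS
          by_contra hc
          push_neg at hc
          exact ((PB m).internal z hz hc.1 hc.2).1 (Finset.mem_coe.2 hzS)
        have clav : v = (PA i).b → False := by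
          intro hvb
          have hvS : v ∈ S := by rw [hvb]; exact Finset.mem_coe.1 (PA i).hb
          rcases hQmem v hv2 hvS with h | h
          · exact hnem (h.symm.trans hvb)
          · obtain ⟨hab, _⟩ := hBnil m (by rw [← h]; exact hvS)
            exact hnem ((hab.trans h.symm).trans hvb)
        have claA : (PA i).a ∈ S → False := by
          intro haS
          obtain ⟨hba, hsup⟩ := hAnil i haS
          have hva : v = (PA i).a := by rw [hsup] at hv1; exact List.mem_singleton.1 hv1
          exact clav (hva.trans hba.symm)
        have claQa : v = (PB m).a → False := by
          intro hva'
          have hvS : v ∈ S := by rw [hva']; exact Finset.mem_coe.1 (PB m).ha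
          rcases hPmem v hv1 hvS with h | h
          · exact claA (by rw [← h]; exact hvS)
          · exact clav h
        rcases hu with h | h
        · have huP : u ∈ (PA i).walk.support := Walk.support_takeUntil_subset _ hv1 h
          rcases hPmem u huP huS with h1 | h1
          · exact claA (by rw [← h1]; exact huS)
          · exact clav (endpoint_takeUntil _ (PA i).isPath hv1 (mem_of_eq_mem h1 h))
        · have huQ : u ∈ (PB m).walk.support := Walk.support_dropUntil_subset _ hv2 h
          rcases hQmem u huQ huS with h1 | h1
          · exact claQa (start_dropUntil _ (PB m).isPath hv2 (mem_of_eq_mem h1 h))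
          · obtain ⟨hab, hsup⟩ := hBnil m (by rw [← h1]; exact huS)
            have hva : v = (PB m).a := by rw [hsup] at hv2; exact List.mem_singleton.1 hv2
            exact claQa hva
      -- glue the two families
      apply abfamily (fun i => ((PA i).a, (PB (σ i)).b))
        (fun i => (((PA i).walk.append ((PB (σ i)).walk.copy (hσ i) rfl)).transfer G
          (fun e' he' => SimpleGraph.edgeSet_mono (G.deleteEdges_le _)
            (Walk.edges_subset_edgeSet _ he'))))
        (fun i => (PA i).ha) (fun i => (PB (σ i)).hb)
      intro i j hij v hv1 hv2
      rw [Walk.support_transfer, Walk.support_append] at hv1 hv2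
      have hv1' : v ∈ (PA i).walk.support ∨ v ∈ (PB (σ i)).walk.support := by
        rcases List.mem_append.1 hv1 with h | h
        · exact Or.inl h
        · have h2 := List.mem_of_mem_tail h
          rw [Walk.support_copy] at h2
          exact Or.inr h2
      have hv2' : v ∈ (PA j).walk.support ∨ v ∈ (PB (σ j)).walk.support := by
        rcases List.mem_append.1 hv2 with h | h
        · exact Or.inl h
        · have h2 := List.mem_of_mem_tail h
          rw [Walk.support_copy] at h2
          exact Or.inr h2
      rcases hv1' with h1 | h1 <;> rcases hv2' with h2 | h2
      · exact hPA i j hij v h1 h2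
      · exact crossPQ i (σ j)
          (fun hh => hij (hfinj ((hσ j).symm.trans hh)).symm) v h1 h2
      · exact crossPQ j (σ i)
          (fun hh => hij (hfinj ((hσ i).symm.trans hh))) v h2 h1
      · exact hPB (σ i) (σ j) (fun hh => hij (hσinj hh)) v h1 h2

/-- Menger's theorem, vertex version: either there are `k` pairwise vertex-disjoint
`A`–`B` paths, or at most `k-1` vertices meet every `A`–`B` path. -/
theorem menger_vertex {V : Type} [Fintype V] [DecidableEq V]
    (G : SimpleGraph V) (A B : Set V) (k : ℕ) :
    (∃ P : Fin k → ABPath G A B,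
      ∀ i j, i ≠ j → ∀ x, x ∈ (P i).walk.support → x ∉ (P j).walk.support)
    ∨ (∃ X : Finset V, X.card ≤ k - 1 ∧
        ∀ p : ABPath G A B, ∃ v ∈ p.walk.support, v ∈ X) := by
  classical
  by_cases h : ∃ X : Finset V, X.card ≤ k - 1 ∧
      ∀ p : ABPath G A B, ∃ v ∈ p.walk.support, v ∈ X
  · exact Or.inr h
  · left
    push_neg at h
    have hsep : ∀ X : Finset V, ABSep G A B X → k ≤ X.card := by
      intro X hX
      by_contra hlt
      push_neg at hlt
      have hcard : X.card ≤ k - 1 := by omega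
      obtain ⟨p, hp⟩ := h X hcard
      obtain ⟨v, hv, hvX⟩ := hX p.walk p.ha p.hb
      exact hp v hv hvX
    obtain ⟨P, hP⟩ := menger_core G.edgeSet.ncard G A B k le_rfl hsep
    exact ⟨P, fun i j hij xx hx1 => hP i j hij xx hx1⟩
end

section
/- In every graph G, for vertex sets A and B, either there are k pairwise edge-disjoint A–B paths, or there exists a set X of at most k−1 edges such that G − X contains no A–B path. -/
open scoped Classical

namespace MengerAux

variable {V : Type} [Fintype V] [DecidableEq V]

/-- A path in a digraph given by relation `r`, recorded as its full vertex list. -/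
inductive ArcPath (r : V → V → Prop) : V → V → List V → Prop
  | nil (a : V) : ArcPath r a a [a]
  | cons {a c b : V} {l : List V} : r a c → ArcPath r c b l → ArcPath r a b (a :: l)

namespace ArcPath

variable {r r' : V → V → Prop} {a b c : V} {l : List V}

theorem start_mem (h : ArcPath r a b l) : a ∈ l := by
  cases h <;> simp

theorem end_mem (h : ArcPath r a b l) : b ∈ l := by
  induction h with
  | nil => simp
  | cons _ _ ih => simp [ih]

theorem congr (h : ArcPath r a b l) (h' : ∀ u v, u ∈ l → v ∈ l → r u v → r' u v) :
    ArcPath r' a b l := by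
  induction h with
  | nil a => exact nil a
  | @cons a c b l hac tail ih =>
      exact cons (h' a c (by simp) (by simp [tail.start_mem]) hac)
        (ih fun u v hu hv => h' u v (by simp [hu]) (by simp [hv]))

theorem append_right (h : ArcPath r a b l) (hbc : r b c) : ArcPath r a c (l ++ [c]) := by
  induction h with
  | nil a => exact cons hbc (nil c)
  | cons hac tail ih => exact cons hac (ih hbc)

theorem of_rtg (h : Relation.ReflTransGen r a b) : ∃ l, ArcPath r a b l := by
  induction h with
  | refl => exact ⟨[a], nil a⟩
  | tail _ hbc ih => obtain ⟨l, hl⟩ := ih; exact ⟨l ++ [_], hl.append_right hbc⟩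

theorem suffix (h : ArcPath r c b l) (ha : a ∈ l) :
    ∃ m, ArcPath r a b m ∧ m <:+ l := by
  induction h with
  | nil c =>
      simp only [List.mem_singleton] at ha
      subst ha; exact ⟨[a], nil a, List.suffix_refl _⟩
  | @cons c' d b' l' hcd tail ih =>
      rcases List.mem_cons.1 ha with h1 | h2
      · subst h1; exact ⟨a :: l', cons hcd tail, List.suffix_refl _⟩
      · obtain ⟨m, hm, hs⟩ := ih h2
        exact ⟨m, hm, hs.trans (List.suffix_cons c' l')⟩

theorem trim : ∀ (n : ℕ) (l : List V) (a : V), l.length ≤ n → ArcPath r a b l →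
    ∃ l', ArcPath r a b l' ∧ l'.Nodup := by
  intro n
  induction n with
  | zero =>
      intro l a hlen h
      have : l = [] := List.length_eq_zero_iff.mp (Nat.le_zero.mp hlen)
      subst this; cases h
  | succ n ih =>
      intro l a hlen h
      cases h with
      | nil => exact ⟨_, ArcPath.nil _, by simp⟩
      | @cons _ c _ m hac tail =>
          obtain ⟨m', hm', hnd⟩ := ih m c (by simpa using hlen) tail
          by_cases hmem : a ∈ m'
          · obtain ⟨m'', hm'', hs⟩ := hm'.suffix hmem
            exact ⟨m'', hm'', hs.sublist.nodup hnd⟩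
          · exact ⟨a :: m', cons hac hm', by simp [hnd, hmem]⟩

end ArcPath


section Flow

variable {G : SimpleGraph V} {A B : Set V}

/-- Net out-flow of an arc set at a vertex. -/
def g (D : Finset (V × V)) (v : V) : ℤ :=
  ((D.filter (fun p => p.1 = v)).card : ℤ) - ((D.filter (fun p => p.2 = v)).card : ℤ)

theorem g_insert {D : Finset (V × V)} {p : V × V} (hp : p ∉ D) (v : V) :
    g (insert p D) v = g D v + (if p.1 = v then 1 else 0) - (if p.2 = v then 1 else 0) := by
  unfold g
  rw [Finset.filter_insert, Finset.filter_insert]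
  have h1 : p ∉ D.filter (fun q => q.1 = v) := fun hc => hp (Finset.mem_filter.1 hc).1
  have h2 : p ∉ D.filter (fun q => q.2 = v) := fun hc => hp (Finset.mem_filter.1 hc).1
  split_ifs <;> simp [Finset.card_insert_of_notMem, h1, h2] <;> ring

theorem g_erase {D : Finset (V × V)} {p : V × V} (hp : p ∈ D) (v : V) :
    g (D.erase p) v = g D v - (if p.1 = v then 1 else 0) + (if p.2 = v then 1 else 0) := by
  have hp' : p ∉ D.erase p := Finset.notMem_erase p D
  have h := g_insert hp' v
  rw [Finset.insert_erase hp] at h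
  rw [h]; ring

theorem sum_filter_card (D : Finset (V × V)) (Z : Finset V) (f : V × V → V) :
    ∑ v ∈ Z, ((D.filter (fun p => f p = v)).card : ℤ) = ((D.filter (fun p => f p ∈ Z)).card : ℤ) := by
  have : (D.filter (fun p => f p ∈ Z)) = Z.biUnion (fun v => D.filter (fun p => f p = v)) := by
    ext p
    simp only [Finset.mem_filter, Finset.mem_biUnion]
    constructor
    · rintro ⟨hp, hf⟩; exact ⟨f p, hf, hp, rfl⟩
    · rintro ⟨v, hv, hp, rfl⟩; exact ⟨hp, hv⟩
  rw [this, Finset.card_biUnion]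
  · push_cast; rfl
  · intro x _ y _ hxy
    simp only [Finset.disjoint_left, Finset.mem_filter]
    rintro p ⟨_, rfl⟩ ⟨_, h⟩
    exact hxy h

/-- Double counting: the sum of net out-flows over `Z` equals arcs leaving minus arcs
entering. -/
theorem sum_g (D : Finset (V × V)) (Z : Finset V) :
    ∑ v ∈ Z, g D v =
      ((D.filter (fun p => p.1 ∈ Z ∧ p.2 ∉ Z)).card : ℤ)
        - ((D.filter (fun p => p.2 ∈ Z ∧ p.1 ∉ Z)).card : ℤ) := by
  have h1 := sum_filter_card D Z (fun p => p.1)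
  have h2 := sum_filter_card D Z (fun p => p.2)
  have e1 : (D.filter (fun p => p.1 ∈ Z)).card
      = (D.filter (fun p => (p.1 ∈ Z ∧ p.2 ∈ Z))).card + (D.filter (fun p => p.1 ∈ Z ∧ p.2 ∉ Z)).card := by
    rw [← Finset.filter_filter, ← Finset.filter_filter]
    exact (Finset.card_filter_add_card_filter_not (fun p : V × V => p.2 ∈ Z)).symm
  have e2 : (D.filter (fun p => p.2 ∈ Z)).card
      = (D.filter (fun p => (p.2 ∈ Z ∧ p.1 ∈ Z))).card + (D.filter (fun p => p.2 ∈ Z ∧ p.1 ∉ Z)).card := by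
    rw [← Finset.filter_filter, ← Finset.filter_filter]
    exact (Finset.card_filter_add_card_filter_not (fun p : V × V => p.1 ∈ Z)).symm
  have e3 : (D.filter (fun p => (p.1 ∈ Z ∧ p.2 ∈ Z))) = (D.filter (fun p => (p.2 ∈ Z ∧ p.1 ∈ Z))) := by
    simp [and_comm]
  unfold g
  rw [Finset.sum_sub_distrib, h1, h2, e1, e2, e3]
  push_cast; ring


variable (G : SimpleGraph V) (A B : Set V)

/-- The residual relation of an arc set. -/
def Rd (D : Finset (V × V)) (u v : V) : Prop :=
  (G.Adj u v ∧ (u, v) ∉ D) ∨ (v, u) ∈ D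

/-- Valid flows: arcs are edges, no antiparallel pair, conservation off `A ∪ B`. -/
structure IsFlow (D : Finset (V × V)) : Prop where
  adj : ∀ p ∈ D, G.Adj p.1 p.2
  anti : ∀ p ∈ D, (p.2, p.1) ∉ D
  cons : ∀ v, v ∉ A → v ∉ B → g D v = 0

noncomputable def value (D : Finset (V × V)) : ℤ :=
  ∑ v ∈ Finset.univ.filter (fun v => v ∈ A), g D v

variable {G A B}

theorem rd_congr {D D' : Finset (V × V)} {x : V}
    (h : ∀ u v : V, u ≠ x → v ≠ x → ((u, v) ∈ D' ↔ (u, v) ∈ D)) {u v : V}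
    (hu : u ≠ x) (hv : v ≠ x) : Rd G D u v ↔ Rd G D' u v := by
  unfold Rd
  rw [h u v hu hv, h v u hv hu]

/-- Augmenting along a residual path. -/
theorem aug_core : ∀ (l : List V) (D : Finset (V × V)) (a b : V),
    ArcPath (Rd G D) a b l → l.Nodup →
    (∀ p ∈ D, G.Adj p.1 p.2) → (∀ p ∈ D, (p.2, p.1) ∉ D) →
    ∃ D' : Finset (V × V),
      (∀ p ∈ D', G.Adj p.1 p.2) ∧ (∀ p ∈ D', (p.2, p.1) ∉ D') ∧
      (∀ v, g D' v = g D v + (if a = v then 1 else 0) - (if b = v then 1 else 0)) := by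
  intro l
  induction l with
  | nil => intro D a b h; cases h
  | cons x m ih =>
      intro D a b h hnd hadj hanti
      cases h with
      | nil => exact ⟨D, hadj, hanti, fun v => by simp⟩
      | @cons _ c _ _ hac tail =>
          have ham : x ∉ m := (List.nodup_cons.1 hnd).1
          have hcm : c ∈ m := tail.start_mem
          have hac' : x ≠ c := fun h => ham (h ▸ hcm)
          obtain ⟨D₁, hD₁mem, hD₁adj, hD₁anti, hD₁g⟩ :
              ∃ D₁ : Finset (V × V),
                (∀ u v : V, u ≠ x → v ≠ x → ((u, v) ∈ D₁ ↔ (u, v) ∈ D)) ∧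
                (∀ p ∈ D₁, G.Adj p.1 p.2) ∧ (∀ p ∈ D₁, (p.2, p.1) ∉ D₁) ∧
                (∀ v, g D₁ v = g D v + (if x = v then 1 else 0) - (if c = v then 1 else 0)) := by
            by_cases hca : (c, x) ∈ D
            · refine ⟨D.erase (c, x), ?_, ?_, ?_, ?_⟩
              · intro u v hu hv
                simp only [Finset.mem_erase]
                constructor
                · exact fun h => h.2
                · intro h
                  refine ⟨?_, h⟩
                  simp only [Ne, Prod.ext_iff, not_and]
                  exact fun _ h' => hv h'
              · exact fun p hp => hadj p (Finset.mem_of_mem_erase hp)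
              · intro p hp hp'
                exact hanti p (Finset.mem_of_mem_erase hp) (Finset.mem_of_mem_erase hp')
              · intro v
                rw [g_erase hca v]
                split_ifs <;> ring
            · have h1 : G.Adj x c ∧ (x, c) ∉ D := by
                rcases hac with h | h
                · exact h
                · exact absurd h hca
              refine ⟨insert (x, c) D, ?_, ?_, ?_, ?_⟩
              · intro u v hu _
                simp only [Finset.mem_insert]
                constructor
                · rintro (h | h)
                  · exact absurd (congrArg Prod.fst h) hu
                  · exact h
                · exact fun h => Or.inr h
              · intro p hp
                rcases Finset.mem_insert.1 hp with rfl | hp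
                · exact h1.1
                · exact hadj p hp
              · intro p hp hp'
                rcases Finset.mem_insert.1 hp with rfl | hp
                · rcases Finset.mem_insert.1 hp' with h | h
                  · simp only [Prod.mk.injEq] at h
                    exact hac' h.1.symm
                  · exact hca h
                · rcases Finset.mem_insert.1 hp' with h | h
                  · simp only [Prod.mk.injEq] at h
                    have : p = (c, x) := Prod.ext h.2 h.1
                    subst this
                    exact hca hp
                  · exact hanti p hp h
              · intro v
                rw [g_insert h1.2 v]
          have tail' : ArcPath (Rd G D₁) c b m := by
            refine tail.congr fun u v hu hv h => ?_
            exact (rd_congr hD₁mem (fun h' => ham (h' ▸ hu)) (fun h' => ham (h' ▸ hv))).1 h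
          obtain ⟨D', h1, h2, h3⟩ := ih D₁ c b tail' (List.nodup_cons.1 hnd).2 hD₁adj hD₁anti
          refine ⟨D', h1, h2, fun v => ?_⟩
          rw [h3 v, hD₁g v]
          split_ifs <;> ring


/-- Removing a flow path: produces the smaller arc set together with a walk in `G`
whose edges come from the removed arcs. -/
theorem remove_core : ∀ (l : List V) (D : Finset (V × V)) (a b : V),
    ArcPath (fun u v => (u, v) ∈ D) a b l → l.Nodup →
    (∀ p ∈ D, G.Adj p.1 p.2) →
    ∃ (D₂ : Finset (V × V)) (w : G.Walk a b),
      D₂ ⊆ D ∧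
      (∀ v, g D₂ v = g D v - (if a = v then 1 else 0) + (if b = v then 1 else 0)) ∧
      (∀ e ∈ w.edges, ∃ p : V × V, p ∈ D ∧ p ∉ D₂ ∧ s(p.1, p.2) = e) := by
  intro l
  induction l with
  | nil => intro D a b h; cases h
  | cons x m ih =>
      intro D a b h hnd hadj
      cases h with
      | nil =>
          exact ⟨D, SimpleGraph.Walk.nil, le_refl D, fun v => by simp, by simp⟩
      | @cons _ c _ _ hac tail =>
          have ham : x ∉ m := (List.nodup_cons.1 hnd).1
          set D₁ := D.erase (x, c) with hD₁
          have tail' : ArcPath (fun u v => (u, v) ∈ D₁) c b m := by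
            refine tail.congr fun u v hu _ h => ?_
            refine Finset.mem_erase.2 ⟨?_, h⟩
            simp only [Ne, Prod.ext_iff, not_and]
            exact fun h' => absurd (h' ▸ hu) ham
          obtain ⟨D₂, w, hsub, hg, hcov⟩ := ih D₁ c b tail' (List.nodup_cons.1 hnd).2
            (fun p hp => hadj p (Finset.mem_of_mem_erase hp))
          refine ⟨D₂, SimpleGraph.Walk.cons (hadj (x, c) hac) w, hsub.trans (Finset.erase_subset _ _), ?_, ?_⟩
          · intro v
            rw [hg v, g_erase hac v]
            split_ifs <;> ring
          · intro e he
            rw [SimpleGraph.Walk.edges_cons] at he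
            rcases List.mem_cons.1 he with rfl | h
            · exact ⟨(x, c), hac, fun hc => (Finset.mem_erase.1 (hsub hc)).1 rfl, rfl⟩
            · obtain ⟨p, hp1, hp2, hp3⟩ := hcov e h
              exact ⟨p, Finset.mem_of_mem_erase hp1, hp2, hp3⟩


/-- Any walk from `A` to `B` contains an `A`–`B` path using a subset of its edges. -/
theorem extract (n : ℕ) : ∀ (a b : V), a ∈ A → b ∈ B → ∀ w : G.Walk a b, w.length ≤ n →
    ∃ p : ABPath G A B, ∀ e ∈ p.walk.edges, e ∈ w.edges := by
  induction n using Nat.strong_induction_on with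
  | _ n ih =>
    intro a b ha hb w hlen
    set q := w.bypass with hq
    have hqp : q.IsPath := w.bypass_isPath
    have hqe : q.edges ⊆ w.edges := w.edges_bypass_subset
    have hql : q.length ≤ n := le_trans (w.length_bypass_le) hlen
    by_cases hx : ∃ v ∈ q.support, (v ≠ a ∧ v ≠ b) ∧ (v ∈ A ∨ v ∈ B)
    · obtain ⟨v, hv, ⟨hva, hvb⟩, hAB⟩ := hx
      have hs := q.take_spec hv
      have hlen2 : (q.takeUntil v hv).length + (q.dropUntil v hv).length = q.length := by
        rw [← SimpleGraph.Walk.length_append, hs]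
      rcases hAB with hA | hB
      · have htk : (q.takeUntil v hv).length ≠ 0 := fun h0 =>
          hva (SimpleGraph.Walk.eq_of_length_eq_zero h0).symm
        obtain ⟨p, hp⟩ := ih (q.dropUntil v hv).length (by omega) v b hA hb
          (q.dropUntil v hv) le_rfl
        exact ⟨p, fun e he => hqe (q.edges_dropUntil_subset hv (hp e he))⟩
      · have htk : (q.dropUntil v hv).length ≠ 0 := fun h0 =>
          hvb (SimpleGraph.Walk.eq_of_length_eq_zero h0)
        obtain ⟨p, hp⟩ := ih (q.takeUntil v hv).length (by omega) a v ha hB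
          (q.takeUntil v hv) le_rfl
        exact ⟨p, fun e he => hqe (q.edges_takeUntil_subset hv (hp e he))⟩
    · push_neg at hx
      refine ⟨⟨a, b, q, hqp, ha, hb, fun v hv hva hvb => ?_⟩, fun e he => hqe he⟩
      exact hx v hv ⟨hva, hvb⟩


theorem walk_stay {H : SimpleGraph V} {Z : Set V}
    (hcl : ∀ u v : V, u ∈ Z → H.Adj u v → v ∈ Z) :
    ∀ {x y : V}, H.Walk x y → x ∈ Z → y ∈ Z := by
  intro x y w
  induction w with
  | nil => exact id
  | cons h w ih => exact fun hx => ih (hcl _ _ hx h)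

theorem value_shift_add {D D' : Finset (V × V)} {a b : V} (ha : a ∈ A) (hb : b ∉ A)
    (h : ∀ v, g D' v = g D v + (if a = v then 1 else 0) - (if b = v then 1 else 0)) :
    value A D' = value A D + 1 := by
  unfold value
  calc ∑ v ∈ Finset.univ.filter (fun v => v ∈ A), g D' v
      = ∑ v ∈ Finset.univ.filter (fun v => v ∈ A),
          (g D v + (if a = v then (1:ℤ) else 0) - (if b = v then (1:ℤ) else 0)) :=
        Finset.sum_congr rfl (fun v _ => h v)
    _ = value A D + 1 := by
        rw [Finset.sum_sub_distrib, Finset.sum_add_distrib, Finset.sum_ite_eq,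
          Finset.sum_ite_eq, if_pos (by simpa using ha), if_neg (by simpa using hb)]
        unfold value; ring

/-- If the flow has positive value, there is a path from `A` to `B` in the arc digraph. -/
theorem exists_rtg_of_value_pos {D : Finset (V × V)} (hflow : IsFlow G A B D)
    (hval : 0 < value A D) :
    ∃ a ∈ A, ∃ b ∈ B, Relation.ReflTransGen (fun u v => (u, v) ∈ D) a b := by
  by_contra hc
  push_neg at hc
  set Z : Set V := {v | ∃ a ∈ A, Relation.ReflTransGen (fun u v => (u, v) ∈ D) a v} with hZ
  have hAZ : ∀ a ∈ A, a ∈ Z := fun a ha => ⟨a, ha, Relation.ReflTransGen.refl⟩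
  have hBZ : ∀ b ∈ B, b ∉ Z := fun b hb hbZ => by
    obtain ⟨a, ha, hr⟩ := hbZ
    exact hc a ha b hb hr
  have hcl : ∀ p : V × V, p ∈ D → p.1 ∈ Z → p.2 ∈ Z := by
    rintro ⟨u, v⟩ hp ⟨a, ha, hr⟩
    exact ⟨a, ha, hr.tail hp⟩
  set Zf := Finset.univ.filter (fun v => v ∈ Z) with hZf
  have hsum : ∑ v ∈ Zf, g D v = value A D := by
    refine (Finset.sum_subset ?_ ?_).symm
    · intro v hv
      simp only [hZf, Finset.mem_filter, Finset.mem_univ, true_and] at *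
      exact hAZ v hv
    · intro v hv hv'
      simp only [hZf, Finset.mem_filter, Finset.mem_univ, true_and] at hv hv'
      exact hflow.cons v hv' (fun hb => hBZ v hb hv)
  have hleave : D.filter (fun p => p.1 ∈ Zf ∧ p.2 ∉ Zf) = ∅ := by
    rw [Finset.filter_eq_empty_iff]
    rintro p hp ⟨h1, h2⟩
    simp only [hZf, Finset.mem_filter, Finset.mem_univ, true_and] at h1 h2
    exact h2 (hcl p hp h1)
  have := sum_g D Zf
  rw [hsum, hleave] at this
  simp only [Finset.card_empty, Nat.cast_zero, zero_sub] at this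
  have hent : (0:ℤ) ≤ ((D.filter (fun p => p.2 ∈ Zf ∧ p.1 ∉ Zf)).card : ℤ) := Nat.cast_nonneg _
  omega

/-- No residual augmenting path: the crossing edges form a small cut. -/
theorem cut_of_no_residual {D : Finset (V × V)} (hflow : IsFlow G A B D)
    (hres : ∀ a ∈ A, ∀ b ∈ B, ¬ Relation.ReflTransGen (Rd G D) a b) :
    ∃ X : Finset (Sym2 V), ↑X ⊆ G.edgeSet ∧ (X.card : ℤ) ≤ value A D ∧
      ∀ a ∈ A, ∀ b ∈ B, IsEmpty ((G.deleteEdges ↑X).Walk a b) := by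
  set Z : Set V := {v | ∃ a ∈ A, Relation.ReflTransGen (Rd G D) a v} with hZ
  have hAZ : ∀ a ∈ A, a ∈ Z := fun a ha => ⟨a, ha, Relation.ReflTransGen.refl⟩
  have hBZ : ∀ b ∈ B, b ∉ Z := fun b hb hbZ => by
    obtain ⟨a, ha, hr⟩ := hbZ
    exact hres a ha b hb hr
  have hcl : ∀ u v : V, u ∈ Z → Rd G D u v → v ∈ Z := by
    rintro u v ⟨a, ha, hr⟩ h
    exact ⟨a, ha, hr.tail h⟩
  set X := Finset.univ.filter
    (fun e : Sym2 V => e ∈ G.edgeSet ∧ ∃ u v : V, e = s(u, v) ∧ u ∈ Z ∧ v ∉ Z) with hX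
  have hXsub : ↑X ⊆ G.edgeSet := by
    intro e he
    simp only [hX, Finset.coe_filter, Set.mem_setOf_eq] at he
    exact he.2.1
  set Zf := Finset.univ.filter (fun v => v ∈ Z) with hZf
  have hmemZf : ∀ v : V, v ∈ Zf ↔ v ∈ Z := by
    intro v; simp [hZf]
  -- each crossing edge comes from a leaving arc
  have hcross : ∀ e ∈ X, ∃ p : V × V, p ∈ D.filter (fun p => p.1 ∈ Zf ∧ p.2 ∉ Zf) ∧
      s(p.1, p.2) = e := by
    intro e he
    simp only [hX, Finset.mem_filter, Finset.mem_univ, true_and] at he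
    obtain ⟨hee, u, v, rfl, huZ, hvZ⟩ := he
    have hadj : G.Adj u v := (G.mem_edgeSet).1 hee
    have hnr : ¬ Rd G D u v := fun h => hvZ (hcl u v huZ h)
    unfold Rd at hnr
    push_neg at hnr
    refine ⟨(u, v), Finset.mem_filter.2 ⟨hnr.1 hadj, ?_, ?_⟩, rfl⟩
    · exact (hmemZf u).2 huZ
    · exact fun h => hvZ ((hmemZf v).1 h)
  have hcard : (X.card : ℤ) ≤ ((D.filter (fun p => p.1 ∈ Zf ∧ p.2 ∉ Zf)).card : ℤ) := by
    have hsub : X ⊆ (D.filter (fun p => p.1 ∈ Zf ∧ p.2 ∉ Zf)).image (fun p => s(p.1, p.2)) := by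
      intro e he
      obtain ⟨p, hp, hpe⟩ := hcross e he
      exact Finset.mem_image.2 ⟨p, hp, hpe⟩
    exact_mod_cast (Finset.card_le_card hsub).trans Finset.card_image_le
  have hent : D.filter (fun p => p.2 ∈ Zf ∧ p.1 ∉ Zf) = ∅ := by
    rw [Finset.filter_eq_empty_iff]
    rintro p hp ⟨h1, h2⟩
    rw [hmemZf] at h1
    exact h2 ((hmemZf p.1).2 (hcl p.2 p.1 h1 (Or.inr (by simpa using hp))))
  have hsum : ∑ v ∈ Zf, g D v = value A D := by
    refine (Finset.sum_subset ?_ ?_).symm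
    · intro v hv
      simp only [hZf, Finset.mem_filter, Finset.mem_univ, true_and] at hv ⊢
      exact hAZ v hv
    · intro v hv hv'
      simp only [hZf, Finset.mem_filter, Finset.mem_univ, true_and] at hv hv'
      exact hflow.cons v hv' (fun hb => hBZ v hb hv)
  have hdc := sum_g D Zf
  rw [hsum, hent] at hdc
  simp only [Finset.card_empty, Nat.cast_zero, sub_zero] at hdc
  have hfin : (X.card : ℤ) ≤ value A D := by omega
  refine ⟨X, hXsub, hfin, ?_⟩
  intro a ha b hb
  refine ⟨fun w => ?_⟩
  have hstay : ∀ u v : V, u ∈ Z → (G.deleteEdges ↑X).Adj u v → v ∈ Z := by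
    intro u v huZ hadj
    rw [SimpleGraph.deleteEdges_adj] at hadj
    by_contra hvZ
    apply hadj.2
    rw [hX]
    simp only [Finset.coe_filter, Set.mem_setOf_eq]
    exact ⟨Finset.mem_univ _, (G.mem_edgeSet).2 hadj.1, u, v, rfl, huZ, hvZ⟩
  exact hBZ b hb (walk_stay hstay w (hAZ a ha))

/-- Augmenting a flow along a residual path. -/
theorem augment {D : Finset (V × V)} (hflow : IsFlow G A B D) (hAB : ∀ x ∈ A, x ∉ B)
    {a b : V} (ha : a ∈ A) (hb : b ∈ B) (h : Relation.ReflTransGen (Rd G D) a b) :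
    ∃ D', IsFlow G A B D' ∧ value A D' = value A D + 1 := by
  obtain ⟨l, hl⟩ := ArcPath.of_rtg h
  obtain ⟨l', hl', hnd⟩ := ArcPath.trim l.length l a le_rfl hl
  obtain ⟨D', h1, h2, h3⟩ := aug_core l' D a b hl' hnd hflow.adj hflow.anti
  refine ⟨D', ⟨h1, h2, fun v hvA hvB => ?_⟩, ?_⟩
  · have hav : ¬ (a = v) := fun h => hvA (h ▸ ha)
    have hbv : ¬ (b = v) := fun h => hvB (h ▸ hb)
    rw [h3 v, hflow.cons v hvA hvB, if_neg hav, if_neg hbv]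
    ring
  · exact value_shift_add ha (fun hbA => hAB b hbA hb) h3

/-- Flow decomposition: a flow of value at least `t` yields `t` edge-disjoint `A`–`B`
paths. -/
theorem flow_to_paths (hAB : ∀ x ∈ A, x ∉ B) :
    ∀ (t : ℕ) (D : Finset (V × V)), IsFlow G A B D → (t : ℤ) ≤ value A D →
    ∃ P : Fin t → ABPath G A B,
      (∀ i j, i ≠ j → ∀ e, e ∈ (P i).walk.edges → e ∉ (P j).walk.edges) ∧
      (∀ i, ∀ e ∈ (P i).walk.edges, ∃ p : V × V, p ∈ D ∧ s(p.1, p.2) = e) := by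
  intro t
  induction t with
  | zero => exact fun D _ _ => ⟨Fin.elim0, fun i => i.elim0, fun i => i.elim0⟩
  | succ t ih =>
      intro D hflow hval
      have hpos : 0 < value A D := by
        have : (0:ℤ) < ((t:ℤ) + 1) := by positivity
        push_cast at hval
        omega
      obtain ⟨a, ha, b, hb, hrtg⟩ := exists_rtg_of_value_pos hflow hpos
      obtain ⟨l, hl⟩ := ArcPath.of_rtg hrtg
      obtain ⟨l', hl', hnd⟩ := ArcPath.trim l.length l a le_rfl hl
      obtain ⟨D₂, w, hsub, hg, hcov⟩ := remove_core l' D a b hl' hnd hflow.adj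
      have hbA : b ∉ A := fun hbA => hAB b hbA hb
      have hflow₂ : IsFlow G A B D₂ := by
        refine ⟨fun p hp => hflow.adj p (hsub hp),
          fun p hp hp' => hflow.anti p (hsub hp) (hsub hp'),
          fun v hvA hvB => ?_⟩
        have hav : ¬ (a = v) := fun h => hvA (h ▸ ha)
        have hbv : ¬ (b = v) := fun h => hvB (h ▸ hb)
        rw [hg v, hflow.cons v hvA hvB, if_neg hav, if_neg hbv]
        ring
      have hvalD : value A D = value A D₂ + 1 := by
        refine value_shift_add ha hbA fun v => ?_
        rw [hg v]; ring
      have hval₂ : (t : ℤ) ≤ value A D₂ := by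
        push_cast at hval
        omega
      obtain ⟨P', hdisj, hcov'⟩ := ih D₂ hflow₂ hval₂
      obtain ⟨p₀, hp₀⟩ := extract w.length a b ha hb w le_rfl
      have key : ∀ (i : Fin t) (e : Sym2 V),
          e ∈ p₀.walk.edges → e ∈ (P' i).walk.edges → False := by
        intro i e he0 hei
        obtain ⟨α, hα1, hα2, hα3⟩ := hcov e (hp₀ e he0)
        obtain ⟨β, hβ1, hβ3⟩ := hcov' i e hei
        obtain ⟨α1, α2⟩ := α
        obtain ⟨β1, β2⟩ := β
        have heq : s(α1, α2) = s(β1, β2) := hα3.trans hβ3.symm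
        rcases Sym2.eq_iff.1 heq with ⟨rfl, rfl⟩ | ⟨rfl, rfl⟩
        · exact hα2 hβ1
        · exact hflow.anti _ hα1 (hsub hβ1)
      refine ⟨Fin.cons p₀ P', ?_, ?_⟩
      · intro i j hij e hei hej
        rcases Fin.eq_zero_or_eq_succ i with rfl | ⟨i', rfl⟩ <;>
          rcases Fin.eq_zero_or_eq_succ j with rfl | ⟨j', rfl⟩
        · exact hij rfl
        · rw [Fin.cons_zero] at hei
          rw [Fin.cons_succ] at hej
          exact key j' e hei hej
        · rw [Fin.cons_succ] at hei
          rw [Fin.cons_zero] at hej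
          exact key i' e hej hei
        · rw [Fin.cons_succ] at hei hej
          exact hdisj i' j' (fun h => hij (congrArg Fin.succ h)) e hei hej
      · intro i e he
        rcases Fin.eq_zero_or_eq_succ i with rfl | ⟨i', rfl⟩
        · rw [Fin.cons_zero] at he
          obtain ⟨α, hα1, _, hα3⟩ := hcov e (hp₀ e he)
          exact ⟨α, hα1, hα3⟩
        · rw [Fin.cons_succ] at he
          obtain ⟨β, hβ1, hβ3⟩ := hcov' i' e he
          exact ⟨β, hsub hβ1, hβ3⟩

/-- Main induction: either a flow of value `k`, or a cut of size `< k`. -/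
theorem flow_or_cut (hAB : ∀ x ∈ A, x ∉ B) (k : ℕ) :
    (∃ D, IsFlow G A B D ∧ (k : ℤ) ≤ value A D) ∨
    (∃ X : Finset (Sym2 V), ↑X ⊆ G.edgeSet ∧ X.card + 1 ≤ k ∧
      ∀ a ∈ A, ∀ b ∈ B, IsEmpty ((G.deleteEdges ↑X).Walk a b)) := by
  induction k with
  | zero =>
      left
      refine ⟨∅, ⟨by simp, by simp, fun v _ _ => by simp [g]⟩, ?_⟩
      simp [value, g]
  | succ k ih =>
      rcases ih with ⟨D, hD, hval⟩ | ⟨X, h1, h2, h3⟩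
      · by_cases hres : ∃ a ∈ A, ∃ b ∈ B, Relation.ReflTransGen (Rd G D) a b
        · obtain ⟨a, ha, b, hb, hr⟩ := hres
          obtain ⟨D', hD', hval'⟩ := augment hD hAB ha hb hr
          left
          exact ⟨D', hD', by push_cast; omega⟩
        · push_neg at hres
          obtain ⟨X, h1, h2, h3⟩ := cut_of_no_residual hD hres
          by_cases hk : ((k:ℤ) + 1) ≤ value A D
          · left; exact ⟨D, hD, by push_cast; omega⟩
          · right; exact ⟨X, h1, by push_cast at hval h2 hk ⊢; omega, h3⟩
      · right; exact ⟨X, h1, by omega, h3⟩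

end Flow

end MengerAux

/-- Menger's theorem, edge version: either there are `k` pairwise edge-disjoint
`A`–`B` paths, or at most `k-1` edges meet every `A`–`B` path. -/
theorem menger_edge {V : Type} [Fintype V] [DecidableEq V]
    (G : SimpleGraph V) (A B : Set V) (k : ℕ) :
    (∃ P : Fin k → ABPath G A B,
      ∀ i j, i ≠ j → ∀ e, e ∈ (P i).walk.edges → e ∉ (P j).walk.edges)
    ∨ (∃ X : Finset (Sym2 V), X.card ≤ k - 1 ∧ ↑X ⊆ G.edgeSet ∧
        ∀ p : ABPath G A B, ∃ e ∈ p.walk.edges, e ∈ X) := by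
  classical
  rcases Nat.eq_zero_or_pos k with rfl | hk
  · exact Or.inl ⟨Fin.elim0, fun i => i.elim0⟩
  by_cases hAB : ∃ x, x ∈ A ∧ x ∈ B
  · obtain ⟨x, hxA, hxB⟩ := hAB
    left
    refine ⟨fun _ => ⟨x, x, SimpleGraph.Walk.nil, SimpleGraph.Walk.IsPath.nil, hxA, hxB, ?_⟩, ?_⟩
    · intro v hv hva _
      exact absurd (by simpa using hv) hva
    · intro i j _ e he
      simp [SimpleGraph.Walk.edges_nil] at he
  · push_neg at hAB
    rcases MengerAux.flow_or_cut (G := G) (A := A) (B := B) hAB k with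
      ⟨D, hD, hval⟩ | ⟨X, h1, h2, h3⟩
    · obtain ⟨P, hdisj, _⟩ := MengerAux.flow_to_paths hAB k D hD hval
      exact Or.inl ⟨P, hdisj⟩
    · right
      refine ⟨X, by omega, h1, fun p => ?_⟩
      by_contra hc
      push_neg at hc
      have htr : ∀ e ∈ p.walk.edges, e ∈ (G.deleteEdges ↑X).edgeSet := by
        intro e he
        rw [SimpleGraph.edgeSet_deleteEdges]
        exact ⟨p.walk.edges_subset_edgeSet he, fun hx => hc e he (by simpa using hx)⟩
      exact (h3 p.a p.ha p.b p.hb).false (p.walk.transfer _ htr)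
end

section
/- Conversely, if a vertex v of a finite graph G cannot be separated from a vertex set S (with v ∉ S) by any set of at most 2 vertices avoiding v, then there is a 3-fan from v to S in G: three paths from v to S that are pairwise disjoint except in v. -/
set_option linter.unusedSectionVars false

namespace MengerAux
open SimpleGraph Walk

variable {α : Type} [DecidableEq α]

/-- `X` separates `A` from `B` in `G`: every `A`–`B` path meets `X`. -/
def Sep (G : SimpleGraph α) (A B X : Set α) : Prop :=
  ∀ ⦃a⦄, a ∈ A → ∀ ⦃b⦄, b ∈ B → ∀ p : G.Walk a b, p.IsPath → ∃ x ∈ X, x ∈ p.support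

lemma Sep.meets_walk {G : SimpleGraph α} {A B X : Set α} (hX : Sep G A B X) {a b : α}
    (ha : a ∈ A) (hb : b ∈ B) (w : G.Walk a b) : ∃ x ∈ X, x ∈ w.support := by
  obtain ⟨x, hx, hxs⟩ := hX ha hb w.bypass w.bypass_isPath
  exact ⟨x, hx, w.support_bypass_subset hxs⟩

/-- First hit of a set along a path. -/
lemma exists_firstHit {G : SimpleGraph α} {a b : α} (p : G.Walk a b) (hp : p.IsPath)
    (T : Set α) (hT : ∃ x ∈ T, x ∈ p.support) :
    ∃ (t : α) (q : G.Walk a t), t ∈ T ∧ q.IsPath ∧ (∀ x ∈ q.support, x ∈ p.support) ∧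
      (∀ e ∈ q.edges, e ∈ p.edges) ∧ (∀ x ∈ q.support, x ∈ T → x = t) := by
  induction p with
  | nil =>
    obtain ⟨x, hxT, hxs⟩ := hT
    simp only [support_nil, List.mem_singleton] at hxs
    subst hxs
    exact ⟨x, Walk.nil, hxT, IsPath.nil, by simp, by simp, by simp⟩
  | @cons u c w h p ih =>
    by_cases hu : u ∈ T
    · exact ⟨u, Walk.nil, hu, IsPath.nil, by simp, by simp, by simp⟩
    · have hp' : p.IsPath := hp.of_cons
      have hns : u ∉ p.support := ((Walk.cons_isPath_iff h p).mp hp).2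
      obtain ⟨x, hxT, hxs⟩ := hT
      have hxs' : x ∈ p.support := by
        rcases (by simpa using hxs : x = u ∨ x ∈ p.support) with rfl | hx
        · exact absurd hxT hu
        · exact hx
      obtain ⟨t, q, htT, hq, hsub, hedge, honly⟩ := ih hp' ⟨x, hxT, hxs'⟩
      refine ⟨t, Walk.cons h q, htT, ?_, ?_, ?_, ?_⟩
      · exact (Walk.cons_isPath_iff h q).mpr ⟨hq, fun hc => hns (hsub _ hc)⟩
      · intro z hz
        rcases (by simpa using hz : z = u ∨ z ∈ q.support) with rfl | hz'
        · simp
        · simp [hsub _ hz']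
      · intro e he
        rcases (by simpa using he : e = s(u, c) ∨ e ∈ q.edges) with rfl | he'
        · simp
        · simp [hedge _ he']
      · intro z hz hzT
        rcases (by simpa using hz : z = u ∨ z ∈ q.support) with rfl | hz'
        · exact absurd hzT hu
        · exact honly z hz' hzT

/-- Last hit of a set along a path. -/
lemma exists_lastHit {G : SimpleGraph α} {a b : α} (p : G.Walk a b) (hp : p.IsPath)
    (T : Set α) (hT : ∃ x ∈ T, x ∈ p.support) :
    ∃ (t : α) (q : G.Walk t b), t ∈ T ∧ q.IsPath ∧ (∀ x ∈ q.support, x ∈ p.support) ∧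
      (∀ e ∈ q.edges, e ∈ p.edges) ∧ (∀ x ∈ q.support, x ∈ T → x = t) := by
  obtain ⟨t, q, htT, hq, hsub, hedge, honly⟩ := exists_firstHit p.reverse hp.reverse T
    (by obtain ⟨x, h1, h2⟩ := hT; exact ⟨x, h1, by simpa using h2⟩)
  refine ⟨t, q.reverse, htT, hq.reverse, ?_, ?_, ?_⟩
  · intro z hz
    have := hsub z (by simpa using hz)
    simpa using this
  · intro e he
    have := hedge e (by simpa using he)
    simpa using this
  · intro z hz hzT
    exact honly z (by simpa using hz) hzT

lemma end_not_mem_takeUntil {G : SimpleGraph α} {a b u : α} {p : G.Walk a b}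
    (hp : p.IsPath) (hu : u ∈ p.support) (hne : u ≠ b) :
    b ∉ (p.takeUntil u hu).support := by
  intro hbmem
  have hnd := hp.support_nodup
  rw [← p.take_spec hu, support_append, List.nodup_append] at hnd
  have hb2 : b ∈ (p.dropUntil u hu).support.tail := by
    have := (p.dropUntil u hu).end_mem_support
    rw [support_eq_cons (p.dropUntil u hu), List.mem_cons] at this
    rcases this with h | h
    · exact absurd h.symm hne
    · exact h
  exact hnd.2.2 _ hbmem _ hb2 rfl

lemma start_not_mem_dropUntil {G : SimpleGraph α} {a b u : α} {p : G.Walk a b}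
    (hp : p.IsPath) (hu : u ∈ p.support) (hne : u ≠ a) :
    a ∉ (p.dropUntil u hu).support := by
  intro hamem
  have hnd := hp.support_nodup
  rw [← p.take_spec hu, support_append, List.nodup_append] at hnd
  have ha2 : a ∈ (p.dropUntil u hu).support.tail := by
    rw [support_eq_cons (p.dropUntil u hu), List.mem_cons] at hamem
    rcases hamem with h | h
    · exact absurd h.symm hne
    · exact h
  exact hnd.2.2 _ (p.takeUntil u hu).start_mem_support _ ha2 rfl

lemma isPath_append {G : SimpleGraph α} {a m b : α} {p : G.Walk a m} {q : G.Walk m b}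
    (hp : p.IsPath) (hq : q.IsPath) (h : ∀ x ∈ p.support, x ∈ q.support → x = m) :
    (p.append q).IsPath := by
  rw [isPath_def, support_append, List.nodup_append]
  have hqnd := hq.support_nodup
  rw [support_eq_cons q] at hqnd
  refine ⟨hp.support_nodup, hqnd.of_cons, ?_⟩
  intro z hz1 z' hz2 hzz; subst hzz
  have hz2' : z ∈ q.support := by
    rw [support_eq_cons q]; exact List.mem_cons_of_mem _ hz2
  have := h z hz1 hz2'
  subst this
  exact (List.nodup_cons.mp hqnd).1 hz2

lemma mem_support_of_append {G : SimpleGraph α} {a m b : α} {p : G.Walk a m} {q : G.Walk m b}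
    {z : α} (h : z ∈ (p.append q).support) : z ∈ p.support ∨ z ∈ q.support := by
  rw [support_append] at h
  rcases List.mem_append.mp h with h | h
  · exact Or.inl h
  · exact Or.inr (List.mem_of_mem_tail h)

/-- Three pairwise-disjoint `A`–`B` paths in `G`. -/
structure Triple (G : SimpleGraph α) (A B : Set α) : Type where
  P : Fin 3 → Σ (a : α) (b : α), G.Walk a b
  ha : ∀ i, (P i).1 ∈ A
  hb : ∀ i, (P i).2.1 ∈ B
  hp : ∀ i, (P i).2.2.IsPath
  disj : ∀ i j, i ≠ j → ∀ z, z ∈ (P i).2.2.support → z ∈ (P j).2.2.support → False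

def Triple.mk3 {G : SimpleGraph α} {A B : Set α} (t1 t2 t3 : Σ (a : α) (b : α), G.Walk a b)
    (ha1 : t1.1 ∈ A) (ha2 : t2.1 ∈ A) (ha3 : t3.1 ∈ A)
    (hb1 : t1.2.1 ∈ B) (hb2 : t2.2.1 ∈ B) (hb3 : t3.2.1 ∈ B)
    (hp1 : t1.2.2.IsPath) (hp2 : t2.2.2.IsPath) (hp3 : t3.2.2.IsPath)
    (d12 : ∀ z, z ∈ t1.2.2.support → z ∈ t2.2.2.support → False)
    (d13 : ∀ z, z ∈ t1.2.2.support → z ∈ t3.2.2.support → False)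
    (d23 : ∀ z, z ∈ t2.2.2.support → z ∈ t3.2.2.support → False) : Triple G A B where
  P := fun i => match i with | ⟨0, _⟩ => t1 | ⟨1, _⟩ => t2 | ⟨2, _⟩ => t3
  ha := fun i => match i with | ⟨0, _⟩ => ha1 | ⟨1, _⟩ => ha2 | ⟨2, _⟩ => ha3
  hb := fun i => match i with | ⟨0, _⟩ => hb1 | ⟨1, _⟩ => hb2 | ⟨2, _⟩ => hb3
  hp := fun i => match i with | ⟨0, _⟩ => hp1 | ⟨1, _⟩ => hp2 | ⟨2, _⟩ => hp3
  disj := fun i j hij => match i, j with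
    | ⟨0, _⟩, ⟨0, _⟩ => absurd rfl (by exact_mod_cast hij)
    | ⟨0, _⟩, ⟨1, _⟩ => d12
    | ⟨0, _⟩, ⟨2, _⟩ => d13
    | ⟨1, _⟩, ⟨0, _⟩ => fun z h1 h2 => d12 z h2 h1
    | ⟨1, _⟩, ⟨1, _⟩ => absurd rfl (by exact_mod_cast hij)
    | ⟨1, _⟩, ⟨2, _⟩ => d23
    | ⟨2, _⟩, ⟨0, _⟩ => fun z h1 h2 => d13 z h2 h1
    | ⟨2, _⟩, ⟨1, _⟩ => fun z h1 h2 => d23 z h2 h1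
    | ⟨2, _⟩, ⟨2, _⟩ => absurd rfl (by exact_mod_cast hij)

/-- Transfer a triple along a subgraph relation. -/
def Triple.liftLe {G G' : SimpleGraph α} (hle : G' ≤ G) {A B : Set α} (T : Triple G' A B) :
    Triple G A B where
  P := fun i => ⟨(T.P i).1, (T.P i).2.1,
    (T.P i).2.2.transfer G (fun e he => edgeSet_mono hle ((T.P i).2.2.edges_subset_edgeSet he))⟩
  ha := T.ha
  hb := T.hb
  hp := fun i => (T.hp i).transfer _
  disj := fun i j hij z h1 h2 => T.disj i j hij z (by simpa using h1) (by simpa using h2)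

lemma adj_end_of_not_nil {G : SimpleGraph α} {a b : α} (p : G.Walk a b) (h : ¬ p.Nil) :
    ∃ c, G.Adj c b := by
  induction p with
  | nil => simp at h
  | cons h' p' ih =>
    cases p' with
    | nil => exact ⟨_, h'⟩
    | cons h'' p'' => exact ih Walk.not_nil_cons

theorem menger3 [Fintype α] (n : ℕ) : ∀ G : SimpleGraph α, G.edgeSet.ncard = n →
    ∀ A B : Set α, (∀ X : Set α, Sep G A B X → 3 ≤ X.ncard) → Nonempty (Triple G A B) := by
  induction n using Nat.strong_induction_on with
  | _ n ih =>
  intro G hn A B hsep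
  by_cases hEB : ∃ x y, G.Adj x y ∧ y ∈ B
  · -- main case: there is an edge ending in B
    obtain ⟨x, y, hxy, hyB⟩ := hEB
    have hxyne : x ≠ y := hxy.ne
    set G' : SimpleGraph α := G.deleteEdges {s(x, y)} with hG'def
    have hle : G' ≤ G := sdiff_le
    have heG : s(x, y) ∈ G.edgeSet := hxy
    have hlt : G'.edgeSet.ncard < n := by
      rw [← hn]
      apply Set.ncard_lt_ncard _ (Set.toFinite _)
      rw [hG'def, edgeSet_deleteEdges]
      exact ⟨Set.diff_subset, fun hsub => ((hsub heG).2 rfl)⟩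
    by_cases hsmall : ∃ X : Set α, Sep G' A B X ∧ X.ncard ≤ 2
    · obtain ⟨P₀, hP₀, hP₀c⟩ := hsmall
      -- both insert x P₀ and insert y P₀ separate A from B in G
      have hsepBx : Sep G A B (insert x P₀) := by
        intro a ha b hb p hp
        by_cases hep : s(x, y) ∈ p.edges
        · exact ⟨x, Set.mem_insert _ _, p.fst_mem_support_of_mem_edges hep⟩
        · obtain ⟨z, hz, hzs⟩ := hP₀ ha hb (p.toDeleteEdge _ hep) (hp.transfer _)
          exact ⟨z, Set.mem_insert_of_mem _ hz, by have h := hzs; erw [Walk.support_transfer] at h; exact h⟩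
      have hsepBy : Sep G A B (insert y P₀) := by
        intro a ha b hb p hp
        by_cases hep : s(x, y) ∈ p.edges
        · exact ⟨y, Set.mem_insert _ _, p.snd_mem_support_of_mem_edges hep⟩
        · obtain ⟨z, hz, hzs⟩ := hP₀ ha hb (p.toDeleteEdge _ hep) (hp.transfer _)
          exact ⟨z, Set.mem_insert_of_mem _ hz, by have h := hzs; erw [Walk.support_transfer] at h; exact h⟩
      have h3x := hsep _ hsepBx
      have h3y := hsep _ hsepBy
      have hxP : x ∉ P₀ := fun hx => by
        rw [Set.insert_eq_self.mpr hx] at h3x; omega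
      have hyP : y ∉ P₀ := fun hy => by
        rw [Set.insert_eq_self.mpr hy] at h3y; omega
      have h2 : P₀.ncard = 2 := by
        have := Set.ncard_insert_le x P₀; omega
      obtain ⟨p₁, p₂, hp12, rfl⟩ := Set.ncard_eq_two.mp h2
      have hxp1 : x ≠ p₁ := fun h => hxP (by simp [h])
      have hxp2 : x ≠ p₂ := fun h => hxP (by simp [h])
      have hyp1 : y ≠ p₁ := fun h => hyP (by simp [h])
      have hyp2 : y ≠ p₂ := fun h => hyP (by simp [h])
      -- hypothesis for the A-side recursion
      have hsep1 : ∀ Z : Set α, Sep G' A (insert x {p₁, p₂}) Z → 3 ≤ Z.ncard := by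
        intro Z hZ
        apply hsep
        intro a ha b hb W hW
        obtain ⟨b', W', hb'B, hW'p, hW'sub, hW'e, hW'only⟩ :=
          exists_firstHit W hW B ⟨b, hb, W.end_mem_support⟩
        by_cases hew : s(x, y) ∈ W'.edges
        · have hxW' : x ∈ W'.support := W'.fst_mem_support_of_mem_edges hew
          have hyW' : y ∈ W'.support := W'.snd_mem_support_of_mem_edges hew
          have hyb' : y = b' := hW'only y hyW' hyB
          subst hyb'
          have hnoty : y ∉ (W'.takeUntil x hxW').support :=
            end_not_mem_takeUntil hW'p hxW' hxyne
          have hee : s(x, y) ∉ (W'.takeUntil x hxW').edges := fun hc =>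
            hnoty ((W'.takeUntil x hxW').snd_mem_support_of_mem_edges hc)
          obtain ⟨z, hzZ, hzs⟩ := hZ ha (Set.mem_insert x _)
            ((W'.takeUntil x hxW').toDeleteEdge _ hee) ((hW'p.takeUntil hxW').transfer _)
          refine ⟨z, hzZ, hW'sub _ (W'.support_takeUntil_subset hxW' ?_)⟩
          have h := hzs; erw [Walk.support_transfer] at h; exact h
        · obtain ⟨t, htP, hts⟩ := hP₀ ha hb'B (W'.toDeleteEdge _ hew) (hW'p.transfer _)
          obtain ⟨z, hzZ, hzs⟩ := hZ ha (Set.mem_insert_of_mem _ htP)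
            ((W'.toDeleteEdge _ hew).takeUntil t hts) ((hW'p.transfer _).takeUntil hts)
          refine ⟨z, hzZ, hW'sub _ ?_⟩
          have := (W'.toDeleteEdge _ hew).support_takeUntil_subset hts hzs
          simpa using this
      -- hypothesis for the B-side recursion
      have hsep2 : ∀ Z : Set α, Sep G' (insert y {p₁, p₂}) B Z → 3 ≤ Z.ncard := by
        intro Z hZ
        apply hsep
        intro a ha b hb W hW
        by_cases hew : s(x, y) ∈ W.edges
        · have hyW : y ∈ W.support := W.snd_mem_support_of_mem_edges hew
          obtain ⟨z, hzZ, hzs⟩ := hZ (Set.mem_insert y _) hyB (Walk.nil) IsPath.nil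
          have : z = y := by simpa using hzs
          subst this
          exact ⟨z, hzZ, hyW⟩
        · obtain ⟨t, htP, hts⟩ := hP₀ ha hb (W.toDeleteEdge _ hew) (hW.transfer _)
          obtain ⟨z, hzZ, hzs⟩ := hZ (Set.mem_insert_of_mem _ htP) hb
            ((W.toDeleteEdge _ hew).dropUntil t hts) ((hW.transfer _).dropUntil hts)
          refine ⟨z, hzZ, ?_⟩
          have := (W.toDeleteEdge _ hew).support_dropUntil_subset hts hzs
          simpa using this
      obtain ⟨T1⟩ := ih _ hlt G' rfl A (insert x {p₁, p₂}) hsep1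
      obtain ⟨T2⟩ := ih _ hlt G' rfl (insert y {p₁, p₂}) B hsep2
      -- truncate the A-side paths at their first hit of {x, p₁, p₂}
      have H1 : ∀ i, ∃ (t : α) (q : G'.Walk (T1.P i).1 t),
          t ∈ (insert x {p₁, p₂} : Set α) ∧ q.IsPath ∧
          (∀ z ∈ q.support, z ∈ (T1.P i).2.2.support) ∧
          (∀ e ∈ q.edges, e ∈ (T1.P i).2.2.edges) ∧
          (∀ z ∈ q.support, z ∈ (insert x {p₁, p₂} : Set α) → z = t) := fun i =>
        exists_firstHit _ (T1.hp i) _ ⟨(T1.P i).2.1, T1.hb i, Walk.end_mem_support _⟩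
      choose s q hsB hq hqsub hqe hqonly using H1
      -- truncate the B-side paths at their last hit of {y, p₁, p₂}
      have H2 : ∀ j, ∃ (t : α) (r : G'.Walk t (T2.P j).2.1),
          t ∈ (insert y {p₁, p₂} : Set α) ∧ r.IsPath ∧
          (∀ z ∈ r.support, z ∈ (T2.P j).2.2.support) ∧
          (∀ e ∈ r.edges, e ∈ (T2.P j).2.2.edges) ∧
          (∀ z ∈ r.support, z ∈ (insert y {p₁, p₂} : Set α) → z = t) := fun j =>
        exists_lastHit _ (T2.hp j) _ ⟨(T2.P j).1, T2.ha j, Walk.start_mem_support _⟩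
      choose t r htB hr hrsub hre hronly using H2
      have hsend : ∀ i, s i ∈ (q i).support := fun i => Walk.end_mem_support _
      have htstart : ∀ j, t j ∈ (r j).support := fun j => Walk.start_mem_support _
      have hsinj : Function.Injective s := by
        intro i j hij
        by_contra hne
        exact T1.disj i j hne (s i) (hqsub i _ (hsend i)) (hqsub j _ (by rw [hij]; exact hsend j))
      have htinj : Function.Injective t := by
        intro i j hij
        by_contra hne
        exact T2.disj i j hne (t i) (hrsub i _ (htstart i)) (hrsub j _ (by rw [hij]; exact htstart j))
      -- the endpoints cover {x, p₁, p₂} resp. {y, p₁, p₂}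
      have hscover : ∀ c ∈ ({x, p₁, p₂} : Finset α), ∃ i, s i = c := by
        intro c hc
        have himage : Finset.image s Finset.univ = {x, p₁, p₂} := by
          apply Finset.eq_of_subset_of_card_le
          · intro z hz
            obtain ⟨i, _, rfl⟩ := Finset.mem_image.mp hz
            have := hsB i
            simp only [Set.mem_insert_iff, Set.mem_singleton_iff] at this
            simp only [Finset.mem_insert, Finset.mem_singleton]
            tauto
          · have h1 : ({x, p₁, p₂} : Finset α).card ≤ 3 := by
              apply le_trans (Finset.card_insert_le _ _)
              have := Finset.card_insert_le p₁ ({p₂} : Finset α)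
              simp at this ⊢; omega
            rw [Finset.card_image_of_injective _ hsinj, Finset.card_univ]
            simpa using h1
        rw [← himage] at hc
        obtain ⟨i, _, hi⟩ := Finset.mem_image.mp hc
        exact ⟨i, hi⟩
      have htcover : ∀ c ∈ ({y, p₁, p₂} : Finset α), ∃ j, t j = c := by
        intro c hc
        have himage : Finset.image t Finset.univ = {y, p₁, p₂} := by
          apply Finset.eq_of_subset_of_card_le
          · intro z hz
            obtain ⟨i, _, rfl⟩ := Finset.mem_image.mp hz
            have := htB i
            simp only [Set.mem_insert_iff, Set.mem_singleton_iff] at this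
            simp only [Finset.mem_insert, Finset.mem_singleton]
            tauto
          · have h1 : ({y, p₁, p₂} : Finset α).card ≤ 3 := by
              apply le_trans (Finset.card_insert_le _ _)
              have := Finset.card_insert_le p₁ ({p₂} : Finset α)
              simp at this ⊢; omega
            rw [Finset.card_image_of_injective _ htinj, Finset.card_univ]
            simpa using h1
        rw [← himage] at hc
        obtain ⟨j, _, hj⟩ := Finset.mem_image.mp hc
        exact ⟨j, hj⟩
      -- the key disjointness claim
      have cross : ∀ i j z, z ∈ (q i).support → z ∈ (r j).support → z = s i ∧ z = t j := by
        intro i j z hz1 hz2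
        obtain ⟨w, hwP, hws⟩ := Sep.meets_walk hP₀ (T1.ha i) (T2.hb j)
          (((q i).takeUntil z hz1).append ((r j).dropUntil z hz2))
        rcases mem_support_of_append hws with hw | hw
        · have hwq : w ∈ (q i).support := (q i).support_takeUntil_subset hz1 hw
          have hwsi : w = s i := hqonly i w hwq (Set.mem_insert_of_mem _ hwP)
          have hzsi : z = s i := by
            by_contra hne
            exact end_not_mem_takeUntil (hq i) hz1 hne (hwsi ▸ hw)
          have hzw : z = w := hzsi.trans hwsi.symm
          have hzt : z = t j := hronly j z hz2
            (Set.mem_insert_of_mem _ (by rw [hzw]; exact hwP))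
          exact ⟨hzsi, hzt⟩
        · have hwr : w ∈ (r j).support := (r j).support_dropUntil_subset hz2 hw
          have hwtj : w = t j := hronly j w hwr (Set.mem_insert_of_mem _ hwP)
          have hztj : z = t j := by
            by_contra hne
            exact start_not_mem_dropUntil (hr j) hz2 hne (hwtj ▸ hw)
          have hzw : z = w := hztj.trans hwtj.symm
          have hzs : z = s i := hqonly i z hz1
            (Set.mem_insert_of_mem _ (by rw [hzw]; exact hwP))
          exact ⟨hzs, hztj⟩
      -- pick the indices
      obtain ⟨i₁, hi₁⟩ := hscover x (by simp)
      obtain ⟨i₂, hi₂⟩ := hscover p₁ (by simp)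
      obtain ⟨i₃, hi₃⟩ := hscover p₂ (by simp)
      obtain ⟨j₁, hj₁⟩ := htcover y (by simp)
      obtain ⟨j₂, hj₂⟩ := htcover p₁ (by simp)
      obtain ⟨j₃, hj₃⟩ := htcover p₂ (by simp)
      have hi₁₂ : i₁ ≠ i₂ := fun h => hxp1 (by rw [← hi₁, h, hi₂])
      have hi₁₃ : i₁ ≠ i₃ := fun h => hxp2 (by rw [← hi₁, h, hi₃])
      have hi₂₃ : i₂ ≠ i₃ := fun h => hp12 (by rw [← hi₂, h, hi₃])
      have hj₁₂ : j₁ ≠ j₂ := fun h => hyp1 (by rw [← hj₁, h, hj₂])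
      have hj₁₃ : j₁ ≠ j₃ := fun h => hyp2 (by rw [← hj₁, h, hj₃])
      have hj₂₃ : j₂ ≠ j₃ := fun h => hp12 (by rw [← hj₂, h, hj₃])
      -- transfer to G and glue
      have hup : ∀ {c d : α} (w : G'.Walk c d), ∀ e ∈ w.edges, e ∈ G.edgeSet :=
        fun w e he => edgeSet_mono hle (w.edges_subset_edgeSet he)
      let QX : G.Walk (T1.P i₁).1 x := ((q i₁).copy rfl hi₁).transfer G (by
        intro e he; exact hup _ e (by simpa using he))
      let Q1 : G.Walk (T1.P i₂).1 p₁ := ((q i₂).copy rfl hi₂).transfer G (by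
        intro e he; exact hup _ e (by simpa using he))
      let Q2 : G.Walk (T1.P i₃).1 p₂ := ((q i₃).copy rfl hi₃).transfer G (by
        intro e he; exact hup _ e (by simpa using he))
      let RY : G.Walk y (T2.P j₁).2.1 := ((r j₁).copy hj₁ rfl).transfer G (by
        intro e he; exact hup _ e (by simpa using he))
      let R1 : G.Walk p₁ (T2.P j₂).2.1 := ((r j₂).copy hj₂ rfl).transfer G (by
        intro e he; exact hup _ e (by simpa using he))
      let R2 : G.Walk p₂ (T2.P j₃).2.1 := ((r j₃).copy hj₃ rfl).transfer G (by
        intro e he; exact hup _ e (by simpa using he))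
      have hQXsup : QX.support = (q i₁).support := by simp [QX]
      have hQ1sup : Q1.support = (q i₂).support := by simp [Q1]
      have hQ2sup : Q2.support = (q i₃).support := by simp [Q2]
      have hRYsup : RY.support = (r j₁).support := by simp [RY]
      have hR1sup : R1.support = (r j₂).support := by simp [R1]
      have hR2sup : R2.support = (r j₃).support := by simp [R2]
      have hQXp : QX.IsPath := by
        apply IsPath.transfer; rw [Walk.isPath_copy]; exact hq i₁
      have hQ1p : Q1.IsPath := by
        apply IsPath.transfer; rw [Walk.isPath_copy]; exact hq i₂
      have hQ2p : Q2.IsPath := by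
        apply IsPath.transfer; rw [Walk.isPath_copy]; exact hq i₃
      have hRYp : RY.IsPath := by
        apply IsPath.transfer; rw [Walk.isPath_copy]; exact hr j₁
      have hR1p : R1.IsPath := by
        apply IsPath.transfer; rw [Walk.isPath_copy]; exact hr j₂
      have hR2p : R2.IsPath := by
        apply IsPath.transfer; rw [Walk.isPath_copy]; exact hr j₃
      let W1 : G.Walk (T1.P i₂).1 (T2.P j₂).2.1 := Q1.append R1
      let W2 : G.Walk (T1.P i₃).1 (T2.P j₃).2.1 := Q2.append R2
      let W3 : G.Walk (T1.P i₁).1 (T2.P j₁).2.1 := QX.append (Walk.cons hxy RY)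
      have hmemW1 : ∀ z, z ∈ W1.support → z ∈ (q i₂).support ∨ z ∈ (r j₂).support := by
        intro z hz
        rcases mem_support_of_append hz with h | h
        · exact Or.inl (hQ1sup ▸ h)
        · exact Or.inr (hR1sup ▸ h)
      have hmemW2 : ∀ z, z ∈ W2.support → z ∈ (q i₃).support ∨ z ∈ (r j₃).support := by
        intro z hz
        rcases mem_support_of_append hz with h | h
        · exact Or.inl (hQ2sup ▸ h)
        · exact Or.inr (hR2sup ▸ h)
      have hmemW3 : ∀ z, z ∈ W3.support → z ∈ (q i₁).support ∨ z ∈ (r j₁).support := by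
        intro z hz
        rcases mem_support_of_append hz with h | h
        · exact Or.inl (hQXsup ▸ h)
        · rw [Walk.support_cons] at h
          rcases List.mem_cons.mp h with rfl | h'
          · exact Or.inl (hi₁ ▸ hsend i₁)
          · exact Or.inr (hRYsup ▸ h')
      have hW1p : W1.IsPath := by
        apply isPath_append hQ1p hR1p
        intro z h1 h2
        exact hi₂ ▸ (cross i₂ j₂ z (hQ1sup ▸ h1) (hR1sup ▸ h2)).1
      have hW2p : W2.IsPath := by
        apply isPath_append hQ2p hR2p
        intro z h1 h2
        exact hi₃ ▸ (cross i₃ j₃ z (hQ2sup ▸ h1) (hR2sup ▸ h2)).1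
      have hxnotRY : x ∉ RY.support := by
        intro hc
        have := cross i₁ j₁ x (hi₁ ▸ hsend i₁) (hRYsup ▸ hc)
        exact hxyne (this.2.trans hj₁)
      have hW3p : W3.IsPath := by
        apply isPath_append hQXp ((Walk.cons_isPath_iff _ _).mpr ⟨hRYp, hxnotRY⟩)
        intro z h1 h2
        rw [Walk.support_cons] at h2
        rcases List.mem_cons.mp h2 with rfl | h2'
        · rfl
        · exact hi₁ ▸ (cross i₁ j₁ z (hQXsup ▸ h1) (hRYsup ▸ h2')).1
      -- pairwise disjointness of W1 W2 W3
      have hd12 : ∀ z, z ∈ W1.support → z ∈ W2.support → False := by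
        intro z h1 h2
        rcases hmemW1 z h1 with hq1 | hr1 <;> rcases hmemW2 z h2 with hq2 | hr2
        · exact T1.disj i₂ i₃ hi₂₃ z (hqsub _ _ hq1) (hqsub _ _ hq2)
        · have := cross i₂ j₃ z hq1 hr2
          exact hp12 ((hi₂ ▸ this.1).symm.trans (hj₃ ▸ this.2))
        · have := cross i₃ j₂ z hq2 hr1
          exact hp12 ((hj₂ ▸ this.2).symm.trans (hi₃ ▸ this.1))
        · exact T2.disj j₂ j₃ hj₂₃ z (hrsub _ _ hr1) (hrsub _ _ hr2)
      have hd13 : ∀ z, z ∈ W1.support → z ∈ W3.support → False := by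
        intro z h1 h2
        rcases hmemW1 z h1 with hq1 | hr1 <;> rcases hmemW3 z h2 with hq2 | hr2
        · exact T1.disj i₂ i₁ hi₁₂.symm z (hqsub _ _ hq1) (hqsub _ _ hq2)
        · have := cross i₂ j₁ z hq1 hr2
          exact hyp1 ((hj₁ ▸ this.2).symm.trans (hi₂ ▸ this.1))
        · have := cross i₁ j₂ z hq2 hr1
          exact hxp1 ((hi₁ ▸ this.1).symm.trans (hj₂ ▸ this.2))
        · exact T2.disj j₂ j₁ hj₁₂.symm z (hrsub _ _ hr1) (hrsub _ _ hr2)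
      have hd23 : ∀ z, z ∈ W2.support → z ∈ W3.support → False := by
        intro z h1 h2
        rcases hmemW2 z h1 with hq1 | hr1 <;> rcases hmemW3 z h2 with hq2 | hr2
        · exact T1.disj i₃ i₁ hi₁₃.symm z (hqsub _ _ hq1) (hqsub _ _ hq2)
        · have := cross i₃ j₁ z hq1 hr2
          exact hyp2 ((hj₁ ▸ this.2).symm.trans (hi₃ ▸ this.1))
        · have := cross i₁ j₃ z hq2 hr1
          exact hxp2 ((hi₁ ▸ this.1).symm.trans (hj₃ ▸ this.2))
        · exact T2.disj j₃ j₁ hj₁₃.symm z (hrsub _ _ hr1) (hrsub _ _ hr2)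
      exact ⟨Triple.mk3 ⟨_, _, W1⟩ ⟨_, _, W2⟩ ⟨_, _, W3⟩
        (T1.ha i₂) (T1.ha i₃) (T1.ha i₁) (T2.hb j₂) (T2.hb j₃) (T2.hb j₁)
        hW1p hW2p hW3p hd12 hd13 hd23⟩
    · -- G' still has no small separator: recurse directly
      have hsep' : ∀ X : Set α, Sep G' A B X → 3 ≤ X.ncard := by
        intro X hX
        by_contra hc
        exact hsmall ⟨X, hX, by omega⟩
      obtain ⟨T⟩ := ih _ hlt G' rfl A B hsep'
      exact ⟨T.liftLe hle⟩
  · -- base case: no edge ends in B, so all A–B paths are trivial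
    push_neg at hEB
    have hsepAB : Sep G A B (A ∩ B) := by
      intro a ha b hb p hp
      cases p with
      | nil => exact ⟨a, ⟨ha, hb⟩, by simp⟩
      | cons h' p' =>
        obtain ⟨c, hc⟩ := adj_end_of_not_nil (Walk.cons h' p') Walk.not_nil_cons
        exact absurd hb (hEB c b hc)
    have h3 := hsep _ hsepAB
    obtain ⟨T', hTsub, hTcard⟩ := Set.exists_subset_card_eq (s := A ∩ B) h3
    obtain ⟨c₁, c₂, c₃, h12, h13, h23, rfl⟩ := Set.ncard_eq_three.mp hTcard
    have m1 := hTsub (show c₁ ∈ _ by simp)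
    have m2 := hTsub (show c₂ ∈ _ by simp)
    have m3 := hTsub (show c₃ ∈ _ by simp)
    exact ⟨Triple.mk3 ⟨c₁, c₁, Walk.nil⟩ ⟨c₂, c₂, Walk.nil⟩ ⟨c₃, c₃, Walk.nil⟩
      m1.1 m2.1 m3.1 m1.2 m2.2 m3.2 IsPath.nil IsPath.nil IsPath.nil
      (fun z h1 h2 => h12 (by simp at h1 h2; rw [← h1, h2]))
      (fun z h1 h2 => h13 (by simp at h1 h2; rw [← h1, h2]))
      (fun z h1 h2 => h23 (by simp at h1 h2; rw [← h1, h2]))⟩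

lemma not_mem_support_of_ne {G : SimpleGraph α} (v : α) (hG : ∀ a b, G.Adj a b → a ≠ v ∧ b ≠ v)
    {a b : α} (w : G.Walk a b) (ha : a ≠ v) : v ∉ w.support := by
  induction w with
  | nil => simpa using fun h => ha h.symm
  | cons h' p ih =>
    intro hc
    rw [Walk.support_cons, List.mem_cons] at hc
    rcases hc with hc | hc
    · exact ha hc.symm
    · exact ih ((hG _ _ h').2) hc

end MengerAux

/-- A `3`-fan from `v` to a set `S`: three nontrivial paths from `v` to `S`
that pairwise intersect only in their common first vertex `v`. -/
structure ThreeFan {α : Type} (G : SimpleGraph α) (v : α) (S : Set α) where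
  t : Fin 3 → α
  mem : ∀ i, t i ∈ S
  walk : ∀ i, G.Walk v (t i)
  isPath : ∀ i, (walk i).IsPath
  nontrivial : ∀ i, ¬ (walk i).Nil
  disj : ∀ i j, i ≠ j → ∀ x, x ∈ (walk i).support → x ∈ (walk j).support → x = v

/-- Fan version of Menger's theorem for `k = 3`: in a finite graph, if `v ∉ S`
and `v` cannot be separated from `S` by deleting at most two vertices distinct
from `v`, then there is a `3`-fan from `v` to `S`. -/
theorem not_separated_threeFan {α : Type} [Fintype α] (G : SimpleGraph α)
    (v : α) (S : Set α) (hvS : v ∉ S)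
    (h : ∀ X : Set α, v ∉ X → X.ncard ≤ 2 →
      ∃ w ∈ S, w ∉ X ∧ ∃ p : G.Walk v w, p.IsPath ∧ ∀ x ∈ p.support, x ∉ X) :
    Nonempty (ThreeFan G v S) := by
  classical
  open MengerAux in
  -- the graph `G` with the vertex `v` isolated
  set Gv : SimpleGraph α :=
    { Adj := fun a b => G.Adj a b ∧ a ≠ v ∧ b ≠ v
      symm := ⟨fun a b hab => ⟨hab.1.symm, hab.2.2, hab.2.1⟩⟩
      loopless := ⟨fun a hab => G.loopless.irrefl a hab.1⟩ } with hGvdef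
  have hGv : ∀ a b, Gv.Adj a b → a ≠ v ∧ b ≠ v := fun a b hab => hab.2
  set A : Set α := {u | G.Adj v u} with hAdef
  have hsep : ∀ X : Set α, MengerAux.Sep Gv A S X → 3 ≤ X.ncard := by
    intro X hX
    by_contra hc
    obtain ⟨w, hwS, hwX, p, hp, hav⟩ := h (X \ {v}) (by simp)
      (le_trans (Set.ncard_le_ncard Set.diff_subset (Set.toFinite _)) (by omega))
    have hvw : v ≠ w := fun hvw => hvS (hvw ▸ hwS)
    obtain ⟨c, hadj, q, rfl⟩ := SimpleGraph.Walk.exists_eq_cons_of_ne hvw p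
    rw [SimpleGraph.Walk.cons_isPath_iff] at hp
    have hqv : v ∉ q.support := hp.2
    have htrans : ∀ e ∈ q.edges, e ∈ Gv.edgeSet := by
      intro e he
      induction e with
      | _ c' d' =>
        have hc' : c' ∈ q.support := q.fst_mem_support_of_mem_edges he
        have hd' : d' ∈ q.support := q.snd_mem_support_of_mem_edges he
        exact ⟨q.edges_subset_edgeSet he,
          fun hh => hqv (hh ▸ hc'), fun hh => hqv (hh ▸ hd')⟩
    obtain ⟨z, hzX, hzs⟩ := hX (show c ∈ A from hadj) hwS (q.transfer Gv htrans)
      (hp.1.transfer _)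
    have hzq : z ∈ q.support := by simpa using hzs
    have hzv : z ≠ v := fun hzv => hqv (hzv ▸ hzq)
    exact hav z (by rw [SimpleGraph.Walk.support_cons]; exact List.mem_cons_of_mem _ hzq)
      ⟨hzX, hzv⟩
  obtain ⟨T⟩ := MengerAux.menger3 Gv.edgeSet.ncard Gv rfl A S hsep
  have hup : ∀ {c d : α} (w : Gv.Walk c d), ∀ e ∈ w.edges, e ∈ G.edgeSet := by
    intro c d w e he
    induction e with
    | _ c' d' => exact (w.edges_subset_edgeSet he).1
  have hAdj : ∀ i, G.Adj v (T.P i).1 := fun i => T.ha i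
  have hvnot : ∀ i, v ∉ (T.P i).2.2.support := fun i =>
    MengerAux.not_mem_support_of_ne v hGv _ (hAdj i).ne'
  let F : ∀ _ : Fin 3, Σ b : α, G.Walk v b := fun i =>
    ⟨(T.P i).2.1, SimpleGraph.Walk.cons (hAdj i) ((T.P i).2.2.transfer G (hup _))⟩
  refine ⟨⟨fun i => (F i).1, fun i => T.hb i, fun i => (F i).2, ?_, ?_, ?_⟩⟩
  · intro i
    rw [SimpleGraph.Walk.cons_isPath_iff]
    exact ⟨(T.hp i).transfer _, by simpa using hvnot i⟩
  · intro i
    exact SimpleGraph.Walk.not_nil_cons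
  · intro i j hij z hz1 hz2
    simp only [F, SimpleGraph.Walk.support_cons, List.mem_cons,
      SimpleGraph.Walk.support_transfer] at hz1 hz2
    rcases hz1 with rfl | hz1
    · rfl
    · rcases hz2 with rfl | hz2
      · rfl
      · exact (T.disj i j hij z hz1 hz2).elim
end

section
/- In an elementary wall of size m×n, there are exactly n+1 pairwise vertex-disjoint paths between the first row and the last ((m+1)-th) row, and no more: any set of pairwise disjoint first-row–last-row paths has size at most n+1. -/
/-- The `(m+1) × (2n+2)` grid with every second vertical edge removed (before
deleting degree-1 vertices): all horizontal edges, and the vertical edge between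
rows `i` and `i+1` in column `c` (0-based) precisely when `i` and `c` have the
same parity. -/
def wallFullRel (m n : ℕ) :
    (Fin (m + 1) × Fin (2 * n + 2)) → (Fin (m + 1) × Fin (2 * n + 2)) → Prop :=
  fun p q =>
    (p.1 = q.1 ∧ q.2.val = p.2.val + 1) ∨
    (p.2 = q.2 ∧ q.1.val = p.1.val + 1 ∧ p.1.val % 2 = p.2.val % 2)

/-- The elementary wall before removal of degree-1 vertices. -/
def wallFull (m n : ℕ) : SimpleGraph (Fin (m + 1) × Fin (2 * n + 2)) :=
  SimpleGraph.fromRel (wallFullRel m n)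

/-- The vertices deleted from the elementary wall: those of degree at most 1. -/
def wallBad (m n : ℕ) : Set (Fin (m + 1) × Fin (2 * n + 2)) :=
  {v | ((wallFull m n).neighborSet v).ncard ≤ 1}

/-- The vertex set of the elementary wall of size `m × n`. -/
abbrev WallVert (m n : ℕ) : Type := {v : Fin (m + 1) × Fin (2 * n + 2) // v ∉ wallBad m n}

/-- The elementary wall of size `m × n`: the `(m+1) × (2n+2)` grid with every
second vertical edge removed in an alternating pattern, and all vertices of
degree 1 deleted. -/
def elemWall (m n : ℕ) : SimpleGraph (WallVert m n) :=
  (wallFull m n).induce {v | v ∉ wallBad m n}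

/-- A path in the elementary wall of size `m × n` from the first row (grid row
`0`) to the last row (grid row `m`). -/
structure FirstLastRowPath (m n : ℕ) where
  s : WallVert m n
  t : WallVert m n
  walk : (elemWall m n).Walk s t
  isPath : walk.IsPath
  hs : s.val.1.val = 0
  ht : t.val.1.val = m

namespace WallAux

variable {m n : ℕ}

lemma adj_horiz (i : Fin (m+1)) (c c' : Fin (2*n+2)) (h : c'.val = c.val + 1) :
    (wallFull m n).Adj (i, c) (i, c') := by
  rw [wallFull, SimpleGraph.fromRel_adj]
  constructor
  · intro he
    have : c.val = c'.val := congrArg (fun p => p.2.val) he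
    omega
  · exact Or.inl (Or.inl ⟨rfl, h⟩)

lemma adj_vert (i i' : Fin (m+1)) (c : Fin (2*n+2)) (h : i'.val = i.val + 1)
    (hp : i.val % 2 = c.val % 2) : (wallFull m n).Adj (i, c) (i', c) := by
  rw [wallFull, SimpleGraph.fromRel_adj]
  constructor
  · intro he
    have : i.val = i'.val := congrArg (fun p => p.1.val) he
    omega
  · exact Or.inl (Or.inr ⟨rfl, h, hp⟩)

lemma not_bad {v a b : Fin (m+1) × Fin (2*n+2)} (ha : (wallFull m n).Adj v a)
    (hb : (wallFull m n).Adj v b) (hab : a ≠ b) : v ∉ wallBad m n := by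
  intro hv
  have h2 : 1 < ((wallFull m n).neighborSet v).ncard := by
    rw [Set.one_lt_ncard_iff (Set.toFinite _)]
    exact ⟨a, b, ha, hb, hab⟩
  simp only [wallBad, Set.mem_setOf_eq] at hv
  omega

lemma elemWall_adj {a b : WallVert m n} (h : (wallFull m n).Adj a.val b.val) :
    (elemWall m n).Adj a b := h

lemma ne_of_row {a b : Fin (m+1) × Fin (2*n+2)} (h : a.1.val ≠ b.1.val) : a ≠ b := by
  intro he; exact h (congrArg (fun p => p.1.val) he)

lemma exists_col_path (m n : ℕ) (hm : 1 ≤ m) (j : ℕ) (hj : j ≤ n) :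
    ∃ p : FirstLastRowPath m n, ∀ x ∈ p.walk.support,
      x.val.2.val = 2*j ∨ x.val.2.val = 2*j+1 := by
  have hc0 : 2*j < 2*n+2 := by omega
  have hc1 : 2*j+1 < 2*n+2 := by omega
  have h0m : 0 < m+1 := by omega
  have h1m : 1 < m+1 := by omega
  have sgood : ((⟨0, h0m⟩ : Fin (m+1)), (⟨2*j, hc0⟩ : Fin (2*n+2))) ∉ wallBad m n := by
    refine not_bad (a := (⟨0, h0m⟩, ⟨2*j+1, hc1⟩)) (b := (⟨1, h1m⟩, ⟨2*j, hc0⟩))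
      (adj_horiz _ _ _ rfl) (adj_vert _ _ _ rfl (show 0 % 2 = (2*j) % 2 by omega)) ?_
    exact fun he => by have := congrArg (fun p => p.1.val) he; simp at this
  refine Exists.elim ?_ (fun p hp => ⟨p, hp⟩)
  set s : WallVert m n := ⟨(⟨0, h0m⟩, ⟨2*j, hc0⟩), sgood⟩ with hs_def
  have key : ∀ i : ℕ, i ≤ m → ∃ (t : WallVert m n) (w : (elemWall m n).Walk s t),
      t.val.1.val = i ∧ (t.val.2.val = 2*j ∨ t.val.2.val = 2*j+1) ∧
      (i < m → t.val.2.val % 2 = i % 2) ∧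
      (∀ x ∈ w.support, x.val.2.val = 2*j ∨ x.val.2.val = 2*j+1) := by
    intro i
    induction i with
    | zero =>
      intro _
      refine ⟨s, SimpleGraph.Walk.nil, rfl, Or.inl rfl, fun _ => show (2*j) % 2 = 0 % 2 by omega, ?_⟩
      intro x hx
      simp only [SimpleGraph.Walk.support_nil, List.mem_singleton] at hx
      subst hx; exact Or.inl rfl
    | succ i ih =>
      intro hi1
      have hi : i < m := by omega
      obtain ⟨t, w, ht1, ht2, ht3, ht4⟩ := ih (le_of_lt hi)
      have hpar : t.val.2.val % 2 = i % 2 := ht3 hi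
      have hi1' : i + 1 < m + 1 := by omega
      rcases ht2 with h2 | h2
      · -- current column is 2j, so i is even
        have htval : t.val = (t.val.1, (⟨2*j, hc0⟩ : Fin (2*n+2))) := by
          have : t.val.2 = (⟨2*j, hc0⟩ : Fin (2*n+2)) := Fin.ext h2
          rw [← this]
        have hadjv : (wallFull m n).Adj t.val ((⟨i+1, hi1'⟩ : Fin (m+1)), (⟨2*j, hc0⟩ : Fin (2*n+2))) := by
          rw [htval]
          exact adj_vert _ _ _ (show i+1 = t.val.1.val + 1 by omega)
            (show t.val.1.val % 2 = 2*j % 2 by omega)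
        have t'good : ((⟨i+1, hi1'⟩ : Fin (m+1)), (⟨2*j, hc0⟩ : Fin (2*n+2))) ∉ wallBad m n := by
          refine not_bad (a := t.val) (b := (⟨i+1, hi1'⟩, ⟨2*j+1, hc1⟩)) hadjv.symm
            (adj_horiz _ _ _ rfl) (ne_of_row ?_)
          show t.val.1.val ≠ i + 1
          omega
        have hadj' : (elemWall m n).Adj t ⟨_, t'good⟩ := elemWall_adj hadjv
        rcases Nat.lt_or_ge (i+1) m with hlast | hlast
        · have hi2' : i + 2 < m + 1 := by omega
          have t''good : ((⟨i+1, hi1'⟩ : Fin (m+1)), (⟨2*j+1, hc1⟩ : Fin (2*n+2))) ∉ wallBad m n := by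
            refine not_bad (a := ((⟨i+1, hi1'⟩ : Fin (m+1)), (⟨2*j, hc0⟩ : Fin (2*n+2))))
              (b := ((⟨i+2, hi2'⟩ : Fin (m+1)), (⟨2*j+1, hc1⟩ : Fin (2*n+2))))
              (adj_horiz _ _ _ rfl).symm
              (adj_vert _ _ _ rfl (show (i+1) % 2 = (2*j+1) % 2 by omega)) (ne_of_row ?_)
            show i + 1 ≠ i + 2
            omega
          have hadj'' : (elemWall m n).Adj ⟨_, t'good⟩ ⟨_, t''good⟩ :=
            elemWall_adj (adj_horiz _ _ _ rfl)
          refine ⟨⟨_, t''good⟩, (w.concat hadj').concat hadj'', rfl, Or.inr rfl,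
            fun _ => show (2*j+1) % 2 = (i+1) % 2 by omega, ?_⟩
          intro x hx
          simp only [SimpleGraph.Walk.support_concat, List.concat_eq_append,
            List.mem_append, List.mem_singleton] at hx
          rcases hx with (hx | hx) | hx
          · exact ht4 x hx
          · subst hx; exact Or.inl rfl
          · subst hx; exact Or.inr rfl
        · refine ⟨⟨_, t'good⟩, w.concat hadj', rfl, Or.inl rfl,
            fun h => absurd h (by omega), ?_⟩
          intro x hx
          simp only [SimpleGraph.Walk.support_concat, List.concat_eq_append,
            List.mem_append, List.mem_singleton] at hx
          rcases hx with hx | hx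
          · exact ht4 x hx
          · subst hx; exact Or.inl rfl
      · -- current column is 2j+1, so i is odd
        have htval : t.val = (t.val.1, (⟨2*j+1, hc1⟩ : Fin (2*n+2))) := by
          have : t.val.2 = (⟨2*j+1, hc1⟩ : Fin (2*n+2)) := Fin.ext h2
          rw [← this]
        have hadjv : (wallFull m n).Adj t.val ((⟨i+1, hi1'⟩ : Fin (m+1)), (⟨2*j+1, hc1⟩ : Fin (2*n+2))) := by
          rw [htval]
          exact adj_vert _ _ _ (show i+1 = t.val.1.val + 1 by omega)
            (show t.val.1.val % 2 = (2*j+1) % 2 by omega)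
        have t'good : ((⟨i+1, hi1'⟩ : Fin (m+1)), (⟨2*j+1, hc1⟩ : Fin (2*n+2))) ∉ wallBad m n := by
          refine not_bad (a := t.val) (b := (⟨i+1, hi1'⟩, ⟨2*j, hc0⟩)) hadjv.symm
            (adj_horiz _ _ _ rfl).symm (ne_of_row ?_)
          show t.val.1.val ≠ i + 1
          omega
        have hadj' : (elemWall m n).Adj t ⟨_, t'good⟩ := elemWall_adj hadjv
        rcases Nat.lt_or_ge (i+1) m with hlast | hlast
        · have hi2' : i + 2 < m + 1 := by omega
          have t''good : ((⟨i+1, hi1'⟩ : Fin (m+1)), (⟨2*j, hc0⟩ : Fin (2*n+2))) ∉ wallBad m n := by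
            refine not_bad (a := ((⟨i+1, hi1'⟩ : Fin (m+1)), (⟨2*j+1, hc1⟩ : Fin (2*n+2))))
              (b := ((⟨i+2, hi2'⟩ : Fin (m+1)), (⟨2*j, hc0⟩ : Fin (2*n+2))))
              (adj_horiz _ _ _ rfl)
              (adj_vert _ _ _ rfl (show (i+1) % 2 = (2*j) % 2 by omega)) (ne_of_row ?_)
            show i + 1 ≠ i + 2
            omega
          have hadj'' : (elemWall m n).Adj ⟨_, t'good⟩ ⟨_, t''good⟩ :=
            elemWall_adj (adj_horiz _ _ _ rfl).symm
          refine ⟨⟨_, t''good⟩, (w.concat hadj').concat hadj'', rfl, Or.inl rfl,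
            fun _ => show (2*j) % 2 = (i+1) % 2 by omega, ?_⟩
          intro x hx
          simp only [SimpleGraph.Walk.support_concat, List.concat_eq_append,
            List.mem_append, List.mem_singleton] at hx
          rcases hx with (hx | hx) | hx
          · exact ht4 x hx
          · subst hx; exact Or.inr rfl
          · subst hx; exact Or.inl rfl
        · refine ⟨⟨_, t'good⟩, w.concat hadj', rfl, Or.inr rfl,
            fun h => absurd h (by omega), ?_⟩
          intro x hx
          simp only [SimpleGraph.Walk.support_concat, List.concat_eq_append,
            List.mem_append, List.mem_singleton] at hx
          rcases hx with hx | hx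
          · exact ht4 x hx
          · subst hx; exact Or.inr rfl
  obtain ⟨t, w, ht1, _, _, hsupp⟩ := key m le_rfl
  refine ⟨⟨s, t, w.bypass, w.bypass_isPath, rfl, ht1⟩, ?_⟩
  intro x hx
  exact hsupp x (w.support_bypass_subset hx)

end WallAux

namespace WallAux

lemma exists_top {m n : ℕ} (hm : 1 ≤ m) {s t : WallVert m n} (w : (elemWall m n).Walk s t)
    (hs : s.val.1.val = 0) (ht : t.val.1.val = m) :
    ∃ v ∈ w.support, v.val.1.val = 0 ∧ v.val.2.val % 2 = 0 := by
  induction w with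
  | nil => exact absurd (hs.symm.trans ht) (by omega)
  | @cons a b c h p ih =>
    by_cases hb : b.val.1.val = 0
    · obtain ⟨x, hx, hx0, hx2⟩ := ih hb ht
      exact ⟨x, by simp [SimpleGraph.Walk.support_cons, hx], hx0, hx2⟩
    · have h' : (wallFull m n).Adj a.val b.val := h
      rw [wallFull, SimpleGraph.fromRel_adj] at h'
      obtain ⟨-, hrel | hrel⟩ := h'
      · rcases hrel with ⟨hr, -⟩ | ⟨-, hrow, hparity⟩
        · exact absurd (hs ▸ congrArg Fin.val hr).symm hb
        · exact ⟨a, SimpleGraph.Walk.start_mem_support _, hs, by omega⟩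
      · rcases hrel with ⟨hr, -⟩ | ⟨-, hrow, -⟩
        · exact absurd ((congrArg Fin.val hr).trans hs) hb
        · omega

end WallAux

/-- In an elementary wall of size `m × n` (`m, n ≥ 1`) there are exactly `n + 1`
pairwise vertex-disjoint paths between the first and the last row: such a
family exists, and every

pairwise disjoint family has at most `n + 1` members. -/
theorem elemWall_firstLastRow_paths (m n : ℕ) (hm : 1 ≤ m) (hn : 1 ≤ n) :
    (∃ P : Fin (n + 1) → FirstLastRowPath m n,
      ∀ i j, i ≠ j → ∀ x, x ∈ (P i).walk.support → x ∉ (P j).walk.support) ∧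
    (∀ (k : ℕ) (P : Fin k → FirstLastRowPath m n),
      (∀ i j, i ≠ j → ∀ x, x ∈ (P i).walk.support → x ∉ (P j).walk.support) →
      k ≤ n + 1) := by
  constructor
  · have h := fun j : Fin (n+1) => WallAux.exists_col_path m n hm j.val (Nat.lt_succ_iff.mp j.isLt)
    choose P hP using h
    refine ⟨P, ?_⟩
    intro i j hij x hxi hxj
    rcases hP i x hxi with h1 | h1 <;> rcases hP j x hxj with h2 | h2 <;>
      exact hij (Fin.ext (by omega))
  · intro k P hdisj
    have hv := fun i : Fin k => WallAux.exists_top hm (P i).walk (P i).hs (P i).ht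
    choose v hv1 hv2 hv3 using hv
    have hinj : Function.Injective (fun i : Fin k =>
        (⟨(v i).val.2.val / 2, by have := (v i).val.2.isLt; omega⟩ : Fin (n+1))) := by
      intro a b hab
      simp only [Fin.mk.injEq] at hab
      by_contra hne
      have hcol : (v a).val.2.val = (v b).val.2.val := by
        have h3a := hv3 a; have h3b := hv3 b
        have ha' := (v a).val.2.isLt
        have hb' := (v b).val.2.isLt
        omega
      have hrow : (v a).val.1.val = (v b).val.1.val := by rw [hv2 a, hv2 b]
      have hvv : v a = v b := Subtype.ext (Prod.ext (Fin.ext hrow) (Fin.ext hcol))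
      exact hdisj a b hne (v a) (hv1 a) (hvv ▸ hv1 b)
    have := Fintype.card_le_of_injective _ hinj
    simpa using this
end

section
/- Let G be a graph, e_1 = ab and e_2 = cd edges of G, and let Z be obtained from G − {e_1, e_2} by replacing each remaining edge gh by 2r internally disjoint g–h paths of length 2, and attaching a Heinlein wall W of size 2r by identifying its terminals a*, b*, c*, d* with a, b, c, d respectively. Then for every edge set U ⊆ E(Z) with |U| ≤ r, the graph Z − U contains a subdivision of G. -/
/-- A subdivision of `H` inside `G`: an injection of the vertices of `H` into
`G` together with, for each edge of `H`, a path in `G` between the images of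
its endvertices, such that these paths are internally disjoint from each other
and from the images of the vertices of `H`. -/
structure SubdivisionIn {α β : Type} (H : SimpleGraph α) (G : SimpleGraph β) where
  vmap : α ↪ β
  walk : ∀ ⦃x y : α⦄, H.Adj x y → G.Walk (vmap x) (vmap y)
  isPath : ∀ ⦃x y : α⦄ (h : H.Adj x y), (walk h).IsPath
  symm : ∀ ⦃x y : α⦄ (h : H.Adj x y), walk h.symm = (walk h).reverse
  internal : ∀ ⦃x y : α⦄ (h : H.Adj x y), ∀ v ∈ (walk h).support,
    (∃ w, v = vmap w) → v = vmap x ∨ v = vmap y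
  disj : ∀ ⦃x y x' y' : α⦄ (h : H.Adj x y) (h' : H.Adj x' y'),
    s(x, y) ≠ s(x', y') → ∀ v, v ∈ (walk h).support → v ∈ (walk h').support →
      (v = vmap x ∨ v = vmap y) ∧ (v = vmap x' ∨ v = vmap y')

/-- The vertices of the graph `Z` built from `G` with distinguished edges
`e₁ = ab`, `e₂ = cd`: the original vertices, for each remaining edge `e` of `G`
the `2r` midpoints of the paths of length 2 replacing `e`, the interior path
vertices `u j i` of the Heinlein wall of size `2r` (path `j`, position `i`,
0-based), and the interior bottleneck vertices (index `t` encodes `z (t+1)`). -/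
abbrev ZVert (V : Type) (G : SimpleGraph V) (a b c d : V) (r : ℕ) : Type :=
  V ⊕ ({e : Sym2 V // e ∈ G.edgeSet ∧ e ≠ s(a, b) ∧ e ≠ s(c, d)} × Fin (2 * r)) ⊕
    ((Fin (2 * r) × Fin (4 * r)) ⊕ Fin (2 * r - 1))

/-- The defining relation of `Z`: each remaining edge of `G` is replaced by `2r`
internally disjoint paths of length 2, and a Heinlein wall of size `2r` is
attached, its terminals `a*, b*, c*, d*` being identified with `a, b, c, d`
(recall `c* = z 0` and `d* = z 2r`). -/
def ZRel (V : Type) (G : SimpleGraph V) (a b c d : V) (r : ℕ) :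
    ZVert V G a b c d r → ZVert V G a b c d r → Prop := fun x y =>
  match x, y with
  -- endvertices of a multiplied edge to its midpoints
  | Sum.inl v, Sum.inr (Sum.inl (e, _)) => v ∈ e.val
  -- the paths P^j of the Heinlein wall
  | Sum.inr (Sum.inr (Sum.inl (j, i))), Sum.inr (Sum.inr (Sum.inl (j', i'))) =>
      j = j' ∧ i'.val = i.val + 1
  -- interior bottleneck vertices to path vertices: z s — u j i for even i
  -- iff s = j, for odd i iff s = j + 1 (here s = t + 1)
  | Sum.inr (Sum.inr (Sum.inr t)), Sum.inr (Sum.inr (Sum.inl (j, i))) =>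
      (i.val % 2 = 0 ∧ t.val + 1 = j.val) ∨ (i.val % 2 = 1 ∧ t.val = j.val)
  -- consecutive interior bottleneck vertices
  | Sum.inr (Sum.inr (Sum.inr t)), Sum.inr (Sum.inr (Sum.inr t')) =>
      t'.val = t.val + 1
  -- the terminals a* = a, b* = b, c* = z 0 = c, d* = z 2r = d to path vertices
  | Sum.inl v, Sum.inr (Sum.inr (Sum.inl (j, i))) =>
      (v = a ∧ i.val = 0) ∨ (v = b ∧ i.val = 4 * r - 1) ∨
      (v = c ∧ i.val % 2 = 0 ∧ j.val = 0) ∨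
      (v = d ∧ i.val % 2 = 1 ∧ j.val + 1 = 2 * r)
  -- the terminals c* = z 0 and d* = z 2r to interior bottleneck vertices
  | Sum.inl v, Sum.inr (Sum.inr (Sum.inr t)) =>
      (v = c ∧ t.val = 0) ∨ (v = d ∧ t.val + 2 = 2 * r)
  | _, _ => False

/-- The graph `Z` of the construction. -/
def ZGraph (V : Type) (G : SimpleGraph V) (a b c d : V) (r : ℕ) :
    SimpleGraph (ZVert V G a b c d r) :=
  SimpleGraph.fromRel (ZRel V G a b c d r)
namespace ZProof

open SimpleGraph

/-- Generic counting lemma: given `n` pairwise disjoint "kits" of edges and a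
set `U` of fewer than `n` edges, some kit avoids `U`. -/
lemma exists_disjoint_kit {n : ℕ} {E : Type} [DecidableEq E] (K : Fin n → Finset E)
    (U : Finset E) (hd : ∀ i j : Fin n, i ≠ j → Disjoint (K i) (K j))
    (hU : U.card < n) : ∃ i, Disjoint (K i) U := by
  by_contra h
  push_neg at h
  have hw : ∀ i, ∃ e, e ∈ K i ∧ e ∈ U := by
    intro i
    have := h i
    rw [Finset.disjoint_left] at this
    push_neg at this
    exact this
  choose w hw1 hw2 using hw
  have hinj : Function.Injective w := by
    intro i j hij
    by_contra hne
    exact (Finset.disjoint_left.mp (hd i j hne) (hw1 i)) (hij ▸ hw1 j)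
  have hcard := Finset.card_le_card_of_injOn (s := Finset.univ) w (fun i _ => hw2 i) hinj.injOn
  simp [Finset.card_univ] at hcard
  omega

/-- A walk following a vertex sequence. -/
def pathSeg {W : Type} (Z : SimpleGraph W) (f : ℕ → W) :
    (n : ℕ) → (∀ k, k < n → Z.Adj (f k) (f (k+1))) → Z.Walk (f 0) (f n)
  | 0, _ => SimpleGraph.Walk.nil
  | n+1, h => (pathSeg Z f n fun k hk => h k (by omega)).concat (h n (by omega))

lemma pathSeg_support {W : Type} (Z : SimpleGraph W) (f : ℕ → W) (n : ℕ)
    (h : ∀ k, k < n → Z.Adj (f k) (f (k+1))) :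
    (pathSeg Z f n h).support = (List.range (n+1)).map f := by
  induction n with
  | zero => simp [pathSeg, List.range_succ]
  | succ n ih => simp [pathSeg, ih, List.range_succ]

lemma pathSeg_mem_support {W : Type} {Z : SimpleGraph W} {f : ℕ → W} {n : ℕ}
    {h : ∀ k, k < n → Z.Adj (f k) (f (k+1))} {v : W} :
    v ∈ (pathSeg Z f n h).support ↔ ∃ p ≤ n, f p = v := by
  simp only [pathSeg_support, List.mem_map, List.mem_range]
  constructor
  · rintro ⟨p, hp, rfl⟩; exact ⟨p, by omega, rfl⟩
  · rintro ⟨p, hp, rfl⟩; exact ⟨p, by omega, rfl⟩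

lemma pathSeg_isPath {W : Type} (Z : SimpleGraph W) (f : ℕ → W) (n : ℕ)
    (h : ∀ k, k < n → Z.Adj (f k) (f (k+1)))
    (hinj : ∀ p q, p ≤ n → q ≤ n → f p = f q → p = q) :
    (pathSeg Z f n h).IsPath := by
  rw [SimpleGraph.Walk.isPath_def, pathSeg_support]
  refine List.Nodup.map_on ?_ List.nodup_range
  intro p hp q hq hpq
  exact hinj p q (by simpa using Nat.lt_succ_iff.mp (List.mem_range.mp hp))
    (by simpa using Nat.lt_succ_iff.mp (List.mem_range.mp hq)) hpq

end ZProof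
namespace ZProof

section Main

variable {V : Type} [DecidableEq V] {G : SimpleGraph V} {a b c d : V} {r : ℕ}

/-- Multiplied-edge type. -/
abbrev EdgeT (G : SimpleGraph V) (a b c d : V) : Type :=
  {e : Sym2 V // e ∈ G.edgeSet ∧ e ≠ s(a, b) ∧ e ≠ s(c, d)}

instance : DecidableEq (ZVert V G a b c d r) := inferInstance

instance : DecidableEq (Sym2 (ZVert V G a b c d r)) := Sym2.instDecidableEq

variable (G a b c d r) in
/-- Path vertex `u j i` (totalized). -/
def uu (j i : ℕ) : ZVert V G a b c d r :=
  if h : j < 2 * r ∧ i < 4 * r then Sum.inr (Sum.inr (Sum.inl (⟨j, h.1⟩, ⟨i, h.2⟩)))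
  else Sum.inl a

variable (G a b c d r) in
/-- Bottleneck boundary vertex `z t` (`z 0 = c`, `z (2r) = d`, totalized). -/
def bdry (t : ℕ) : ZVert V G a b c d r :=
  if h0 : t = 0 then Sum.inl c
  else if h : t < 2 * r then Sum.inr (Sum.inr (Sum.inr ⟨t - 1, by omega⟩))
  else Sum.inl d

variable (G a b c d r) in
/-- The `j`-th bottleneck edge `z j — z (j+1)`. -/
def zedge (j : ℕ) : Sym2 (ZVert V G a b c d r) :=
  s(bdry G a b c d r j, bdry G a b c d r (j + 1))

variable (G a b c d r) in
/-- The vertex sequence of the `a`–`b` path along `P^j`. -/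
def psiAB (j p : ℕ) : ZVert V G a b c d r :=
  if p = 0 then Sum.inl a
  else if p ≤ 4 * r then uu G a b c d r j (p - 1)
  else Sum.inl b

variable (G a b c d r) in
/-- The vertex sequence of the `c`–`d` path: a detour through `P^s` with base
index `f s` at every level `s ≠ j`, and the direct bottleneck edge at level `j`. -/
def psiCD (j : ℕ) (f : ℕ → ℕ) (p : ℕ) : ZVert V G a b c d r :=
  if p ≤ 3 * j then
    if p % 3 = 0 then bdry G a b c d r (p / 3)
    else uu G a b c d r (p / 3) (f (p / 3) + (p % 3 - 1))
  else
    if (p - (3 * j + 1)) % 3 = 0 then bdry G a b c d r (j + 1 + (p - (3 * j + 1)) / 3)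
    else uu G a b c d r (j + 1 + (p - (3 * j + 1)) / 3)
      (f (j + 1 + (p - (3 * j + 1)) / 3) + ((p - (3 * j + 1)) % 3 - 1))

variable (G a b c d r) in
/-- Tag of a vertex: which branch set it belongs to. -/
def tagOf (j : ℕ) : ZVert V G a b c d r → Option (Sym2 V)
  | Sum.inl _ => none
  | Sum.inr (Sum.inl (e, _)) => some e.val
  | Sum.inr (Sum.inr (Sum.inl (s, _))) => if s.val = j then some s(a, b) else some s(c, d)
  | Sum.inr (Sum.inr (Sum.inr _)) => some s(c, d)

variable (G a b c d r) in
/-- Edge kit of the `a`–`b` path along `P^j`, plus the `j`-th bottleneck edge. -/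
noncomputable def abKit (j : ℕ) : Finset (Sym2 (ZVert V G a b c d r)) :=
  insert (zedge G a b c d r j)
    ((Finset.range (4 * r + 1)).image fun p =>
      s(psiAB G a b c d r j p, psiAB G a b c d r j (p + 1)))

variable (G a b c d r) in
/-- Edge kit of the detour at level `s` with base index `i`. -/
noncomputable def dKit (s i : ℕ) : Finset (Sym2 (ZVert V G a b c d r)) :=
  {s(bdry G a b c d r s, uu G a b c d r s i),
   s(uu G a b c d r s i, uu G a b c d r s (i + 1)),
   s(uu G a b c d r s (i + 1), bdry G a b c d r (s + 1))}

variable (G a b c d r) in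
/-- Edge kit of the `k`-th midpoint of a multiplied edge. -/
noncomputable def mKit (e : EdgeT G a b c d) (k : Fin (2 * r)) (g h : V) :
    Finset (Sym2 (ZVert V G a b c d r)) :=
  {s(Sum.inl g, Sum.inr (Sum.inl (e, k))), s(Sum.inl h, Sum.inr (Sum.inl (e, k)))}

end Main

end ZProof
namespace ZProof

section Main2

set_option linter.unusedSectionVars false

variable {V : Type} [DecidableEq V] {G : SimpleGraph V} {a b c d : V} {r : ℕ}

lemma uu_eq_uu_iff {j i j' i' : ℕ} (hj : j < 2 * r) (hi : i < 4 * r)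
    (hj' : j' < 2 * r) (hi' : i' < 4 * r) :
    uu G a b c d r j i = uu G a b c d r j' i' ↔ j = j' ∧ i = i' := by
  rw [uu, uu, dif_pos ⟨hj, hi⟩, dif_pos ⟨hj', hi'⟩]
  simp [Fin.ext_iff]

lemma uu_ne_inl {j i : ℕ} (hj : j < 2 * r) (hi : i < 4 * r) (v : V) :
    uu G a b c d r j i ≠ Sum.inl v := by
  rw [uu, dif_pos ⟨hj, hi⟩]; simp

lemma uu_ne_bdry {j i t : ℕ} (hj : j < 2 * r) (hi : i < 4 * r) :
    uu G a b c d r j i ≠ bdry G a b c d r t := by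
  rw [uu, dif_pos ⟨hj, hi⟩, bdry]
  split_ifs <;> simp

lemma uu_ne_mid {j i : ℕ} (hj : j < 2 * r) (hi : i < 4 * r)
    (e : EdgeT G a b c d) (k : Fin (2 * r)) :
    uu G a b c d r j i ≠ Sum.inr (Sum.inl (e, k)) := by
  rw [uu, dif_pos ⟨hj, hi⟩]; simp

lemma bdry_ne_mid {t : ℕ} (e : EdgeT G a b c d) (k : Fin (2 * r)) :
    bdry G a b c d r t ≠ Sum.inr (Sum.inl (e, k)) := by
  rw [bdry]; split_ifs <;> simp

lemma bdry_eq_bdry_iff (hcd : c ≠ d) {t t' : ℕ} (ht : t ≤ 2 * r) (ht' : t' ≤ 2 * r) :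
    bdry G a b c d r t = bdry G a b c d r t' ↔ t = t' := by
  rw [bdry, bdry]
  split_ifs <;> simp_all [Fin.ext_iff, hcd, hcd.symm] <;> omega

/-- Selection of a good midpoint for a multiplied edge. -/
lemma exists_good_mid (hr : 1 ≤ r) (U : Finset (Sym2 (ZVert V G a b c d r)))
    (hU : U.card ≤ r) (e : EdgeT G a b c d) :
    ∃ k : Fin (2 * r), ∀ v ∈ e.val,
      s(Sum.inl v, (Sum.inr (Sum.inl (e, k)) : ZVert V G a b c d r)) ∉ U := by
  obtain ⟨⟨g, h⟩, hgh⟩ := e.val.exists_rep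
  have hdisj : ∀ k k' : Fin (2 * r), k ≠ k' →
      Disjoint (mKit G a b c d r e k g h) (mKit G a b c d r e k' g h) := by
    intro k k' hkk'
    rw [Finset.disjoint_left]
    intro x hx hx'
    apply hkk'
    simp only [mKit, Finset.mem_insert, Finset.mem_singleton] at hx hx'
    rcases hx with rfl | rfl <;> rcases hx' with hx' | hx' <;>
      simp_all [Sym2.eq_iff, Fin.ext_iff] <;> omega
  obtain ⟨k, hk⟩ := exists_disjoint_kit (fun k => mKit G a b c d r e k g h) U hdisj (by omega)
  refine ⟨k, fun v hv hmem => ?_⟩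
  have hv' : v = g ∨ v = h := by
    rw [← hgh] at hv; exact Sym2.mem_iff.mp hv
  rcases hv' with rfl | rfl
  · exact Finset.disjoint_left.mp hk (by simp [mKit]) hmem
  · exact Finset.disjoint_left.mp hk (by simp [mKit]) hmem

/-- Selection of a good detour at a level `s`. -/
lemma exists_good_detour (hr : 1 ≤ r) (U : Finset (Sym2 (ZVert V G a b c d r)))
    (hU : U.card ≤ r) (s : ℕ) (hs : s < 2 * r) :
    ∃ i : ℕ, i % 2 = 0 ∧ i + 1 < 4 * r ∧ Disjoint (dKit G a b c d r s i) U := by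
  have hdisj : ∀ m m' : Fin (2 * r), m ≠ m' →
      Disjoint (dKit G a b c d r s (2 * m.val)) (dKit G a b c d r s (2 * m'.val)) := by
    intro m m' hmm'
    rw [Finset.disjoint_left]
    intro x hx hx'
    apply hmm'
    ext
    have h1 := m.isLt
    have h2 := m'.isLt
    simp only [dKit, Finset.mem_insert, Finset.mem_singleton] at hx hx'
    rcases hx with rfl | rfl | rfl <;> rcases hx' with hx' | hx' | hx' <;>
      rw [Sym2.eq_iff] at hx' <;>
      rcases hx' with ⟨h3, h4⟩ | ⟨h3, h4⟩ <;>
      first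
        | (exact absurd h3 (Ne.symm (uu_ne_bdry (by omega) (by omega))))
        | (exact absurd h3 (uu_ne_bdry (by omega) (by omega)))
        | (exact absurd h4 (Ne.symm (uu_ne_bdry (by omega) (by omega))))
        | (exact absurd h4 (uu_ne_bdry (by omega) (by omega)))
        | (have := (uu_eq_uu_iff (by omega) (by omega) (by omega) (by omega)).mp h3; omega)
        | (have := (uu_eq_uu_iff (by omega) (by omega) (by omega) (by omega)).mp h4; omega)
  obtain ⟨m, hm⟩ := exists_disjoint_kit (fun m : Fin (2 * r) => dKit G a b c d r s (2 * m.val))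
    U hdisj (by omega)
  exact ⟨2 * m.val, by omega, by have := m.isLt; omega, hm⟩

end Main2

end ZProof
namespace ZProof

section Main3

set_option linter.unusedSectionVars false

variable {V : Type} [DecidableEq V] {G : SimpleGraph V} {a b c d : V} {r : ℕ}

lemma psiAB_zero (j : ℕ) : psiAB G a b c d r j 0 = Sum.inl a := by simp [psiAB]

lemma psiAB_mid {p : ℕ} (j : ℕ) (h1 : 1 ≤ p) (h2 : p ≤ 4 * r) :
    psiAB G a b c d r j p = uu G a b c d r j (p - 1) := by
  rw [psiAB, if_neg (by omega), if_pos h2]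

lemma psiAB_last {p : ℕ} (j : ℕ) (h : 4 * r < p) : psiAB G a b c d r j p = Sum.inl b := by
  rw [psiAB, if_neg (by omega), if_neg (by omega)]

lemma abKit_elem (hr : 1 ≤ r) {j : ℕ} {x : Sym2 (ZVert V G a b c d r)}
    (hx : x ∈ abKit G a b c d r j) :
    x = zedge G a b c d r j ∨
    x = s(Sum.inl a, uu G a b c d r j 0) ∨
    x = s(uu G a b c d r j (4 * r - 1), Sum.inl b) ∨
    ∃ q, q + 1 < 4 * r ∧ x = s(uu G a b c d r j q, uu G a b c d r j (q + 1)) := by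
  simp only [abKit, Finset.mem_insert, Finset.mem_image, Finset.mem_range] at hx
  rcases hx with rfl | ⟨p, hp, rfl⟩
  · exact Or.inl rfl
  rcases Nat.eq_zero_or_pos p with rfl | hp1
  · right; left
    rw [psiAB_zero, psiAB_mid j (by omega) (by omega)]
  rcases eq_or_lt_of_le (show p ≤ 4 * r by omega) with rfl | hp2
  · right; right; left
    rw [psiAB_mid j (by omega) (by omega), psiAB_last j (by omega)]
  · right; right; right
    refine ⟨p - 1, by omega, ?_⟩
    rw [psiAB_mid j (by omega) (by omega), psiAB_mid j (by omega) (by omega),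
      show p + 1 - 1 = (p - 1) + 1 from by omega]

/-- Selection of a good path `P^j` for the `a`–`b` linkage (its bottleneck edge
also avoiding `U`). -/
lemma exists_good_j' (hr : 1 ≤ r) (hcd : c ≠ d)
    (U : Finset (Sym2 (ZVert V G a b c d r))) (hU : U.card ≤ r) :
    ∃ j : ℕ, j < 2 * r ∧ Disjoint (abKit G a b c d r j) U := by
  have hdisj : ∀ j j' : Fin (2 * r), j ≠ j' →
      Disjoint (abKit G a b c d r j.val) (abKit G a b c d r j'.val) := by
    intro j j' hjj'
    rw [Finset.disjoint_left]
    intro x hx hx'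
    apply hjj'
    ext
    have h1 := j.isLt
    have h2 := j'.isLt
    rcases abKit_elem hr hx with rfl | rfl | rfl | ⟨q, hq, rfl⟩ <;>
      rcases abKit_elem hr hx' with h' | h' | h' | ⟨q', hq', h'⟩ <;>
      simp only [zedge, Sym2.eq_iff] at h' <;>
      rcases h' with ⟨h3, h4⟩ | ⟨h3, h4⟩ <;>
      first
        | (exact absurd h3 (uu_ne_bdry (by omega) (by omega)))
        | (exact absurd h3 (Ne.symm (uu_ne_bdry (by omega) (by omega))))
        | (exact absurd h4 (uu_ne_bdry (by omega) (by omega)))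
        | (exact absurd h4 (Ne.symm (uu_ne_bdry (by omega) (by omega))))
        | (exact absurd h3 (uu_ne_inl (by omega) (by omega) _))
        | (exact absurd h3 (Ne.symm (uu_ne_inl (by omega) (by omega) _)))
        | (exact absurd h4 (uu_ne_inl (by omega) (by omega) _))
        | (exact absurd h4 (Ne.symm (uu_ne_inl (by omega) (by omega) _)))
        | (have e3 := (bdry_eq_bdry_iff hcd (by omega) (by omega)).mp h3;
           have e4 := (bdry_eq_bdry_iff hcd (by omega) (by omega)).mp h4; omega)
        | (have := (uu_eq_uu_iff (by omega) (by omega) (by omega) (by omega)).mp h3; omega)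
        | (have := (uu_eq_uu_iff (by omega) (by omega) (by omega) (by omega)).mp h4; omega)
  obtain ⟨j, hj⟩ := exists_disjoint_kit (fun j : Fin (2 * r) => abKit G a b c d r j.val) U
    hdisj (by omega)
  exact ⟨j.val, j.isLt, hj⟩

end Main3

end ZProof
namespace ZProof

section Main4

set_option linter.unusedSectionVars false

variable {V : Type} [DecidableEq V] {G : SimpleGraph V} {a b c d : V} {r : ℕ}

lemma Zadj {U : Finset (Sym2 (ZVert V G a b c d r))} {x y : ZVert V G a b c d r}
    (hne : x ≠ y) (hrel : ZRel V G a b c d r x y ∨ ZRel V G a b c d r y x)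
    (hU : s(x, y) ∉ U) : ((ZGraph V G a b c d r).deleteEdges ↑U).Adj x y := by
  rw [SimpleGraph.deleteEdges_adj, ZGraph, SimpleGraph.fromRel_adj]
  exact ⟨⟨hne, hrel⟩, by simpa using hU⟩

lemma psiAB_adj (hr : 1 ≤ r) {j : ℕ} (hj : j < 2 * r)
    {U : Finset (Sym2 (ZVert V G a b c d r))} (hkit : Disjoint (abKit G a b c d r j) U) :
    ∀ p, p < 4 * r + 1 →
      ((ZGraph V G a b c d r).deleteEdges ↑U).Adj
        (psiAB G a b c d r j p) (psiAB G a b c d r j (p + 1)) := by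
  intro p hp
  have hU' : s(psiAB G a b c d r j p, psiAB G a b c d r j (p + 1)) ∉ U := by
    intro hmem
    refine Finset.disjoint_left.mp hkit ?_ hmem
    exact Finset.mem_insert_of_mem (Finset.mem_image.mpr ⟨p, Finset.mem_range.mpr (by omega), rfl⟩)
  refine Zadj ?_ ?_ hU'
  · -- not equal
    rcases Nat.eq_zero_or_pos p with rfl | hp1
    · rw [psiAB_zero, psiAB_mid j (by omega) (by omega)]
      exact (uu_ne_inl hj (by omega) a).symm
    rcases eq_or_lt_of_le (show p ≤ 4 * r by omega) with rfl | hp2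
    · rw [psiAB_mid j (by omega) (by omega), psiAB_last j (by omega)]
      exact uu_ne_inl hj (by omega) b
    · rw [psiAB_mid j (by omega) (by omega), psiAB_mid j (by omega) (by omega)]
      rw [Ne, uu_eq_uu_iff hj (by omega) hj (by omega)]
      omega
  · rcases Nat.eq_zero_or_pos p with rfl | hp1
    · rw [psiAB_zero, psiAB_mid j (by omega) (by omega), uu, dif_pos ⟨hj, by omega⟩]
      left
      exact Or.inl ⟨rfl, rfl⟩
    rcases eq_or_lt_of_le (show p ≤ 4 * r by omega) with rfl | hp2
    · rw [psiAB_mid j (by omega) (by omega), psiAB_last j (by omega),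
        uu, dif_pos ⟨hj, by omega⟩]
      right
      exact Or.inr (Or.inl ⟨rfl, rfl⟩)
    · rw [psiAB_mid j (by omega) (by omega), psiAB_mid j (by omega) (by omega),
        uu, dif_pos ⟨hj, by omega⟩, uu, dif_pos ⟨hj, by omega⟩]
      left
      exact ⟨rfl, by simp; omega⟩

lemma psiAB_inj (hr : 1 ≤ r) {j : ℕ} (hj : j < 2 * r) (hab' : a ≠ b) :
    ∀ p q, p ≤ 4 * r + 1 → q ≤ 4 * r + 1 →
      psiAB G a b c d r j p = psiAB G a b c d r j q → p = q := by
  have key : ∀ p, p ≤ 4 * r + 1 →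
      (p = 0 ∧ psiAB G a b c d r j p = Sum.inl a) ∨
      (1 ≤ p ∧ p ≤ 4 * r ∧ psiAB G a b c d r j p = uu G a b c d r j (p - 1)) ∨
      (p = 4 * r + 1 ∧ psiAB G a b c d r j p = Sum.inl b) := by
    intro p hp
    rcases Nat.eq_zero_or_pos p with rfl | hp1
    · exact Or.inl ⟨rfl, psiAB_zero j⟩
    rcases eq_or_lt_of_le (show p ≤ 4 * r + 1 by omega) with rfl | hp2
    · exact Or.inr (Or.inr ⟨rfl, psiAB_last j (by omega)⟩)
    · exact Or.inr (Or.inl ⟨hp1, by omega, psiAB_mid j (by omega) (by omega)⟩)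
  intro p q hp hq h
  rcases key p hp with ⟨rfl, e1⟩ | ⟨hp1, hp2, e1⟩ | ⟨rfl, e1⟩ <;>
    rcases key q hq with ⟨rfl, e2⟩ | ⟨hq1, hq2, e2⟩ | ⟨rfl, e2⟩ <;>
    simp only [e1, e2] at h <;>
    first
      | rfl
      | (exact absurd h (Ne.symm (uu_ne_inl hj (by omega) _)))
      | (exact absurd h (uu_ne_inl hj (by omega) _))
      | (exact absurd (Sum.inl.inj h) hab')
      | (exact absurd (Sum.inl.inj h) hab'.symm)
      | (have := (uu_eq_uu_iff hj (by omega) hj (by omega)).mp h; omega)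

lemma psiAB_tagged (hr : 1 ≤ r) {j : ℕ} (hj : j < 2 * r) :
    ∀ p, p ≤ 4 * r + 1 → psiAB G a b c d r j p = Sum.inl a ∨
      psiAB G a b c d r j p = Sum.inl b ∨
      tagOf G a b c d r j (psiAB G a b c d r j p) = some s(a, b) := by
  intro p hp
  rcases Nat.eq_zero_or_pos p with rfl | hp1
  · exact Or.inl (psiAB_zero j)
  rcases eq_or_lt_of_le (show p ≤ 4 * r + 1 by omega) with rfl | hp2
  · exact Or.inr (Or.inl (psiAB_last j (by omega)))
  · right; right
    rw [psiAB_mid j (by omega) (by omega), uu, dif_pos ⟨hj, by omega⟩, tagOf]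
    simp

end Main4

end ZProof
namespace ZProof

section Main5

set_option linter.unusedSectionVars false

variable {V : Type} [DecidableEq V] {G : SimpleGraph V} {a b c d : V} {r : ℕ}

lemma bdry_zero : bdry G a b c d r 0 = Sum.inl c := by rw [bdry, dif_pos rfl]

lemma bdry_last {t : ℕ} (h : 2 * r ≤ t) (hr : 1 ≤ r) : bdry G a b c d r t = Sum.inl d := by
  rw [bdry, dif_neg (by omega), dif_neg (by omega)]

lemma bdry_mid {t : ℕ} (h1 : 1 ≤ t) (h2 : t < 2 * r) :
    bdry G a b c d r t = Sum.inr (Sum.inr (Sum.inr ⟨t - 1, by omega⟩)) := by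
  rw [bdry, dif_neg (by omega), dif_pos h2]

variable {j : ℕ} {f : ℕ → ℕ}

lemma psiCD_eval_bdry1 {p : ℕ} (hp3 : p ≤ 3 * j) (h0 : p % 3 = 0) :
    psiCD G a b c d r j f p = bdry G a b c d r (p / 3) := by
  rw [psiCD, if_pos hp3, if_pos h0]

lemma psiCD_eval_uu1 {p : ℕ} (hp3 : p ≤ 3 * j) (h0 : p % 3 ≠ 0) :
    psiCD G a b c d r j f p = uu G a b c d r (p / 3) (f (p / 3) + (p % 3 - 1)) := by
  rw [psiCD, if_pos hp3, if_neg h0]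

lemma psiCD_eval_bdry2 {p : ℕ} (hp3 : 3 * j < p) (h0 : (p - (3 * j + 1)) % 3 = 0) :
    psiCD G a b c d r j f p = bdry G a b c d r (j + 1 + (p - (3 * j + 1)) / 3) := by
  rw [psiCD, if_neg (by omega), if_pos h0]

lemma psiCD_eval_uu2 {p : ℕ} (hp3 : 3 * j < p) (h0 : (p - (3 * j + 1)) % 3 ≠ 0) :
    psiCD G a b c d r j f p = uu G a b c d r (j + 1 + (p - (3 * j + 1)) / 3)
      (f (j + 1 + (p - (3 * j + 1)) / 3) + ((p - (3 * j + 1)) % 3 - 1)) := by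
  rw [psiCD, if_neg (by omega), if_neg h0]

lemma psiCD_zero : psiCD G a b c d r j f 0 = Sum.inl c := by
  rw [psiCD_eval_bdry1 (by omega) (by omega)]
  exact bdry_zero

lemma psiCD_last (hr : 1 ≤ r) (hj : j < 2 * r) :
    psiCD G a b c d r j f (6 * r - 2) = Sum.inl d := by
  rw [psiCD_eval_bdry2 (by omega) (by omega), bdry_last (by omega) hr]

/-- Shape of the vertices of the `c`–`d` walk. -/
lemma psiCD_shape (hr : 1 ≤ r) (hj : j < 2 * r) {p : ℕ} (hp : p ≤ 6 * r - 2) :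
    (∃ t, t ≤ 2 * r ∧ psiCD G a b c d r j f p = bdry G a b c d r t ∧
      p = (if t ≤ j then 3 * t else 3 * t - 2)) ∨
    (∃ s e, s < 2 * r ∧ s ≠ j ∧ e ≤ 1 ∧
      psiCD G a b c d r j f p = uu G a b c d r s (f s + e) ∧
      p = (if s ≤ j then 3 * s else 3 * s - 2) + 1 + e) := by
  by_cases hp3 : p ≤ 3 * j
  · by_cases h0 : p % 3 = 0
    · left
      exact ⟨p / 3, by omega, psiCD_eval_bdry1 hp3 h0, by rw [if_pos (by omega)]; omega⟩
    · right
      exact ⟨p / 3, p % 3 - 1, by omega, by omega, by omega,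
        psiCD_eval_uu1 hp3 h0, by rw [if_pos (by omega)]; omega⟩
  · by_cases h0 : (p - (3 * j + 1)) % 3 = 0
    · left
      refine ⟨j + 1 + (p - (3 * j + 1)) / 3, by omega, psiCD_eval_bdry2 (by omega) h0, ?_⟩
      rw [if_neg (by omega)]
      omega
    · right
      refine ⟨j + 1 + (p - (3 * j + 1)) / 3, (p - (3 * j + 1)) % 3 - 1, by omega, by omega,
        by omega, psiCD_eval_uu2 (by omega) h0, ?_⟩
      rw [if_neg (by omega)]
      omega

end Main5

end ZProof
namespace ZProof

section Main6

set_option linter.unusedSectionVars false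

variable {V : Type} [DecidableEq V] {G : SimpleGraph V} {a b c d : V} {r : ℕ}
variable {j : ℕ} {f : ℕ → ℕ}

lemma tagOf_uu {s i : ℕ} (hs : s < 2 * r) (hi : i < 4 * r) :
    tagOf G a b c d r j (uu G a b c d r s i) =
      if s = j then some s(a, b) else some s(c, d) := by
  rw [uu, dif_pos ⟨hs, hi⟩]
  rfl

lemma uu_eval {s i : ℕ} (hs : s < 2 * r) (hi : i < 4 * r) :
    uu G a b c d r s i = Sum.inr (Sum.inr (Sum.inl (⟨s, hs⟩, ⟨i, hi⟩))) := dif_pos ⟨hs, hi⟩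

lemma psiCD_inj (hr : 1 ≤ r) (hcd : c ≠ d) (hj : j < 2 * r)
    (hf : ∀ s, s < 2 * r → s ≠ j → f s % 2 = 0 ∧ f s + 1 < 4 * r) :
    ∀ p q, p ≤ 6 * r - 2 → q ≤ 6 * r - 2 →
      psiCD G a b c d r j f p = psiCD G a b c d r j f q → p = q := by
  intro p q hp hq h
  rcases psiCD_shape (G := G) (a := a) (b := b) (c := c) (d := d) (f := f) hr hj hp with ⟨t, ht, he, hpe⟩ | ⟨s, e, hs, hsj, hel, he, hpe⟩ <;>
    rcases psiCD_shape (G := G) (a := a) (b := b) (c := c) (d := d) (f := f) hr hj hq with ⟨t', ht', he', hpe'⟩ | ⟨s', e', hs', hsj', hel', he', hpe'⟩ <;>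
    rw [he, he'] at h
  · have := (bdry_eq_bdry_iff hcd ht ht').mp h
    subst this
    split_ifs at hpe hpe' <;> omega
  · have hb := hf s' hs' hsj'
    exact absurd h.symm (uu_ne_bdry hs' (by omega))
  · have hb := hf s hs hsj
    exact absurd h (uu_ne_bdry hs (by omega))
  · have hb := hf s hs hsj
    have hb' := hf s' hs' hsj'
    have h2 := (uu_eq_uu_iff hs (by omega) hs' (by omega)).mp h
    obtain ⟨rfl, h3⟩ := h2
    split_ifs at hpe hpe' <;> omega

lemma psiCD_tagged (hr : 1 ≤ r) (hj : j < 2 * r)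
    (hf : ∀ s, s < 2 * r → s ≠ j → f s % 2 = 0 ∧ f s + 1 < 4 * r) :
    ∀ p, p ≤ 6 * r - 2 → psiCD G a b c d r j f p = Sum.inl c ∨
      psiCD G a b c d r j f p = Sum.inl d ∨
      tagOf G a b c d r j (psiCD G a b c d r j f p) = some s(c, d) := by
  intro p hp
  rcases psiCD_shape (G := G) (a := a) (b := b) (c := c) (d := d) (f := f) hr hj hp with ⟨t, ht, he, hpe⟩ | ⟨s, e, hs, hsj, hel, he, hpe⟩
  · rcases Nat.eq_zero_or_pos t with rfl | ht1
    · rw [he, bdry_zero]; exact Or.inl rfl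
    rcases eq_or_lt_of_le ht with rfl | ht2
    · rw [he, bdry_last (by omega) hr]; exact Or.inr (Or.inl rfl)
    · right; right
      rw [he, bdry_mid (by omega) (by omega)]
      rfl
  · right; right
    have hb := hf s hs hsj
    rw [he, tagOf_uu hs (by omega), if_neg hsj]

lemma psiCD_adj (hr : 1 ≤ r) (hcd : c ≠ d) (hj : j < 2 * r)
    {U : Finset (Sym2 (ZVert V G a b c d r))}
    (hz : zedge G a b c d r j ∉ U)
    (hf : ∀ s, s < 2 * r → s ≠ j →
      f s % 2 = 0 ∧ f s + 1 < 4 * r ∧ Disjoint (dKit G a b c d r s (f s)) U) :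
    ∀ p, p < 6 * r - 2 →
      ((ZGraph V G a b c d r).deleteEdges ↑U).Adj
        (psiCD G a b c d r j f p) (psiCD G a b c d r j f (p + 1)) := by
  intro p hp
  by_cases hp3 : p ≤ 3 * j
  · by_cases h0 : p % 3 = 0
    · by_cases hpj : p = 3 * j
      · -- the direct bottleneck edge z_j — z_{j+1}
        have e1 : psiCD G a b c d r j f p = bdry G a b c d r j := by
          rw [psiCD_eval_bdry1 hp3 h0, show p / 3 = j from by omega]
        have e2 : psiCD G a b c d r j f (p + 1) = bdry G a b c d r (j + 1) := by
          rw [psiCD_eval_bdry2 (by omega) (by omega),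
            show j + 1 + (p + 1 - (3 * j + 1)) / 3 = j + 1 from by omega]
        rw [e1, e2]
        refine Zadj ?_ ?_ ?_
        · rw [Ne, bdry_eq_bdry_iff hcd (by omega) (by omega)]; omega
        · rcases Nat.eq_zero_or_pos j with rfl | hj1
          · rw [bdry_zero, bdry_mid (by omega) (by omega)]
            exact Or.inl (Or.inl ⟨rfl, rfl⟩)
          rcases eq_or_lt_of_le (show j + 1 ≤ 2 * r by omega) with hj2 | hj2
          · rw [bdry_mid (by omega) (by omega), bdry_last (by omega) hr]
            exact Or.inr (Or.inr ⟨rfl, show j - 1 + 2 = 2 * r by omega⟩)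
          · rw [bdry_mid (by omega) (by omega), bdry_mid (by omega) (by omega)]
            exact Or.inl (show j + 1 - 1 = j - 1 + 1 by omega)
        · intro hmem
          apply hz
          rw [zedge]
          exact hmem
      · -- entering the detour at level s = p/3 < j
        obtain ⟨hev, hlt, hdis⟩ := hf (p / 3) (by omega) (by omega)
        have e1 : psiCD G a b c d r j f p = bdry G a b c d r (p / 3) :=
          psiCD_eval_bdry1 hp3 h0
        have e2 : psiCD G a b c d r j f (p + 1) = uu G a b c d r (p / 3) (f (p / 3)) := by
          rw [psiCD_eval_uu1 (by omega) (by omega), show (p + 1) / 3 = p / 3 from by omega,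
            show (p + 1) % 3 - 1 = 0 from by omega, Nat.add_zero]
        rw [e1, e2]
        refine Zadj ?_ ?_ ?_
        · exact (uu_ne_bdry (by omega) (by omega)).symm
        · rcases Nat.eq_zero_or_pos (p / 3) with hq0 | hq1
          · rw [hq0] at hev hlt
            rw [hq0, bdry_zero, uu_eval (by omega) (by omega)]
            exact Or.inl (Or.inr (Or.inr (Or.inl ⟨rfl, hev, rfl⟩)))
          · rw [bdry_mid (by omega) (by omega), uu_eval (by omega) (by omega)]
            exact Or.inl (Or.inl ⟨hev, show p / 3 - 1 + 1 = p / 3 by omega⟩)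
        · intro hmem
          exact Finset.disjoint_left.mp hdis (Finset.mem_insert_self _ _) hmem
    · by_cases h1 : p % 3 = 1
      · -- middle edge of the detour at level s = p/3 < j
        obtain ⟨hev, hlt, hdis⟩ := hf (p / 3) (by omega) (by omega)
        have e1 : psiCD G a b c d r j f p = uu G a b c d r (p / 3) (f (p / 3)) := by
          rw [psiCD_eval_uu1 hp3 h0, show p % 3 - 1 = 0 from by omega, Nat.add_zero]
        have e2 : psiCD G a b c d r j f (p + 1) = uu G a b c d r (p / 3) (f (p / 3) + 1) := by
          rw [psiCD_eval_uu1 (by omega) (by omega), show (p + 1) / 3 = p / 3 from by omega,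
            show (p + 1) % 3 - 1 = 1 from by omega]
        rw [e1, e2]
        refine Zadj ?_ ?_ ?_
        · rw [Ne, uu_eq_uu_iff (by omega) (by omega) (by omega) (by omega)]; omega
        · rw [uu_eval (by omega) (by omega), uu_eval (by omega) (by omega)]
          exact Or.inl ⟨rfl, rfl⟩
        · intro hmem
          refine Finset.disjoint_left.mp hdis ?_ hmem
          exact Finset.mem_insert_of_mem (Finset.mem_insert_self _ _)
      · -- exiting the detour at level s = p/3 < j
        have h2 : p % 3 = 2 := by omega
        obtain ⟨hev, hlt, hdis⟩ := hf (p / 3) (by omega) (by omega)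
        have e1 : psiCD G a b c d r j f p = uu G a b c d r (p / 3) (f (p / 3) + 1) := by
          rw [psiCD_eval_uu1 hp3 h0, show p % 3 - 1 = 1 from by omega]
        have e2 : psiCD G a b c d r j f (p + 1) = bdry G a b c d r (p / 3 + 1) := by
          rw [psiCD_eval_bdry1 (by omega) (by omega), show (p + 1) / 3 = p / 3 + 1 from by omega]
        rw [e1, e2]
        refine Zadj ?_ ?_ ?_
        · exact uu_ne_bdry (by omega) (by omega)
        · rw [uu_eval (by omega) (by omega), bdry_mid (by omega) (by omega)]
          exact Or.inr (Or.inr ⟨show (f (p / 3) + 1) % 2 = 1 by omega,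
            show p / 3 + 1 - 1 = p / 3 by omega⟩)
        · intro hmem
          refine Finset.disjoint_left.mp hdis ?_ hmem
          refine Finset.mem_insert_of_mem (Finset.mem_insert_of_mem ?_)
          exact Finset.mem_singleton_self _
  · by_cases h0 : (p - (3 * j + 1)) % 3 = 0
    · -- entering the detour at level s0 = j+1+(p-(3j+1))/3 > j
      obtain ⟨hev, hlt, hdis⟩ := hf (j + 1 + (p - (3 * j + 1)) / 3) (by omega) (by omega)
      have e1 : psiCD G a b c d r j f p =
          bdry G a b c d r (j + 1 + (p - (3 * j + 1)) / 3) :=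
        psiCD_eval_bdry2 (by omega) h0
      have e2 : psiCD G a b c d r j f (p + 1) =
          uu G a b c d r (j + 1 + (p - (3 * j + 1)) / 3) (f (j + 1 + (p - (3 * j + 1)) / 3)) := by
        rw [psiCD_eval_uu2 (by omega) (by omega),
          show (p + 1 - (3 * j + 1)) / 3 = (p - (3 * j + 1)) / 3 from by omega,
          show (p + 1 - (3 * j + 1)) % 3 - 1 = 0 from by omega]
        rfl
      rw [e1, e2]
      refine Zadj ?_ ?_ ?_
      · exact (uu_ne_bdry (by omega) (by omega)).symm
      · rw [uu_eval (by omega) (by omega), bdry_mid (by omega) (by omega)]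
        exact Or.inl (Or.inl ⟨hev,
          show j + 1 + (p - (3 * j + 1)) / 3 - 1 + 1 = j + 1 + (p - (3 * j + 1)) / 3 by omega⟩)
      · intro hmem
        exact Finset.disjoint_left.mp hdis (Finset.mem_insert_self _ _) hmem
    · by_cases h1 : (p - (3 * j + 1)) % 3 = 1
      · -- middle edge of the detour at level s0 > j
        obtain ⟨hev, hlt, hdis⟩ := hf (j + 1 + (p - (3 * j + 1)) / 3) (by omega) (by omega)
        have e1 : psiCD G a b c d r j f p =
            uu G a b c d r (j + 1 + (p - (3 * j + 1)) / 3)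
              (f (j + 1 + (p - (3 * j + 1)) / 3)) := by
          rw [psiCD_eval_uu2 (by omega) h0, show (p - (3 * j + 1)) % 3 - 1 = 0 from by omega]
          rfl
        have e2 : psiCD G a b c d r j f (p + 1) =
            uu G a b c d r (j + 1 + (p - (3 * j + 1)) / 3)
              (f (j + 1 + (p - (3 * j + 1)) / 3) + 1) := by
          rw [psiCD_eval_uu2 (by omega) (by omega),
            show (p + 1 - (3 * j + 1)) / 3 = (p - (3 * j + 1)) / 3 from by omega,
            show (p + 1 - (3 * j + 1)) % 3 - 1 = 1 from by omega]
        rw [e1, e2]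
        refine Zadj ?_ ?_ ?_
        · rw [Ne, uu_eq_uu_iff (by omega) (by omega) (by omega) (by omega)]; omega
        · rw [uu_eval (by omega) (by omega), uu_eval (by omega) (by omega)]
          exact Or.inl ⟨rfl, rfl⟩
        · intro hmem
          refine Finset.disjoint_left.mp hdis ?_ hmem
          exact Finset.mem_insert_of_mem (Finset.mem_insert_self _ _)
      · -- exiting the detour at level s0 > j
        have h2 : (p - (3 * j + 1)) % 3 = 2 := by omega
        obtain ⟨hev, hlt, hdis⟩ := hf (j + 1 + (p - (3 * j + 1)) / 3) (by omega) (by omega)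
        have e1 : psiCD G a b c d r j f p =
            uu G a b c d r (j + 1 + (p - (3 * j + 1)) / 3)
              (f (j + 1 + (p - (3 * j + 1)) / 3) + 1) := by
          rw [psiCD_eval_uu2 (by omega) h0, show (p - (3 * j + 1)) % 3 - 1 = 1 from by omega]
        have e2 : psiCD G a b c d r j f (p + 1) =
            bdry G a b c d r (j + 1 + (p - (3 * j + 1)) / 3 + 1) := by
          rw [psiCD_eval_bdry2 (by omega) (by omega),
            show j + 1 + (p + 1 - (3 * j + 1)) / 3 = j + 1 + (p - (3 * j + 1)) / 3 + 1
              from by omega]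
        rw [e1, e2]
        refine Zadj ?_ ?_ ?_
        · exact uu_ne_bdry (by omega) (by omega)
        · rcases eq_or_lt_of_le (show j + 1 + (p - (3 * j + 1)) / 3 + 1 ≤ 2 * r from by omega)
            with hs2 | hs2
          · rw [uu_eval (by omega) (by omega), bdry_last (by omega) hr]
            exact Or.inr (Or.inr (Or.inr (Or.inr ⟨rfl,
              show (f (j + 1 + (p - (3 * j + 1)) / 3) + 1) % 2 = 1 by omega,
              show j + 1 + (p - (3 * j + 1)) / 3 + 1 = 2 * r by omega⟩)))
          · rw [uu_eval (by omega) (by omega), bdry_mid (by omega) (by omega)]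
            exact Or.inr (Or.inr ⟨show (f (j + 1 + (p - (3 * j + 1)) / 3) + 1) % 2 = 1 by omega,
              show j + 1 + (p - (3 * j + 1)) / 3 + 1 - 1 = j + 1 + (p - (3 * j + 1)) / 3
                by omega⟩)
        · intro hmem
          refine Finset.disjoint_left.mp hdis ?_ hmem
          refine Finset.mem_insert_of_mem (Finset.mem_insert_of_mem ?_)
          exact Finset.mem_singleton_self _

end Main6

end ZProof
namespace ZProof

section Main7

set_option linter.unusedSectionVars false

open SimpleGraph

variable {V : Type} [DecidableEq V] {G : SimpleGraph V} {a b c d : V} {r : ℕ}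
variable {U : Finset (Sym2 (ZVert V G a b c d r))} {j : ℕ} {f : ℕ → ℕ}

/-- The `a`–`b` path of the subdivision, along the wall path `P^j`. -/
noncomputable def abWalk (hr : 1 ≤ r) (hj : j < 2 * r)
    (hkit : Disjoint (abKit G a b c d r j) U) :
    ((ZGraph V G a b c d r).deleteEdges ↑U).Walk (Sum.inl a) (Sum.inl b) :=
  (pathSeg _ (psiAB G a b c d r j) (4 * r + 1) (fun p hp => psiAB_adj hr hj hkit p hp)).copy
    (psiAB_zero j) (psiAB_last j (by omega))

lemma abWalk_mem_support (hr : 1 ≤ r) (hj : j < 2 * r)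
    (hkit : Disjoint (abKit G a b c d r j) U) {v : ZVert V G a b c d r} :
    v ∈ (abWalk hr hj hkit).support ↔ ∃ p ≤ 4 * r + 1, psiAB G a b c d r j p = v := by
  rw [abWalk, SimpleGraph.Walk.support_copy, pathSeg_mem_support]

lemma abWalk_isPath (hr : 1 ≤ r) (hj : j < 2 * r) (hab' : a ≠ b)
    (hkit : Disjoint (abKit G a b c d r j) U) : (abWalk hr hj hkit).IsPath := by
  rw [abWalk, SimpleGraph.Walk.isPath_copy]
  exact pathSeg_isPath _ _ _ _ (psiAB_inj hr hj hab')

/-- The `c`–`d` path of the subdivision, through the bottleneck of the wall. -/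
noncomputable def cdWalk (hr : 1 ≤ r) (hcd : c ≠ d) (hj : j < 2 * r)
    (hz : zedge G a b c d r j ∉ U)
    (hf : ∀ s, s < 2 * r → s ≠ j →
      f s % 2 = 0 ∧ f s + 1 < 4 * r ∧ Disjoint (dKit G a b c d r s (f s)) U) :
    ((ZGraph V G a b c d r).deleteEdges ↑U).Walk (Sum.inl c) (Sum.inl d) :=
  (pathSeg _ (psiCD G a b c d r j f) (6 * r - 2)
      (fun p hp => psiCD_adj hr hcd hj hz hf p hp)).copy
    psiCD_zero (psiCD_last hr hj)

lemma cdWalk_mem_support (hr : 1 ≤ r) (hcd : c ≠ d) (hj : j < 2 * r)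
    (hz : zedge G a b c d r j ∉ U)
    (hf : ∀ s, s < 2 * r → s ≠ j →
      f s % 2 = 0 ∧ f s + 1 < 4 * r ∧ Disjoint (dKit G a b c d r s (f s)) U)
    {v : ZVert V G a b c d r} :
    v ∈ (cdWalk hr hcd hj hz hf).support ↔ ∃ p ≤ 6 * r - 2, psiCD G a b c d r j f p = v := by
  rw [cdWalk, SimpleGraph.Walk.support_copy, pathSeg_mem_support]

lemma cdWalk_isPath (hr : 1 ≤ r) (hcd : c ≠ d) (hj : j < 2 * r)
    (hz : zedge G a b c d r j ∉ U)
    (hf : ∀ s, s < 2 * r → s ≠ j →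
      f s % 2 = 0 ∧ f s + 1 < 4 * r ∧ Disjoint (dKit G a b c d r s (f s)) U) :
    (cdWalk hr hcd hj hz hf).IsPath := by
  rw [cdWalk, SimpleGraph.Walk.isPath_copy]
  exact pathSeg_isPath _ _ _ _ (psiCD_inj hr hcd hj (fun s hs hsj => ⟨(hf s hs hsj).1, (hf s hs hsj).2.1⟩))

/-- The two-edge path through a chosen midpoint of a multiplied edge. -/
noncomputable def midWalk (e : EdgeT G a b c d) (k : Fin (2 * r)) (x y : V)
    (hxy : s(x, y) = e.val) (hne : x ≠ y)
    (hU1 : s(Sum.inl x, (Sum.inr (Sum.inl (e, k)) : ZVert V G a b c d r)) ∉ U)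
    (hU2 : s(Sum.inl y, (Sum.inr (Sum.inl (e, k)) : ZVert V G a b c d r)) ∉ U) :
    ((ZGraph V G a b c d r).deleteEdges ↑U).Walk (Sum.inl x) (Sum.inl y) :=
  SimpleGraph.Walk.cons
    (Zadj (by simp) (Or.inl (show ZRel V G a b c d r (Sum.inl x) (Sum.inr (Sum.inl (e, k))) from show x ∈ e.val from hxy ▸ Sym2.mem_mk_left x y)) hU1)
    (SimpleGraph.Walk.cons
      (Zadj (by simp) (Or.inr (show ZRel V G a b c d r (Sum.inl y) (Sum.inr (Sum.inl (e, k))) from show y ∈ e.val from hxy ▸ Sym2.mem_mk_right x y))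
        (by rw [Sym2.eq_swap]; exact hU2))
      SimpleGraph.Walk.nil)

lemma midWalk_support (e : EdgeT G a b c d) (k : Fin (2 * r)) (x y : V)
    (hxy : s(x, y) = e.val) (hne : x ≠ y) (hU1 : _) (hU2 : _) :
    (midWalk (U := U) e k x y hxy hne hU1 hU2).support =
      [Sum.inl x, Sum.inr (Sum.inl (e, k)), Sum.inl y] := rfl

lemma midWalk_isPath (e : EdgeT G a b c d) (k : Fin (2 * r)) (x y : V)
    (hxy : s(x, y) = e.val) (hne : x ≠ y) (hU1 : _) (hU2 : _) :
    (midWalk (U := U) e k x y hxy hne hU1 hU2).IsPath := by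
  rw [SimpleGraph.Walk.isPath_def, midWalk_support]
  simp [hne]

lemma midWalk_reverse (e : EdgeT G a b c d) (k : Fin (2 * r)) (x y : V)
    (hxy : s(x, y) = e.val) (hne : x ≠ y) (hU1 : _) (hU2 : _) :
    (midWalk (U := U) e k x y hxy hne hU1 hU2).reverse =
      midWalk (U := U) e k y x (Sym2.eq_swap.trans hxy) hne.symm hU2 hU1 := by
  simp only [midWalk, SimpleGraph.Walk.reverse_cons, SimpleGraph.Walk.reverse_nil,
    SimpleGraph.Walk.nil_append, SimpleGraph.Walk.cons_append, SimpleGraph.Walk.append_nil]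

end Main7

end ZProof
namespace ZProof

section Main8

set_option linter.unusedSectionVars false

open SimpleGraph

variable {V : Type} [DecidableEq V] {G : SimpleGraph V} {a b c d : V} {r : ℕ}
variable {U : Finset (Sym2 (ZVert V G a b c d r))} {j : ℕ} {f : ℕ → ℕ}

lemma sym2_snd {u v x y : V} (huv : u ≠ v) (h : s(x, y) = s(u, v)) (hx : x = u) : y = v := by
  rcases Sym2.eq_iff.mp h with ⟨_, h2⟩ | ⟨h1, h2⟩
  · exact h2
  · exact absurd (hx.symm.trans h1) huv

lemma sym2_swap {u v x y : V} (h : s(x, y) = s(u, v)) (hx : x ≠ u) : x = v ∧ y = u := by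
  rcases Sym2.eq_iff.mp h with ⟨h1, h2⟩ | ⟨h1, h2⟩
  · exact absurd h1 hx
  · exact ⟨h1, h2⟩

lemma midWalk_congr {e e' : EdgeT G a b c d} (hee : e = e') {k k' : Fin (2 * r)} (hkk : k = k')
    {x y : V} {hxy : s(x, y) = e.val} {hxy' : s(x, y) = e'.val} {hne hne' : x ≠ y}
    {hU1 : s(Sum.inl x, (Sum.inr (Sum.inl (e, k)) : ZVert V G a b c d r)) ∉ U}
    {hU1' : s(Sum.inl x, (Sum.inr (Sum.inl (e', k')) : ZVert V G a b c d r)) ∉ U}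
    {hU2 : s(Sum.inl y, (Sum.inr (Sum.inl (e, k)) : ZVert V G a b c d r)) ∉ U}
    {hU2' : s(Sum.inl y, (Sum.inr (Sum.inl (e', k')) : ZVert V G a b c d r)) ∉ U} :
    midWalk (U := U) e k x y hxy hne hU1 hU2 = midWalk (U := U) e' k' x y hxy' hne' hU1' hU2' := by
  subst hee
  subst hkk
  rfl

variable (U j f) in
/-- The collection of paths of the subdivision. -/
noncomputable def theWalk (hr : 1 ≤ r) (hab' : a ≠ b) (hcd' : c ≠ d)
    (hj : j < 2 * r) (hkit : Disjoint (abKit G a b c d r j) U)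
    (hz : zedge G a b c d r j ∉ U)
    (hf : ∀ s, s < 2 * r → s ≠ j →
      f s % 2 = 0 ∧ f s + 1 < 4 * r ∧ Disjoint (dKit G a b c d r s (f s)) U)
    (msel : EdgeT G a b c d → Fin (2 * r))
    (hmsel : ∀ (e : EdgeT G a b c d), ∀ v ∈ e.val,
      s(Sum.inl v, (Sum.inr (Sum.inl (e, msel e)) : ZVert V G a b c d r)) ∉ U)
    (x y : V) (h : G.Adj x y) :
    ((ZGraph V G a b c d r).deleteEdges ↑U).Walk (Sum.inl x) (Sum.inl y) :=
  if h1 : s(x, y) = s(a, b) then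
    if hxa : x = a then
      (abWalk hr hj hkit).copy (congrArg Sum.inl hxa.symm)
        (congrArg Sum.inl (sym2_snd hab' h1 hxa).symm)
    else
      (abWalk hr hj hkit).reverse.copy (congrArg Sum.inl (sym2_swap h1 hxa).1.symm)
        (congrArg Sum.inl (sym2_swap h1 hxa).2.symm)
  else if h2 : s(x, y) = s(c, d) then
    if hxc : x = c then
      (cdWalk hr hcd' hj hz hf).copy (congrArg Sum.inl hxc.symm)
        (congrArg Sum.inl (sym2_snd hcd' h2 hxc).symm)
    else
      (cdWalk hr hcd' hj hz hf).reverse.copy (congrArg Sum.inl (sym2_swap h2 hxc).1.symm)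
        (congrArg Sum.inl (sym2_swap h2 hxc).2.symm)
  else
    midWalk ⟨s(x, y), G.mem_edgeSet.mpr h, h1, h2⟩ (msel ⟨s(x, y), G.mem_edgeSet.mpr h, h1, h2⟩)
      x y rfl h.ne (hmsel _ x (Sym2.mem_mk_left x y)) (hmsel _ y (Sym2.mem_mk_right x y))

end Main8

end ZProof
namespace ZProof

section Main9

set_option linter.unusedSectionVars false

open SimpleGraph

variable {V : Type} [DecidableEq V] {G : SimpleGraph V} {a b c d : V} {r : ℕ}
variable {U : Finset (Sym2 (ZVert V G a b c d r))} {j : ℕ} {f : ℕ → ℕ}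

lemma theWalk_isPath (hr : 1 ≤ r) (hab' : a ≠ b) (hcd' : c ≠ d)
    (hj : j < 2 * r) (hkit : Disjoint (abKit G a b c d r j) U)
    (hz : zedge G a b c d r j ∉ U)
    (hf : ∀ s, s < 2 * r → s ≠ j →
      f s % 2 = 0 ∧ f s + 1 < 4 * r ∧ Disjoint (dKit G a b c d r s (f s)) U)
    (msel : EdgeT G a b c d → Fin (2 * r))
    (hmsel : ∀ (e : EdgeT G a b c d), ∀ v ∈ e.val,
      s(Sum.inl v, (Sum.inr (Sum.inl (e, msel e)) : ZVert V G a b c d r)) ∉ U)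
    (x y : V) (h : G.Adj x y) :
    (theWalk U j f hr hab' hcd' hj hkit hz hf msel hmsel x y h).IsPath := by
  rw [theWalk]
  split_ifs with h1 hxa h2 hxc
  · rw [SimpleGraph.Walk.isPath_copy]
    exact abWalk_isPath hr hj hab' hkit
  · rw [SimpleGraph.Walk.isPath_copy, SimpleGraph.Walk.isPath_reverse_iff]
    exact abWalk_isPath hr hj hab' hkit
  · rw [SimpleGraph.Walk.isPath_copy]
    exact cdWalk_isPath hr hcd' hj hz hf
  · rw [SimpleGraph.Walk.isPath_copy, SimpleGraph.Walk.isPath_reverse_iff]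
    exact cdWalk_isPath hr hcd' hj hz hf
  · exact midWalk_isPath _ _ _ _ _ h.ne _ _

lemma theWalk_symm (hr : 1 ≤ r) (hab' : a ≠ b) (hcd' : c ≠ d)
    (hj : j < 2 * r) (hkit : Disjoint (abKit G a b c d r j) U)
    (hz : zedge G a b c d r j ∉ U)
    (hf : ∀ s, s < 2 * r → s ≠ j →
      f s % 2 = 0 ∧ f s + 1 < 4 * r ∧ Disjoint (dKit G a b c d r s (f s)) U)
    (msel : EdgeT G a b c d → Fin (2 * r))
    (hmsel : ∀ (e : EdgeT G a b c d), ∀ v ∈ e.val,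
      s(Sum.inl v, (Sum.inr (Sum.inl (e, msel e)) : ZVert V G a b c d r)) ∉ U)
    (x y : V) (h : G.Adj x y) :
    theWalk U j f hr hab' hcd' hj hkit hz hf msel hmsel y x h.symm =
      (theWalk U j f hr hab' hcd' hj hkit hz hf msel hmsel x y h).reverse := by
  by_cases h1 : s(x, y) = s(a, b)
  · have h1' : s(y, x) = s(a, b) := Sym2.eq_swap.trans h1
    by_cases hxa : x = a
    · have hyb : y = b := sym2_snd hab' h1 hxa
      have hyna : ¬y = a := fun w => hab' (w.symm.trans hyb)
      simp only [theWalk]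
      rw [dif_pos h1', dif_neg hyna, dif_pos h1, dif_pos hxa,
        SimpleGraph.Walk.reverse_copy]
    · have hya : y = a := (sym2_swap h1 hxa).2
      simp only [theWalk]
      rw [dif_pos h1', dif_pos hya, dif_pos h1, dif_neg hxa,
        SimpleGraph.Walk.reverse_copy, SimpleGraph.Walk.reverse_reverse]
  · have h1' : ¬s(y, x) = s(a, b) := fun w => h1 (Sym2.eq_swap.trans w)
    by_cases h2 : s(x, y) = s(c, d)
    · have h2' : s(y, x) = s(c, d) := Sym2.eq_swap.trans h2
      by_cases hxc : x = c
      · have hyd : y = d := sym2_snd hcd' h2 hxc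
        have hync : ¬y = c := fun w => hcd' (w.symm.trans hyd)
        simp only [theWalk]
        rw [dif_neg h1', dif_pos h2', dif_neg hync, dif_neg h1, dif_pos h2, dif_pos hxc,
          SimpleGraph.Walk.reverse_copy]
      · have hyc : y = c := (sym2_swap h2 hxc).2
        simp only [theWalk]
        rw [dif_neg h1', dif_pos h2', dif_pos hyc, dif_neg h1, dif_pos h2, dif_neg hxc,
          SimpleGraph.Walk.reverse_copy, SimpleGraph.Walk.reverse_reverse]
    · have h2' : ¬s(y, x) = s(c, d) := fun w => h2 (Sym2.eq_swap.trans w)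
      simp only [theWalk]
      rw [dif_neg h1', dif_neg h2', dif_neg h1, dif_neg h2, midWalk_reverse]
      exact midWalk_congr (Subtype.ext Sym2.eq_swap) (congrArg msel (Subtype.ext Sym2.eq_swap))

lemma theWalk_support_tagged (hr : 1 ≤ r) (hab' : a ≠ b) (hcd' : c ≠ d)
    (hj : j < 2 * r) (hkit : Disjoint (abKit G a b c d r j) U)
    (hz : zedge G a b c d r j ∉ U)
    (hf : ∀ s, s < 2 * r → s ≠ j →
      f s % 2 = 0 ∧ f s + 1 < 4 * r ∧ Disjoint (dKit G a b c d r s (f s)) U)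
    (msel : EdgeT G a b c d → Fin (2 * r))
    (hmsel : ∀ (e : EdgeT G a b c d), ∀ v ∈ e.val,
      s(Sum.inl v, (Sum.inr (Sum.inl (e, msel e)) : ZVert V G a b c d r)) ∉ U)
    (x y : V) (h : G.Adj x y) :
    ∀ v ∈ (theWalk U j f hr hab' hcd' hj hkit hz hf msel hmsel x y h).support,
      v = Sum.inl x ∨ v = Sum.inl y ∨ tagOf G a b c d r j v = some s(x, y) := by
  intro v hv
  rw [theWalk] at hv
  split_ifs at hv with h1 hxa h2 hxc
  · have hyb : y = b := sym2_snd hab' h1 hxa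
    rw [SimpleGraph.Walk.support_copy, abWalk_mem_support hr hj hkit] at hv
    obtain ⟨p, hp, rfl⟩ := hv
    rcases psiAB_tagged (G := G) (a := a) (b := b) (c := c) (d := d) hr hj p hp with hc | hc | hc
    · exact Or.inl (by rw [hxa]; exact hc)
    · exact Or.inr (Or.inl (by rw [hyb]; exact hc))
    · exact Or.inr (Or.inr (by rw [h1]; exact hc))
  · have hxb : x = b := (sym2_swap h1 hxa).1
    have hya : y = a := (sym2_swap h1 hxa).2
    rw [SimpleGraph.Walk.support_copy, SimpleGraph.Walk.support_reverse,
      List.mem_reverse, abWalk_mem_support hr hj hkit] at hv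
    obtain ⟨p, hp, rfl⟩ := hv
    rcases psiAB_tagged (G := G) (a := a) (b := b) (c := c) (d := d) hr hj p hp with hc | hc | hc
    · exact Or.inr (Or.inl (by rw [hya]; exact hc))
    · exact Or.inl (by rw [hxb]; exact hc)
    · exact Or.inr (Or.inr (by rw [h1]; exact hc))
  · have hyd : y = d := sym2_snd hcd' h2 hxc
    rw [SimpleGraph.Walk.support_copy, cdWalk_mem_support hr hcd' hj hz hf] at hv
    obtain ⟨p, hp, rfl⟩ := hv
    rcases psiCD_tagged (G := G) (a := a) (b := b) (c := c) (d := d) (f := f) hr hj (fun s hs hsj => ⟨(hf s hs hsj).1, (hf s hs hsj).2.1⟩) p hp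
      with hc | hc | hc
    · exact Or.inl (by rw [hxc]; exact hc)
    · exact Or.inr (Or.inl (by rw [hyd]; exact hc))
    · exact Or.inr (Or.inr (by rw [h2]; exact hc))
  · have hxd : x = d := (sym2_swap h2 hxc).1
    have hyc : y = c := (sym2_swap h2 hxc).2
    rw [SimpleGraph.Walk.support_copy, SimpleGraph.Walk.support_reverse,
      List.mem_reverse, cdWalk_mem_support hr hcd' hj hz hf] at hv
    obtain ⟨p, hp, rfl⟩ := hv
    rcases psiCD_tagged (G := G) (a := a) (b := b) (c := c) (d := d) (f := f) hr hj (fun s hs hsj => ⟨(hf s hs hsj).1, (hf s hs hsj).2.1⟩) p hp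
      with hc | hc | hc
    · exact Or.inr (Or.inl (by rw [hyc]; exact hc))
    · exact Or.inl (by rw [hxd]; exact hc)
    · exact Or.inr (Or.inr (by rw [h2]; exact hc))
  · rw [midWalk_support] at hv
    simp only [List.mem_cons, List.not_mem_nil, or_false] at hv
    rcases hv with rfl | rfl | rfl
    · exact Or.inl rfl
    · exact Or.inr (Or.inr rfl)
    · exact Or.inr (Or.inl rfl)

end Main9

end ZProof
/-- Lemma 2 of the paper (no small edge hitting set): for every edge set `U` of
`Z` with `|U| ≤ r`, the graph `Z − U` contains a subdivision of `G`. -/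
theorem Z_minus_small_edge_set_contains_subdivision
    (V : Type) [Fintype V] [DecidableEq V] (G : SimpleGraph V)
    (a b c d : V) (hab : G.Adj a b) (hcd : G.Adj c d)
    (hdist : [a, b, c, d].Pairwise (· ≠ ·))
    (r : ℕ) (hr : 1 ≤ r)
    (U : Finset (Sym2 (ZVert V G a b c d r))) (hU : U.card ≤ r) :
    Nonempty (SubdivisionIn G ((ZGraph V G a b c d r).deleteEdges ↑U)) := by
  classical
  have hab' : a ≠ b := hab.ne
  have hcd' : c ≠ d := hcd.ne
  obtain ⟨j, hj, hkit⟩ := ZProof.exists_good_j' hr hcd' U hU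
  have hz : ZProof.zedge G a b c d r j ∉ U := fun hmem =>
    Finset.disjoint_left.mp hkit (Finset.mem_insert_self _ _) hmem
  have hF : ∀ s : ℕ, ∃ i : ℕ, s < 2 * r →
      (i % 2 = 0 ∧ i + 1 < 4 * r ∧ Disjoint (ZProof.dKit G a b c d r s i) U) := by
    intro s
    by_cases hs : s < 2 * r
    · obtain ⟨i, h1, h2, h3⟩ := ZProof.exists_good_detour hr U hU s hs
      exact ⟨i, fun _ => ⟨h1, h2, h3⟩⟩
    · exact ⟨0, fun h => absurd h hs⟩
  choose f hf using hF
  have hf' : ∀ s, s < 2 * r → s ≠ j →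
      f s % 2 = 0 ∧ f s + 1 < 4 * r ∧ Disjoint (ZProof.dKit G a b c d r s (f s)) U :=
    fun s hs _ => hf s hs
  choose msel hmsel using fun e : ZProof.EdgeT G a b c d => ZProof.exists_good_mid hr U hU e
  refine ⟨⟨⟨Sum.inl, fun u v huv => Sum.inl.inj huv⟩,
    fun x y h => ZProof.theWalk U j f hr hab' hcd' hj hkit hz hf' msel hmsel x y h,
    fun x y h => ZProof.theWalk_isPath hr hab' hcd' hj hkit hz hf' msel hmsel x y h,
    fun x y h => ZProof.theWalk_symm hr hab' hcd' hj hkit hz hf' msel hmsel x y h,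
    ?_, ?_⟩⟩
  · -- internal disjointness from branch vertices
    intro x y h v hv hw
    rcases ZProof.theWalk_support_tagged hr hab' hcd' hj hkit hz hf' msel hmsel x y h v hv
      with hc | hc | hc
    · exact Or.inl hc
    · exact Or.inr hc
    · obtain ⟨w, rfl⟩ := hw
      exact absurd hc (by simp [ZProof.tagOf])
  · -- pairwise internal disjointness of the paths
    intro x y x' y' h h' hne v hv hv'
    have hA := ZProof.theWalk_support_tagged hr hab' hcd' hj hkit hz hf' msel hmsel x y h v hv
    have hB := ZProof.theWalk_support_tagged hr hab' hcd' hj hkit hz hf' msel hmsel x' y' h' v hv'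
    rcases hA with hc1 | hc1 | hc1 <;> rcases hB with hc2 | hc2 | hc2
    · exact ⟨Or.inl hc1, Or.inl hc2⟩
    · exact ⟨Or.inl hc1, Or.inr hc2⟩
    · rw [hc1] at hc2; simp [ZProof.tagOf] at hc2
    · exact ⟨Or.inr hc1, Or.inl hc2⟩
    · exact ⟨Or.inr hc1, Or.inr hc2⟩
    · rw [hc1] at hc2; simp [ZProof.tagOf] at hc2
    · rw [hc2] at hc1; simp [ZProof.tagOf] at hc1
    · rw [hc2] at hc1; simp [ZProof.tagOf] at hc1
    · exact absurd (Option.some.inj (hc1.symm.trans hc2)) hne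
end
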